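/- arXiv:2005.05444 — 6 statements merged into one kernel-verified Lean document; each statement's English description precedes it below -/
import Mathlib

section
/- Let k ≥ 3 be an integer. Then sup_{x∈(1/k,1]} ψ((1−x)/(k−1))/ψ(x) = (log k − log(k−1))/log k, and the supremum is attained at x = 1. Equivalently, the input-restricted KL contraction coefficient of the k-coloring channel Col_k = PC_{−1/(k−1)} at the uniform input distribution equals (log k − log(k−1))/log k (note that for λ = −1/(k−1) one has λx + (1−λ)/k = (1−x)/(k−1)). -/
open scoped BigOperators
open Real Set

/-- `ψ(x) = log k + x log x + (1-x) log((1-x)/(k-1))`. -/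
noncomputable def psi (k : ℕ) (x : ℝ) : ℝ :=
  Real.log (k : ℝ) + x * Real.log x + (1 - x) * Real.log ((1 - x) / ((k : ℝ) - 1))

namespace ColoringEta

/-- `φ` is `ψ` written with total logs: `φ(x) = log K + x log x + (1-x) log(1-x) - (1-x) log(K-1)`. -/
noncomputable def phi (K x : ℝ) : ℝ :=
  Real.log K + x * Real.log x + (1 - x) * Real.log (1 - x) - (1 - x) * Real.log (K - 1)

noncomputable def F (K x : ℝ) : ℝ :=
  (Real.log K - Real.log (K - 1)) * phi K x - Real.log K * phi K ((1 - x) / (K - 1))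

noncomputable def G (K x : ℝ) : ℝ :=
  (Real.log K - Real.log (K - 1)) * (Real.log x - Real.log (1 - x) + Real.log (K - 1))
    + (Real.log K / (K - 1)) *
      (Real.log ((1 - x) / (K - 1)) - Real.log (1 - (1 - x) / (K - 1)) + Real.log (K - 1))

lemma psi_eq_phi (k : ℕ) (hk : (2:ℝ) ≤ (k:ℝ)) (x : ℝ) : psi k x = phi (k:ℝ) x := by
  unfold psi phi
  rcases eq_or_ne x 1 with h | h
  · subst h; simp
  · have h1 : (1:ℝ) - x ≠ 0 := sub_ne_zero.mpr (Ne.symm h)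
    have h2 : (k:ℝ) - 1 ≠ 0 := by nlinarith
    rw [Real.log_div h1 h2]; ring

lemma phi_continuous (K : ℝ) : Continuous (phi K) := by
  have h : Continuous fun x : ℝ => (1 - x) * Real.log (1 - x) := by
    have h0 : Continuous fun x : ℝ => (1 : ℝ) - x := continuous_const.sub continuous_id
    exact Real.continuous_mul_log.comp h0
  exact ((continuous_const.add Real.continuous_mul_log).add h).sub
    ((continuous_const.sub continuous_id).mul continuous_const)

lemma F_continuous (K : ℝ) : Continuous (F K) := by
  have h : Continuous fun x : ℝ => phi K ((1 - x) / (K - 1)) :=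
    (phi_continuous K).comp ((continuous_const.sub continuous_id).div_const _)
  exact (continuous_const.mul (phi_continuous K)).sub (continuous_const.mul h)

lemma phi_one (K : ℝ) : phi K 1 = Real.log K := by simp [phi]

lemma phi_zero (K : ℝ) : phi K 0 = Real.log K - Real.log (K - 1) := by simp [phi]

lemma phi_invK {K : ℝ} (hK : 3 ≤ K) : phi K (1 / K) = 0 := by
  have hK0 : (0:ℝ) < K := by linarith
  have hK1 : (0:ℝ) < K - 1 := by linarith
  have e1 : (1:ℝ) - 1 / K = (K - 1) / K := by field_simp
  rw [phi, e1, Real.log_div hK1.ne' hK0.ne', one_div, Real.log_inv]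
  field_simp
  ring

lemma inner_invK {K : ℝ} (hK : 3 ≤ K) : (1 - 1 / K) / (K - 1) = 1 / K := by
  have hK0 : (0:ℝ) ≠ K := by linarith
  have hK1 : (0:ℝ) ≠ K - 1 := by linarith
  field_simp

lemma hasDerivAt_phi {K : ℝ} (hK : 3 ≤ K) {x : ℝ} (hx0 : 0 < x) (hx1 : x < 1) :
    HasDerivAt (phi K) (Real.log x - Real.log (1 - x) + Real.log (K - 1)) x := by
  have h1 : (1:ℝ) - x ≠ 0 := by apply ne_of_gt; linarith
  have hA : HasDerivAt (fun t : ℝ => t * Real.log t) (Real.log x + 1) x :=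
    Real.hasDerivAt_mul_log hx0.ne'
  have hinner : HasDerivAt (fun t : ℝ => 1 - t) (-1 : ℝ) x := by
    simpa using (hasDerivAt_id x).const_sub 1
  have hB : HasDerivAt (fun t : ℝ => (1 - t) * Real.log (1 - t))
      ((Real.log (1 - x) + 1) * (-1)) x := by
    have := (Real.hasDerivAt_mul_log h1).comp x hinner
    simpa [Function.comp_def] using this
  have hC : HasDerivAt (fun t : ℝ => (1 - t) * Real.log (K - 1)) ((-1) * Real.log (K - 1)) x :=
    hinner.mul_const _
  have := ((hA.const_add (Real.log K)).add hB).sub hC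
  refine this.congr_deriv ?_
  ring

lemma hasDerivAt_F {K : ℝ} (hK : 3 ≤ K) {x : ℝ} (hx0 : 0 < x) (hx1 : x < 1) :
    HasDerivAt (F K) (G K x) x := by
  have hK1 : (0:ℝ) < K - 1 := by linarith
  have hy0 : 0 < (1 - x) / (K - 1) := div_pos (by linarith) hK1
  have hy1 : (1 - x) / (K - 1) < 1 := by
    rw [div_lt_one hK1]; linarith
  have hinner : HasDerivAt (fun t : ℝ => (1 - t) / (K - 1)) (-1 / (K - 1)) x := by
    have : HasDerivAt (fun t : ℝ => 1 - t) (-1 : ℝ) x := by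
      simpa using (hasDerivAt_id x).const_sub 1
    simpa using this.div_const (K - 1)
  have hcomp : HasDerivAt (fun t : ℝ => phi K ((1 - t) / (K - 1)))
      ((Real.log ((1 - x) / (K - 1)) - Real.log (1 - (1 - x) / (K - 1)) + Real.log (K - 1))
        * (-1 / (K - 1))) x := by
    have := (hasDerivAt_phi hK hy0 hy1).comp x hinner
    simpa [Function.comp_def] using this
  have := ((hasDerivAt_phi hK hx0 hx1).const_mul (Real.log K - Real.log (K - 1))).sub
    (hcomp.const_mul (Real.log K))
  refine this.congr_deriv ?_
  unfold G
  ring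

lemma hasDerivAt_G {K : ℝ} (hK : 3 ≤ K) {x : ℝ} (hx0 : 0 < x) (hx1 : x < 1) :
    HasDerivAt (G K)
      (((Real.log K - Real.log (K - 1)) * (K - 2) - Real.log (K - 1) * x)
        / (x * (1 - x) * (K - 2 + x))) x := by
  have hK1 : (0:ℝ) < K - 1 := by linarith
  have hK2 : (0:ℝ) < K - 2 + x := by linarith
  have h1x : (0:ℝ) < 1 - x := by linarith
  have hy0 : 0 < (1 - x) / (K - 1) := div_pos h1x hK1
  have hy1' : (0:ℝ) < 1 - (1 - x) / (K - 1) := by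
    rw [sub_pos, div_lt_one hK1]; linarith
  have hinner : HasDerivAt (fun t : ℝ => (1 - t) / (K - 1)) (-1 / (K - 1)) x := by
    have : HasDerivAt (fun t : ℝ => 1 - t) (-1 : ℝ) x := by
      simpa using (hasDerivAt_id x).const_sub 1
    simpa using this.div_const (K - 1)
  have h1 : HasDerivAt (fun t : ℝ => Real.log t) x⁻¹ x := Real.hasDerivAt_log hx0.ne'
  have h2 : HasDerivAt (fun t : ℝ => Real.log (1 - t)) ((1 - x)⁻¹ * (-1)) x := by
    have hi : HasDerivAt (fun t : ℝ => 1 - t) (-1 : ℝ) x := by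
      simpa using (hasDerivAt_id x).const_sub 1
    have := (Real.hasDerivAt_log h1x.ne').comp x hi
    simpa [Function.comp_def] using this
  have h3 : HasDerivAt (fun t : ℝ => Real.log ((1 - t) / (K - 1)))
      (((1 - x) / (K - 1))⁻¹ * (-1 / (K - 1))) x := by
    have := (Real.hasDerivAt_log hy0.ne').comp x hinner
    simpa [Function.comp_def] using this
  have hinner2 : HasDerivAt (fun t : ℝ => 1 - (1 - t) / (K - 1)) (-(-1 / (K - 1))) x :=
    hinner.const_sub 1
  have h4 : HasDerivAt (fun t : ℝ => Real.log (1 - (1 - t) / (K - 1)))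
      ((1 - (1 - x) / (K - 1))⁻¹ * (-(-1 / (K - 1)))) x := by
    have := (Real.hasDerivAt_log hy1'.ne').comp x hinner2
    simpa [Function.comp_def] using this
  have hG : HasDerivAt (G K)
      ((Real.log K - Real.log (K - 1)) * (x⁻¹ - (1 - x)⁻¹ * (-1) + 0)
        + (Real.log K / (K - 1)) *
          (((1 - x) / (K - 1))⁻¹ * (-1 / (K - 1))
            - (1 - (1 - x) / (K - 1))⁻¹ * (-(-1 / (K - 1))) + 0)) x := by
    have p1 : HasDerivAt (fun t : ℝ => Real.log t - Real.log (1 - t) + Real.log (K - 1))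
        (x⁻¹ - (1 - x)⁻¹ * (-1) + 0) x := by
      simpa using (h1.sub h2).add_const (Real.log (K - 1))
    have p2 : HasDerivAt (fun t : ℝ =>
        Real.log ((1 - t) / (K - 1)) - Real.log (1 - (1 - t) / (K - 1)) + Real.log (K - 1))
        (((1 - x) / (K - 1))⁻¹ * (-1 / (K - 1))
          - (1 - (1 - x) / (K - 1))⁻¹ * (-(-1 / (K - 1))) + 0) x := by
      simpa using (h3.sub h4).add_const (Real.log (K - 1))
    exact (p1.const_mul _).add (p2.const_mul _)
  convert hG using 1
  have e1 : ((1 - x) / (K - 1))⁻¹ = (K - 1) / (1 - x) := by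
    rw [inv_div]
  have e2 : (1 - (1 - x) / (K - 1)) = (K - 2 + x) / (K - 1) := by
    field_simp; ring
  rw [e1, e2, inv_div]
  field_simp
  ring

lemma phi_pos {K : ℝ} (hK : 3 ≤ K) {x : ℝ} (hx1 : 1 / K < x) (hx2 : x ≤ 1) :
    0 < phi K x := by
  have hK0 : (0:ℝ) < K := by linarith
  have hinvK : (0:ℝ) < 1 / K := by positivity
  have hinvK1 : 1 / K < 1 := by rw [div_lt_one hK0]; linarith
  have hmono : StrictMonoOn (phi K) (Icc (1 / K) 1) := by
    apply strictMonoOn_of_deriv_pos (convex_Icc _ _) (phi_continuous K).continuousOn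
    intro t ht
    rw [interior_Icc] at ht
    obtain ⟨ht1, ht2⟩ := ht
    have ht0 : 0 < t := lt_trans hinvK ht1
    have h1t : 0 < 1 - t := by linarith
    rw [(hasDerivAt_phi hK ht0 ht2).deriv]
    have hK1 : (0:ℝ) < K - 1 := by linarith
    have key : Real.log t - Real.log (1 - t) + Real.log (K - 1)
        = Real.log (t * (K - 1) / (1 - t)) := by
      rw [Real.log_div (by positivity) h1t.ne', Real.log_mul ht0.ne' hK1.ne']
      ring
    rw [key]
    apply Real.log_pos
    rw [lt_div_iff₀ h1t]
    have : 1 < K * t := by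
      have := (div_lt_iff₀ hK0).mp ht1
      linarith [this]
    nlinarith
  have := hmono ⟨le_refl _, hinvK1.le⟩ ⟨hx1.le.trans (le_refl _), hx2⟩ hx1
  rwa [phi_invK hK] at this

lemma F_invK {K : ℝ} (hK : 3 ≤ K) : F K (1 / K) = 0 := by
  rw [F, inner_invK hK, phi_invK hK]; ring

lemma F_one {K : ℝ} (hK : 3 ≤ K) : F K 1 = 0 := by
  have : ((1:ℝ) - 1) / (K - 1) = 0 := by simp
  rw [F, this, phi_one, phi_zero]; ring

lemma G_invK {K : ℝ} (hK : 3 ≤ K) : G K (1 / K) = 0 := by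
  have hK0 : (0:ℝ) < K := by linarith
  have hK1 : (0:ℝ) < K - 1 := by linarith
  have e1 : (1:ℝ) - 1 / K = (K - 1) / K := by field_simp
  have e2 : (1 - 1 / K) / (K - 1) = 1 / K := inner_invK hK
  have key : Real.log (1 / K) - Real.log ((K - 1) / K) + Real.log (K - 1) = 0 := by
    rw [one_div, Real.log_inv, Real.log_div hK1.ne' hK0.ne']; ring
  rw [G, e2, e1, key]
  ring

lemma F_nonneg {K : ℝ} (hK : 3 ≤ K) {x : ℝ} (hx1 : 1 / K ≤ x) (hx2 : x ≤ 1) :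
    0 ≤ F K x := by
  have hK0 : (0:ℝ) < K := by linarith
  have hK1 : (0:ℝ) < K - 1 := by linarith
  have hinvK : (0:ℝ) < 1 / K := by positivity
  have hinvK1 : 1 / K < 1 := by rw [div_lt_one hK0]; linarith
  have hL : 0 < Real.log K := Real.log_pos (by linarith)
  have hM : 0 < Real.log (K - 1) := Real.log_pos (by linarith)
  have hLM : Real.log (K - 1) < Real.log K := Real.log_lt_log (by linarith) (by linarith)
  set L := Real.log K with hLdef
  set M := Real.log (K - 1) with hMdef
  set x₀ : ℝ := (L - M) * (K - 2) / M with hx₀def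
  set c : ℝ := max (1 / K) (min x₀ 1) with hcdef
  have hc1 : 1 / K ≤ c := le_max_left _ _
  have hc2 : c ≤ 1 := max_le hinvK1.le (min_le_right _ _)
  -- derivative facts
  have derivF : ∀ t : ℝ, 0 < t → t < 1 → deriv (F K) t = G K t := fun t h0 h1 =>
    (hasDerivAt_F hK h0 h1).deriv
  have derivG : ∀ t : ℝ, 0 < t → t < 1 → deriv (G K) t
      = ((L - M) * (K - 2) - M * t) / (t * (1 - t) * (K - 2 + t)) := fun t h0 h1 =>
    (hasDerivAt_G hK h0 h1).deriv
  have contG : ∀ s : Set ℝ, s ⊆ Ioo (0:ℝ) 1 → ContinuousOn (G K) s := by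
    intro s hs
    intro t ht
    exact ((hasDerivAt_G hK (hs ht).1 (hs ht).2).continuousAt).continuousWithinAt
  have diffG : ∀ s : Set ℝ, s ⊆ Ioo (0:ℝ) 1 → DifferentiableOn ℝ (G K) s := by
    intro s hs t ht
    exact ((hasDerivAt_G hK (hs ht).1 (hs ht).2).differentiableAt).differentiableWithinAt
  have diffF : ∀ s : Set ℝ, s ⊆ Ioo (0:ℝ) 1 → DifferentiableOn ℝ (F K) s := by
    intro s hs t ht
    exact ((hasDerivAt_F hK (hs ht).1 (hs ht).2).differentiableAt).differentiableWithinAt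
  -- numerator sign facts
  have numsign_pos : ∀ t : ℝ, 1 / K < t → t < c → 0 ≤ (L - M) * (K - 2) - M * t := by
    intro t ht1 ht2
    have htx₀ : t < x₀ := by
      by_contra h
      push_neg at h
      have : c ≤ t := max_le (le_of_lt ht1) (le_trans (min_le_left _ _) h)
      linarith
    have := (lt_div_iff₀ hM).mp htx₀
    nlinarith [this]
  have numsign_neg : ∀ t : ℝ, c < t → t < 1 → (L - M) * (K - 2) - M * t ≤ 0 := by
    intro t ht1 ht2
    have hx₀le : x₀ ≤ c := by
      rcases le_or_gt x₀ 1 with h | h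
      · calc x₀ = min x₀ 1 := (min_eq_left h).symm
          _ ≤ c := le_max_right _ _
      · exfalso
        have : c = 1 := by
          rw [hcdef, min_eq_right h.le]
          exact max_eq_right hinvK1.le
        rw [this] at ht1; linarith
    have hx₀t : x₀ ≤ t := le_of_lt (lt_of_le_of_lt hx₀le ht1)
    have := (div_le_iff₀ hM).mp hx₀t
    nlinarith [this]
  -- G is monotone on [1/K, min c x] and antitone on [c, b] for b < 1
  have ganti : ∀ b : ℝ, b < 1 → AntitoneOn (G K) (Icc c b) := by
    intro b hb1
    apply antitoneOn_of_deriv_nonpos (convex_Icc _ _)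
    · apply contG
      intro t ht
      exact ⟨lt_of_lt_of_le hinvK (le_trans hc1 ht.1), lt_of_le_of_lt ht.2 hb1⟩
    · apply diffG
      rw [interior_Icc]
      intro t ht
      exact ⟨lt_of_lt_of_le hinvK (le_trans hc1 ht.1.le), lt_trans ht.2 hb1⟩
    · intro t ht
      rw [interior_Icc] at ht
      have ht0 : 0 < t := lt_of_lt_of_le hinvK (le_trans hc1 ht.1.le)
      have ht1 : t < 1 := lt_trans ht.2 hb1
      rw [derivG t ht0 ht1]
      apply div_nonpos_of_nonpos_of_nonneg
      · exact numsign_neg t ht.1 ht1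
      · have : (0:ℝ) < 1 - t := by linarith
        have : (0:ℝ) < K - 2 + t := by linarith
        positivity
  -- main case analysis
  rcases eq_or_lt_of_le hx2 with rfl | hx2'
  · rw [F_one hK]
  have gmono : MonotoneOn (G K) (Icc (1 / K) (min c x)) := by
    apply monotoneOn_of_deriv_nonneg (convex_Icc _ _)
    · apply contG
      intro t ht
      exact ⟨lt_of_lt_of_le hinvK ht.1,
        lt_of_le_of_lt (le_trans ht.2 (min_le_right _ _)) hx2'⟩
    · apply diffG
      rw [interior_Icc]
      intro t ht
      exact ⟨lt_of_lt_of_le hinvK ht.1.le,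
        lt_of_lt_of_le ht.2 (le_trans (min_le_right _ _) hx2'.le)⟩
    · intro t ht
      rw [interior_Icc] at ht
      have ht0 : 0 < t := lt_of_lt_of_le hinvK ht.1.le
      have htc : t < c := lt_of_lt_of_le ht.2 (min_le_left _ _)
      have ht1 : t < 1 := lt_of_le_of_lt (le_of_lt (lt_of_lt_of_le ht.2 (min_le_right _ _))) hx2'
      rw [derivG t ht0 ht1]
      apply div_nonneg
      · exact numsign_pos t ht.1 htc
      · have h1 : (0:ℝ) < 1 - t := by linarith
        have h2 : (0:ℝ) < K - 2 + t := by linarith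
        positivity
  rcases le_or_gt x c with hxc | hxc
  · -- x ≤ c : F monotone on [1/K, x]
    have hmin : min c x = x := min_eq_right hxc
    have hmF : MonotoneOn (F K) (Icc (1 / K) x) := by
      apply monotoneOn_of_deriv_nonneg (convex_Icc _ _) (F_continuous K).continuousOn
      · apply diffF
        rw [interior_Icc]
        intro t ht
        exact ⟨lt_of_lt_of_le hinvK ht.1.le, lt_trans ht.2 hx2'⟩
      · intro t ht
        rw [interior_Icc] at ht
        have ht0 : 0 < t := lt_of_lt_of_le hinvK ht.1.le
        have ht1 : t < 1 := lt_trans ht.2 hx2'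
        rw [derivF t ht0 ht1]
        have hmem1 : 1 / K ∈ Icc (1 / K) (min c x) := ⟨le_refl _, le_min hc1 hx1⟩
        have hmem2 : t ∈ Icc (1 / K) (min c x) :=
          ⟨ht.1.le, le_min (le_of_lt (lt_of_lt_of_le ht.2 hxc)) ht.2.le⟩
        have := gmono hmem1 hmem2 ht.1.le
        rw [G_invK hK] at this
        exact this
    have := hmF ⟨le_refl _, hx1⟩ ⟨hx1, le_refl _⟩ hx1
    rwa [F_invK hK] at this
  · rcases le_or_gt 0 (G K x) with hGx | hGx
    · have hmF : MonotoneOn (F K) (Icc (1 / K) x) := by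
        apply monotoneOn_of_deriv_nonneg (convex_Icc _ _) (F_continuous K).continuousOn
        · apply diffF
          rw [interior_Icc]
          intro t ht
          exact ⟨lt_of_lt_of_le hinvK ht.1.le, lt_trans ht.2 hx2'⟩
        · intro t ht
          rw [interior_Icc] at ht
          have ht0 : 0 < t := lt_of_lt_of_le hinvK ht.1.le
          have ht1 : t < 1 := lt_trans ht.2 hx2'
          rw [derivF t ht0 ht1]
          rcases le_or_gt t c with htc | htc
          · have hmem1 : 1 / K ∈ Icc (1 / K) (min c x) := ⟨le_refl _, le_min hc1 hx1⟩
            have hmem2 : t ∈ Icc (1 / K) (min c x) := ⟨ht.1.le, le_min htc ht.2.le⟩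
            have := gmono hmem1 hmem2 ht.1.le
            rw [G_invK hK] at this
            exact this
          · have := ganti x hx2' ⟨htc.le, ht.2.le⟩ ⟨hxc.le, le_refl _⟩ ht.2.le
            linarith
      have := hmF ⟨le_refl _, hx1⟩ ⟨hx1, le_refl _⟩ hx1
      rwa [F_invK hK] at this
    · have haF : AntitoneOn (F K) (Icc x 1) := by
        apply antitoneOn_of_deriv_nonpos (convex_Icc _ _) (F_continuous K).continuousOn
        · apply diffF
          rw [interior_Icc]
          intro t ht
          exact ⟨lt_of_lt_of_le hinvK (hx1.trans ht.1.le), ht.2⟩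
        · intro t ht
          rw [interior_Icc] at ht
          have ht0 : 0 < t := lt_of_lt_of_le hinvK (hx1.trans ht.1.le)
          rw [derivF t ht0 ht.2]
          have := ganti t ht.2 ⟨hxc.le, ht.1.le⟩ ⟨(hxc.trans ht.1).le, le_refl _⟩ ht.1.le
          linarith
      have := haF ⟨le_refl _, hx2'.le⟩ ⟨hx2'.le, le_refl _⟩ hx2'.le
      rw [F_one hK] at this
      exact this

end ColoringEta

/-- The input-restricted KL contraction coefficient of the `k`-coloring channel
`Col_k = PC_{−1/(k−1)}` at the uniform input equals `(log k − log(k−1))/log k`: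
the function `x ↦ ψ((1−x)/(k−1))/ψ(x)` on `(1/k,1]` has greatest value
`(log k − log(k−1))/log k`, attained at `x = 1`. -/
theorem coloring_eta_KL (k : ℕ) (hk : 3 ≤ k) :
    IsGreatest {r : ℝ | ∃ x ∈ Set.Ioc (1 / (k : ℝ)) 1,
        r = psi k ((1 - x) / ((k : ℝ) - 1)) / psi k x}
      ((Real.log (k : ℝ) - Real.log ((k : ℝ) - 1)) / Real.log (k : ℝ)) ∧
    psi k ((1 - 1) / ((k : ℝ) - 1)) / psi k 1
      = (Real.log (k : ℝ) - Real.log ((k : ℝ) - 1)) / Real.log (k : ℝ) := by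
  have hK : (3:ℝ) ≤ (k:ℝ) := by exact_mod_cast hk
  have hK2 : (2:ℝ) ≤ (k:ℝ) := by linarith
  have hK0 : (0:ℝ) < (k:ℝ) := by linarith
  have hL : 0 < Real.log (k:ℝ) := Real.log_pos (by linarith)
  have hinvK1 : 1 / (k:ℝ) < 1 := by rw [div_lt_one hK0]; linarith
  have hval : psi k ((1 - 1) / ((k : ℝ) - 1)) / psi k 1
      = (Real.log (k : ℝ) - Real.log ((k : ℝ) - 1)) / Real.log (k : ℝ) := by
    have e0 : ((1:ℝ) - 1) / ((k:ℝ) - 1) = 0 := by simp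
    rw [e0, ColoringEta.psi_eq_phi k hK2, ColoringEta.psi_eq_phi k hK2,
      ColoringEta.phi_zero, ColoringEta.phi_one]
  refine ⟨⟨⟨1, ⟨hinvK1, le_refl _⟩, hval.symm⟩, ?_⟩, hval⟩
  rintro r ⟨x, ⟨hx1, hx2⟩, rfl⟩
  rw [ColoringEta.psi_eq_phi k hK2, ColoringEta.psi_eq_phi k hK2]
  have hpos : 0 < ColoringEta.phi (k:ℝ) x := ColoringEta.phi_pos hK hx1 hx2
  have hF : 0 ≤ ColoringEta.F (k:ℝ) x := ColoringEta.F_nonneg hK hx1.le hx2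
  rw [div_le_div_iff₀ hpos hL]
  unfold ColoringEta.F at hF
  nlinarith [hF]
end

section
/- Let k ≥ 2 be an integer and λ ∈ [−1/(k−1), 1]. Then the (input-unrestricted) KL contraction coefficient of the Potts channel satisfies η_KL(PC_λ) := sup{ D(PC_λ∘P || PC_λ∘Q) / D(P||Q) : P, Q probability distributions on [k] with 0 < D(P||Q) < ∞ } = k·λ² / ((k−2)·λ + 2). -/
open scoped BigOperators

/-- KL divergence between two distributions on `[k]` (finite, assuming absolute continuity). -/
noncomputable def klDiv' (k : ℕ) (P Q : Fin k → ℝ) : ℝ :=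
  ∑ i, P i * Real.log (P i / Q i)

/-- The Potts channel `PC_λ` acting on a distribution on `[k]`. -/
noncomputable def pottsChannel (k : ℕ) (lam : ℝ) (P : Fin k → ℝ) : Fin k → ℝ :=
  fun y => lam * P y + (1 - lam) / (k : ℝ)

open Real

namespace PottsEta


/-- `phi c lam r = r (lam r + c)/(1 - 2r)`. -/
noncomputable def phi (c lam r : ℝ) : ℝ := r * (lam * r + c) / (1 - 2 * r)

lemma phi_star {c lam : ℝ} (hτ : 0 < lam + 2 * c) {α z : ℝ}
    (hα0 : 0 ≤ α) (hα1 : α ≤ 1) (hz0 : 0 ≤ z) (hz : 2 * z < 1) :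
    phi c lam (α * z) ≤ α * phi c lam z := by
  have hd1 : 0 < 1 - 2 * (α * z) := by nlinarith
  have hd2 : 0 < 1 - 2 * z := by linarith
  rw [phi, phi, mul_div_assoc', div_le_div_iff₀ hd1 hd2]
  nlinarith [mul_nonneg (mul_nonneg hα0 hz0) (mul_nonneg (sub_nonneg.2 hα1) hτ.le),
    mul_nonneg hα0 hz0, sq_nonneg (α*z), mul_nonneg (mul_nonneg hα0 hz0) hz0]

lemma phi_nonneg {c lam : ℝ} (hc : 0 < c) (hτ : 0 < lam + 2 * c) {z : ℝ}
    (hz0 : 0 ≤ z) (hz : 2 * z < 1) : 0 ≤ phi c lam z := by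
  have hnum : 0 ≤ lam * z + c := by nlinarith
  exact div_nonneg (mul_nonneg hz0 hnum) (by linarith)

lemma phi_mono {c lam : ℝ} (hc : 0 < c) (hτ : 0 < lam + 2 * c) {x z : ℝ}
    (hx0 : 0 ≤ x) (hxz : x ≤ z) (hz : 2 * z < 1) : phi c lam x ≤ phi c lam z := by
  rcases eq_or_lt_of_le (hx0.trans hxz) with h | hzpos
  · have hx : x = 0 := le_antisymm (h ▸ hxz) hx0
    rw [hx, ← h]
  · have hα0 : 0 ≤ x / z := div_nonneg hx0 hzpos.le
    have hα1 : x / z ≤ 1 := (div_le_one hzpos).2 hxz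
    have := phi_star hτ hα0 hα1 hzpos.le hz
    rw [div_mul_cancel₀ _ hzpos.ne'] at this
    calc phi c lam x ≤ x / z * phi c lam z := this
      _ ≤ 1 * phi c lam z := by
          have := phi_nonneg hc hτ hzpos.le hz
          nlinarith
      _ = phi c lam z := one_mul _

lemma phi_superadd {c lam : ℝ} (hc : 0 < c) (hτ : 0 < lam + 2 * c) {x y : ℝ}
    (hx0 : 0 ≤ x) (hy0 : 0 ≤ y) (hxy : 2 * (x + y) < 1) :
    phi c lam x + phi c lam y ≤ phi c lam (x + y) := by
  rcases eq_or_lt_of_le (add_nonneg hx0 hy0) with h | hpos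
  · have hx : x = 0 := by linarith
    have hy : y = 0 := by linarith
    subst hx; subst hy; simp [phi]
  · have h1 := phi_star hτ (div_nonneg hx0 hpos.le) ((div_le_one hpos).2 (by linarith)) hpos.le hxy
    have h2 := phi_star hτ (div_nonneg hy0 hpos.le) ((div_le_one hpos).2 (by linarith)) hpos.le hxy
    rw [div_mul_cancel₀ _ hpos.ne'] at h1 h2
    have : x / (x+y) * phi c lam (x+y) + y / (x+y) * phi c lam (x+y) = phi c lam (x+y) := by
      field_simp
    linarith


lemma phi_sum_le {c lam : ℝ} (hc : 0 < c) (hτ : 0 < lam + 2 * c) {ι : Type*}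
    (s : Finset ι) (f : ι → ℝ) (hf : ∀ i ∈ s, 0 ≤ f i) (hs : 2 * ∑ i ∈ s, f i < 1) :
    ∑ i ∈ s, phi c lam (f i) ≤ phi c lam (∑ i ∈ s, f i) := by
  induction s using Finset.cons_induction with
  | empty => simp [phi]
  | cons a s ha ih =>
    rw [Finset.sum_cons] at hs ⊢
    rw [Finset.sum_cons]
    have hfa : 0 ≤ f a := hf a (Finset.mem_cons_self a s)
    have hfs : ∀ i ∈ s, 0 ≤ f i := fun i hi => hf i (Finset.mem_cons_of_mem hi)
    have hsum : 0 ≤ ∑ i ∈ s, f i := Finset.sum_nonneg hfs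
    have h1 : ∑ i ∈ s, phi c lam (f i) ≤ phi c lam (∑ i ∈ s, f i) :=
      ih hfs (by linarith)
    have h2 := phi_superadd hc hτ hfa hsum hs
    linarith


lemma upos {c lam r : ℝ} (hc : 0 < c) (ha : 0 ≤ lam + c) (hr0 : 0 < r) (hr1 : r < 1) :
    0 < lam * r + c := by
  rcases le_or_gt 0 lam with h | h
  · nlinarith
  · nlinarith

lemma upos' {c lam r : ℝ} (hc : 0 < c) (hτ : 0 < lam + 2 * c) (hr0 : 0 ≤ r) (hr2 : 2 * r < 1) :
    0 < lam * r + c := by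
  rcases le_or_gt 0 lam with h | h
  · nlinarith
  · nlinarith

lemma key_quadratic {ι : Type*} [Fintype ι] [DecidableEq ι] {c lam η : ℝ}
    (hc : 0 < c) (hτ : 0 < lam + 2 * c) (ha : 0 ≤ lam + c)
    (hη : η = lam ^ 2 / (lam + 2 * c))
    (r Δ : ι → ℝ) (hr0 : ∀ y, 0 ≤ r y) (hr1 : ∑ y, r y = 1)
    (hΔs : ∑ y, Δ y = 0) (hsupp : ∀ y, Δ y ≠ 0 → 0 < r y ∧ r y < 1) :
    ∑ y, lam ^ 2 * Δ y ^ 2 / (lam * r y + c) ≤ η * ∑ y, Δ y ^ 2 / r y := by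
  rcases eq_or_ne lam 0 with h0 | hlam
  · subst h0
    norm_num [hη]
  have hl2 : 0 < lam ^ 2 := by rcases hlam.lt_or_gt with h|h <;> nlinarith
  -- notation
  set u : ι → ℝ := fun y => lam * r y + c with hu_def
  set w : ι → ℝ := fun y => η / r y - lam ^ 2 / u y with hw_def
  have hterm : ∀ y : ι, η * Δ y ^ 2 / r y - lam ^ 2 * Δ y ^ 2 / u y = Δ y ^ 2 * w y := by
    intro y; simp only [hw_def]; ring
  rw [← sub_nonneg, Finset.mul_sum, ← Finset.sum_sub_distrib]
  have hrw : ∀ y : ι, η * (Δ y ^ 2 / r y) - lam ^ 2 * Δ y ^ 2 / (lam * r y + c)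
      = Δ y ^ 2 * w y := by
    intro y; rw [← hterm y]; ring
  rw [Finset.sum_congr rfl (fun y _ => hrw y)]
  -- restrict to support
  set T : Finset ι := Finset.univ.filter (fun y => Δ y ≠ 0) with hT_def
  have hTsum : ∀ f : ι → ℝ, (∀ y, Δ y = 0 → f y = 0) → ∑ y, f y = ∑ y ∈ T, f y := by
    intro f hf
    rw [hT_def, Finset.sum_filter]
    refine Finset.sum_congr rfl (fun y _ => ?_)
    by_cases h : Δ y = 0
    · simp [h, hf y h]
    · simp [h]
  rw [hTsum (fun y => Δ y ^ 2 * w y) (fun y h => by simp [h])]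
  have hmemT : ∀ y, y ∈ T ↔ Δ y ≠ 0 := by
    intro y; rw [hT_def, Finset.mem_filter]; simp
  have hrT : ∀ y ∈ T, 0 < r y ∧ r y < 1 := fun y hy => hsupp y ((hmemT y).1 hy)
  have huT : ∀ y ∈ T, 0 < u y := by
    intro y hy; exact upos hc ha (hrT y hy).1 (hrT y hy).2
  have hwid : ∀ y ∈ T, w y = lam ^ 2 * c * (1 - 2 * r y) / ((lam + 2 * c) * (r y * u y)) := by
    intro y hy
    have h1 := (hrT y hy).1
    have h2 := huT y hy
    have h1' := ne_of_gt h1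
    have h2' : lam * r y + c ≠ 0 := by simpa [hu_def] using ne_of_gt h2
    have hτ' := ne_of_gt hτ
    simp only [hw_def, hη, hu_def]
    field_simp
    ring
  by_cases hcase : ∀ y ∈ T, r y ≤ 1 / 2
  · refine Finset.sum_nonneg (fun y hy => ?_)
    have hw0 : 0 ≤ w y := by
      rw [hwid y hy]
      have j1 := (hrT y hy).1
      have j2 := huT y hy
      have j3 := hcase y hy
      apply div_nonneg
      · exact mul_nonneg (mul_nonneg (sq_nonneg lam) hc.le) (by linarith)
      · positivity
    positivity
  · push_neg at hcase
    obtain ⟨y₀, hy₀T, hy₀⟩ := hcase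
    set S' : Finset ι := T.erase y₀ with hS'_def
    have hr₀ := hrT y₀ hy₀T
    have hu₀ := huT y₀ hy₀T
    have hsum' : ∑ y ∈ S', r y ≤ 1 - r y₀ := by
      have h1 : S' ⊆ Finset.univ.erase y₀ := by
        intro y hy
        rw [Finset.mem_erase] at hy ⊢
        exact ⟨hy.1, Finset.mem_univ y⟩
      have h2 : ∑ y ∈ S', r y ≤ ∑ y ∈ Finset.univ.erase y₀, r y :=
        Finset.sum_le_sum_of_subset_of_nonneg h1 (fun y _ _ => hr0 y)
      have h3 : r y₀ + ∑ y ∈ Finset.univ.erase y₀, r y = 1 := by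
        rw [Finset.add_sum_erase _ _ (Finset.mem_univ y₀)]; exact hr1
      linarith
    have hhalf : 1 - r y₀ < 1 / 2 := by linarith [hy₀]
    have hrS : ∀ y ∈ S', 0 < r y ∧ r y ≤ 1 - r y₀ := by
      intro y hy
      refine ⟨(hrT y (Finset.mem_of_mem_erase hy)).1, ?_⟩
      calc r y ≤ ∑ z ∈ S', r z :=
            Finset.single_le_sum (fun z hz => hr0 z) hy
        _ ≤ 1 - r y₀ := hsum'
    have hwS : ∀ y ∈ S', 0 < w y := by
      intro y hy
      have hyT := Finset.mem_of_mem_erase hy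
      rw [hwid y hyT]
      have h1 := (hrS y hy).1
      have h2 := (hrS y hy).2
      have h3 := huT y hyT
      apply div_pos
      · exact mul_pos (mul_pos hl2 hc) (by linarith [hhalf])
      · exact mul_pos hτ (mul_pos h1 h3)
    -- Cauchy-Schwarz
    have hΔ₀ : Δ y₀ = -∑ y ∈ S', Δ y := by
      have h1 : ∑ y, Δ y = ∑ y ∈ T, Δ y := hTsum Δ (fun y h => h)
      have h2 : Δ y₀ + ∑ y ∈ S', Δ y = ∑ y ∈ T, Δ y :=
        Finset.add_sum_erase _ _ hy₀T
      rw [h1] at hΔs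
      linarith
    have hCS : Δ y₀ ^ 2 ≤ (∑ y ∈ S', 1 / w y) * (∑ y ∈ S', Δ y ^ 2 * w y) := by
      have h0 := Finset.sum_mul_sq_le_sq_mul_sq S' (fun y => Real.sqrt (1 / w y))
        (fun y => Real.sqrt (w y) * Δ y)
      have e1 : ∀ y ∈ S', Real.sqrt (1 / w y) * (Real.sqrt (w y) * Δ y) = Δ y := by
        intro y hy
        rw [← mul_assoc, ← Real.sqrt_mul (one_div_pos.2 (hwS y hy)).le, one_div,
          inv_mul_cancel₀ (ne_of_gt (hwS y hy)), Real.sqrt_one, one_mul]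
      have e2 : ∀ y ∈ S', Real.sqrt (1 / w y) ^ 2 = 1 / w y := by
        intro y hy; exact Real.sq_sqrt (one_div_pos.2 (hwS y hy)).le
      have e3 : ∀ y ∈ S', (Real.sqrt (w y) * Δ y) ^ 2 = Δ y ^ 2 * w y := by
        intro y hy
        rw [mul_pow, Real.sq_sqrt (le_of_lt (hwS y hy))]; ring
      rw [Finset.sum_congr rfl e1, Finset.sum_congr rfl e2, Finset.sum_congr rfl e3] at h0
      calc Δ y₀ ^ 2 = (∑ y ∈ S', Δ y) ^ 2 := by rw [hΔ₀]; ring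
        _ ≤ _ := h0
    have hinv : ∀ y ∈ S', 1 / w y = (lam + 2 * c) / (lam ^ 2 * c) * phi c lam (r y) := by
      intro y hy
      have hyT := Finset.mem_of_mem_erase hy
      have h1 := (hrS y hy).1
      have h2 := (hrS y hy).2
      have h3 := huT y hyT
      have h4 : (0:ℝ) < 1 - 2 * r y := by linarith [hhalf]
      have hu' : u y = lam * r y + c := rfl
      rw [hwid y hyT, phi, hu', one_div_div]
      have n1 : lam + 2 * c ≠ 0 := ne_of_gt hτ
      have n2 : (1 : ℝ) - 2 * r y ≠ 0 := ne_of_gt h4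
      have n3 : lam * r y + c ≠ 0 := by rw [← hu']; exact ne_of_gt h3
      field_simp
    have hphisum : ∑ y ∈ S', phi c lam (r y) ≤ phi c lam (1 - r y₀) := by
      calc ∑ y ∈ S', phi c lam (r y) ≤ phi c lam (∑ y ∈ S', r y) :=
            phi_sum_le hc hτ S' r (fun y hy => (hrS y hy).1.le)
              (by linarith [hsum', hhalf])
        _ ≤ phi c lam (1 - r y₀) :=
            phi_mono hc hτ (Finset.sum_nonneg (fun y hy => (hrS y hy).1.le)) hsum'
              (by linarith)
    have hΦ : phi c lam (1 - r y₀) * (2 * r y₀ - 1) ≤ r y₀ * u y₀ := by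
      have h4 : (0:ℝ) < 2 * r y₀ - 1 := by linarith
      have h5 : phi c lam (1 - r y₀) * (2 * r y₀ - 1) = (1 - r y₀) * (lam * (1 - r y₀) + c) := by
        rw [phi]
        have : 1 - 2 * (1 - r y₀) = 2 * r y₀ - 1 := by ring
        rw [this, div_mul_cancel₀ _ (ne_of_gt h4)]
      have hu' : u y₀ = lam * r y₀ + c := rfl
      rw [h5, hu']
      nlinarith [mul_nonneg (show (0:ℝ) ≤ 2 * r y₀ - 1 by linarith) ha]
    have hkey : (-w y₀) * (∑ y ∈ S', 1 / w y) ≤ 1 := by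
      rw [Finset.sum_congr rfl hinv, ← Finset.mul_sum, hwid y₀ hy₀T]
      have hphinn : 0 ≤ ∑ y ∈ S', phi c lam (r y) :=
        Finset.sum_nonneg (fun y hy => phi_nonneg hc hτ (hrS y hy).1.le
          (by linarith [(hrS y hy).2]))
      have e : -(lam ^ 2 * c * (1 - 2 * r y₀) / ((lam + 2 * c) * (r y₀ * u y₀)))
          * ((lam + 2 * c) / (lam ^ 2 * c) * ∑ y ∈ S', phi c lam (r y))
          = (2 * r y₀ - 1) / (r y₀ * u y₀) * ∑ y ∈ S', phi c lam (r y) := by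
        have n1 : lam + 2 * c ≠ 0 := ne_of_gt hτ
        have n2 : lam ^ 2 * c ≠ 0 := by positivity
        have n3 : r y₀ * u y₀ ≠ 0 := ne_of_gt (mul_pos hr₀.1 hu₀)
        have n1' : lam + c * 2 ≠ 0 := by intro h; apply n1; linarith
        field_simp
        ring
      rw [e]
      rw [div_mul_eq_mul_div, div_le_one (mul_pos hr₀.1 hu₀)]
      calc (2 * r y₀ - 1) * ∑ y ∈ S', phi c lam (r y)
          ≤ (2 * r y₀ - 1) * phi c lam (1 - r y₀) := by
            apply mul_le_mul_of_nonneg_left hphisum (by linarith)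
        _ ≤ r y₀ * u y₀ := by nlinarith [hΦ]
    -- combine
    have hS'nn : 0 ≤ ∑ y ∈ S', Δ y ^ 2 * w y :=
      Finset.sum_nonneg (fun y hy => mul_nonneg (sq_nonneg _) (hwS y hy).le)
    have hw₀neg : 0 ≤ -w y₀ := by
      have : w y₀ ≤ 0 := by
        rw [hwid y₀ hy₀T]
        apply div_nonpos_of_nonpos_of_nonneg
        · nlinarith [mul_nonneg (mul_nonneg (sq_nonneg lam) hc.le)
            (show (0:ℝ) ≤ 2 * r y₀ - 1 by linarith)]
        · exact (mul_pos hτ (mul_pos hr₀.1 hu₀)).le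
      linarith
    have hfin : Δ y₀ ^ 2 * (-w y₀) ≤ ∑ y ∈ S', Δ y ^ 2 * w y := by
      calc Δ y₀ ^ 2 * (-w y₀)
          ≤ ((∑ y ∈ S', 1 / w y) * (∑ y ∈ S', Δ y ^ 2 * w y)) * (-w y₀) :=
            mul_le_mul_of_nonneg_right hCS hw₀neg
        _ = ((-w y₀) * (∑ y ∈ S', 1 / w y)) * (∑ y ∈ S', Δ y ^ 2 * w y) := by ring
        _ ≤ 1 * (∑ y ∈ S', Δ y ^ 2 * w y) :=
            mul_le_mul_of_nonneg_right hkey hS'nn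
        _ = _ := one_mul _
    have hsplit : ∑ y ∈ T, Δ y ^ 2 * w y
        = Δ y₀ ^ 2 * w y₀ + ∑ y ∈ S', Δ y ^ 2 * w y :=
      (Finset.add_sum_erase _ _ hy₀T).symm
    rw [hsplit]
    linarith [hfin]


lemma nonneg_of_deriv2 {A A1 A2 : ℝ → ℝ}
    (hA : ContinuousOn A (Set.Icc 0 1))
    (hA1c : ContinuousOn A1 (Set.Ico 0 1))
    (hd1 : ∀ t ∈ Set.Ioo (0:ℝ) 1, HasDerivAt A (A1 t) t)
    (hd2 : ∀ t ∈ Set.Ioo (0:ℝ) 1, HasDerivAt A1 (A2 t) t)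
    (hA0 : A 0 = 0) (hA10 : A1 0 = 0)
    (h2 : ∀ t ∈ Set.Ioo (0:ℝ) 1, 0 ≤ A2 t) : 0 ≤ A 1 := by
  have hm1 : MonotoneOn A1 (Set.Ico 0 1) := by
    refine monotoneOn_of_deriv_nonneg (convex_Ico 0 1) hA1c (fun t ht => ?_) (fun t ht => ?_)
    · rw [interior_Ico] at ht
      exact ((hd2 t ht).differentiableAt).differentiableWithinAt
    · rw [interior_Ico] at ht
      rw [(hd2 t ht).deriv]; exact h2 t ht
  have hA1nn : ∀ t ∈ Set.Ioo (0:ℝ) 1, 0 ≤ A1 t := by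
    intro t ht
    have h := hm1 (Set.mem_Ico.2 ⟨le_refl 0, one_pos⟩) (Set.mem_Ico.2 ⟨ht.1.le, ht.2⟩) ht.1.le
    rwa [hA10] at h
  have hm : MonotoneOn A (Set.Icc 0 1) := by
    refine monotoneOn_of_deriv_nonneg (convex_Icc 0 1) hA (fun t ht => ?_) (fun t ht => ?_)
    · rw [interior_Icc] at ht
      exact ((hd1 t ht).differentiableAt).differentiableWithinAt
    · rw [interior_Icc] at ht
      rw [(hd1 t ht).deriv]; exact hA1nn t ht
  have h := hm (Set.left_mem_Icc.2 zero_le_one) (Set.right_mem_Icc.2 zero_le_one) zero_le_one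
  rwa [hA0] at h

lemma single_of_eq_one {k : ℕ} {Q : Fin k → ℝ} (hQ0 : ∀ i, 0 ≤ Q i)
    (hQ1 : ∑ i, Q i = 1) {j : Fin k} (hj : Q j = 1) : ∀ i, i ≠ j → Q i = 0 := by
  intro i hi
  have h := Finset.add_sum_erase Finset.univ Q (Finset.mem_univ j)
  have hsum0 : ∑ x ∈ Finset.univ.erase j, Q x = 0 := by
    rw [hQ1] at h; rw [hj] at h; linarith
  exact (Finset.sum_eq_zero_iff_of_nonneg (fun x _ => hQ0 x)).1 hsum0 i
    (Finset.mem_erase.2 ⟨hi, Finset.mem_univ i⟩)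

lemma eq_of_Q_eq_one {k : ℕ} {P Q : Fin k → ℝ} (hP1 : ∑ i, P i = 1)
    (hQ0 : ∀ i, 0 ≤ Q i) (hQ1 : ∑ i, Q i = 1)
    (hac : ∀ i, Q i = 0 → P i = 0) {j : Fin k} (hj : Q j = 1) : P = Q := by
  have hz : ∀ i, i ≠ j → P i = 0 := fun i hi => hac i (single_of_eq_one hQ0 hQ1 hj i hi)
  have hPj : P j = 1 := by
    have h := Finset.add_sum_erase Finset.univ P (Finset.mem_univ j)
    have : ∑ x ∈ Finset.univ.erase j, P x = 0 :=
      Finset.sum_eq_zero (fun x hx => hz x (Finset.mem_erase.1 hx).1)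
    rw [this, hP1] at h; linarith
  funext i
  by_cases hi : i = j
  · rw [hi, hPj, hj]
  · rw [hz i hi, single_of_eq_one hQ0 hQ1 hj i hi]


set_option maxHeartbeats 1600000 in
theorem sdpi {k : ℕ} (hk : 2 ≤ k) {lam : ℝ}
    (hlam1 : -(1 / ((k : ℝ) - 1)) ≤ lam) (hlam2 : lam < 1)
    {P Q : Fin k → ℝ} (hP0 : ∀ i, 0 ≤ P i) (hP1 : ∑ i, P i = 1)
    (hQ0 : ∀ i, 0 ≤ Q i) (hQ1 : ∑ i, Q i = 1)
    (hac : ∀ i, Q i = 0 → P i = 0) (hne : P ≠ Q) :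
    0 ≤ klDiv' k P Q ∧
    klDiv' k (pottsChannel k lam P) (pottsChannel k lam Q)
      ≤ (k : ℝ) * lam ^ 2 / (((k : ℝ) - 2) * lam + 2) * klDiv' k P Q := by
  have hkR : (2:ℝ) ≤ (k:ℝ) := by exact_mod_cast hk
  have hk0 : (0:ℝ) < k := by linarith
  have hk1 : (0:ℝ) < (k:ℝ) - 1 := by linarith
  have hklam : -1 ≤ ((k:ℝ) - 1) * lam := by
    have h := mul_le_mul_of_nonneg_left hlam1 hk1.le
    rw [mul_neg, mul_one_div, div_self hk1.ne'] at h
    linarith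
  set c : ℝ := (1 - lam) / k with hc_def
  have hc : 0 < c := div_pos (by linarith) hk0
  have hden : (0:ℝ) < ((k:ℝ) - 2) * lam + 2 := by nlinarith
  have hτeq : lam + 2 * c = (((k:ℝ) - 2) * lam + 2) / k := by
    rw [hc_def]; field_simp; ring
  have hτ : 0 < lam + 2 * c := by rw [hτeq]; exact div_pos hden hk0
  have ha : 0 ≤ lam + c := by
    rw [hc_def]
    have : lam + (1 - lam) / k = (((k:ℝ) - 1) * lam + 1) / k := by field_simp; ring
    rw [this]
    exact div_nonneg (by linarith) hk0.le
  have hηeq : (k:ℝ) * lam ^ 2 / (((k:ℝ) - 2) * lam + 2) = lam ^ 2 / (lam + 2 * c) := by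
    rw [hτeq, div_div_eq_mul_div]; ring
  have hQle1 : ∀ i, Q i ≤ 1 := by
    intro i
    have h := Finset.single_le_sum (f := Q) (fun j _ => hQ0 j) (Finset.mem_univ i)
    rwa [hQ1] at h
  have hPle1 : ∀ i, P i ≤ 1 := by
    intro i
    have h := Finset.single_le_sum (f := P) (fun j _ => hP0 j) (Finset.mem_univ i)
    rwa [hP1] at h
  have hQlt1 : ∀ i, Q i < 1 := by
    intro i
    rcases lt_or_eq_of_le (hQle1 i) with h | h
    · exact h
    · exact absurd (eq_of_Q_eq_one hP1 hQ0 hQ1 hac h) hne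
  have hn : ∀ i, 0 < lam * Q i + c := by
    intro i
    rcases le_or_gt 0 lam with h | h
    · nlinarith [hQ0 i, hc]
    · nlinarith [hQlt1 i, ha]
  have hunn : ∀ i, 0 ≤ lam * P i + c := by
    intro i
    rcases le_or_gt 0 lam with h | h
    · nlinarith [hP0 i, hc]
    · nlinarith [hPle1 i, ha]
  set Δ : Fin k → ℝ := fun i => P i - Q i with hΔ_def
  have hΔsum : ∑ i, Δ i = 0 := by
    rw [hΔ_def, Finset.sum_sub_distrib, hP1, hQ1, sub_self]
  have hQpos : ∀ i, Δ i ≠ 0 → 0 < Q i := by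
    intro i hi
    rcases lt_or_eq_of_le (hQ0 i) with h | h
    · exact h
    · exact absurd (by rw [hΔ_def]; simp [hac i h.symm, ← h]) hi
  have hρ : ∀ i, Δ i ≠ 0 → ∀ t : ℝ, 0 ≤ t → t < 1 →
      0 < Q i + t * Δ i ∧ Q i + t * Δ i < 1 := by
    intro i hΔi t ht0 ht1
    have h1 : Q i + t * Δ i = (1 - t) * Q i + t * P i := by rw [hΔ_def]; ring
    constructor
    · rw [h1]
      have h2 := hQpos i hΔi
      nlinarith [hP0 i, mul_nonneg ht0 (hP0 i)]
    · rw [h1]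
      nlinarith [mul_lt_mul_of_pos_left (hQlt1 i) (show (0:ℝ) < 1 - t by linarith),
        mul_le_mul_of_nonneg_left (hPle1 i) ht0]
  have hρnn : ∀ i, ∀ t : ℝ, 0 ≤ t → t ≤ 1 → 0 ≤ Q i + t * Δ i := by
    intro i t ht0 ht1
    have h1 : Q i + t * Δ i = (1 - t) * Q i + t * P i := by rw [hΔ_def]; ring
    rw [h1]
    have := hQ0 i; have := hP0 i
    nlinarith
  have hu : ∀ i, Δ i ≠ 0 → ∀ t : ℝ, 0 ≤ t → t < 1 → 0 < lam * (Q i + t * Δ i) + c := by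
    intro i hΔi t ht0 ht1
    obtain ⟨j1, j2⟩ := hρ i hΔi t ht0 ht1
    rcases le_or_gt 0 lam with h | h
    · linarith [mul_nonneg h j1.le, hc]
    · linarith [mul_pos (neg_pos.2 h) (sub_pos.2 j2), ha]
  -- the interpolation functions
  set G : ℝ → ℝ := fun t => ∑ i, ((Q i + t * Δ i) * Real.log (Q i + t * Δ i)
      - (Q i + t * Δ i) * Real.log (Q i)) with hG_def
  set G1 : ℝ → ℝ := fun t => ∑ i, Δ i * (Real.log (Q i + t * Δ i)
      - Real.log (Q i) + 1) with hG1_def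
  set G2 : ℝ → ℝ := fun t => ∑ i, Δ i ^ 2 / (Q i + t * Δ i) with hG2_def
  set F : ℝ → ℝ := fun t => ∑ i, ((lam * (Q i + t * Δ i) + c)
      * Real.log (lam * (Q i + t * Δ i) + c)
      - (lam * (Q i + t * Δ i) + c) * Real.log (lam * Q i + c)) with hF_def
  set F1 : ℝ → ℝ := fun t => ∑ i, lam * Δ i * (Real.log (lam * (Q i + t * Δ i) + c)
      - Real.log (lam * Q i + c) + 1) with hF1_def
  set F2 : ℝ → ℝ := fun t => ∑ i, lam ^ 2 * Δ i ^ 2 / (lam * (Q i + t * Δ i) + c)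
      with hF2_def
  -- line derivatives
  have hL : ∀ i, ∀ t : ℝ, HasDerivAt (fun s : ℝ => Q i + s * Δ i) (Δ i) t := by
    intro i t
    simpa using ((hasDerivAt_id t).mul_const (Δ i)).const_add (Q i)
  have hU : ∀ i, ∀ t : ℝ, HasDerivAt (fun s : ℝ => lam * (Q i + s * Δ i) + c)
      (lam * Δ i) t := by
    intro i t
    exact ((hL i t).const_mul lam).add_const c
  -- derivative of G
  have hdG : ∀ t ∈ Set.Ioo (0:ℝ) 1, HasDerivAt G (G1 t) t := by
    intro t ht
    apply HasDerivAt.fun_sum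
    intro i _
    by_cases hΔi : Δ i = 0
    · simp only [hΔi, mul_zero, add_zero, zero_mul]
      exact hasDerivAt_const _ _
    · obtain ⟨hρ0, _⟩ := hρ i hΔi t ht.1.le ht.2
      have h1 : HasDerivAt (fun s : ℝ => (Q i + s * Δ i) * Real.log (Q i + s * Δ i))
          ((Real.log (Q i + t * Δ i) + 1) * Δ i) t :=
        by have := (Real.hasDerivAt_mul_log hρ0.ne').comp t (hL i t); exact this
      have h2 : HasDerivAt (fun s : ℝ => (Q i + s * Δ i) * Real.log (Q i))
          (Δ i * Real.log (Q i)) t := (hL i t).mul_const _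
      convert! h1.sub h2 using 1
      ring
  have hdG1 : ∀ t ∈ Set.Ioo (0:ℝ) 1, HasDerivAt G1 (G2 t) t := by
    intro t ht
    apply HasDerivAt.fun_sum
    intro i _
    by_cases hΔi : Δ i = 0
    · simp only [hΔi, zero_mul, ne_eq, OfNat.ofNat_ne_zero, not_false_eq_true, zero_pow,
        zero_div]
      exact hasDerivAt_const _ _
    · obtain ⟨hρ0, _⟩ := hρ i hΔi t ht.1.le ht.2
      have h1 : HasDerivAt (fun s : ℝ => Real.log (Q i + s * Δ i))
          ((Q i + t * Δ i)⁻¹ * Δ i) t :=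
        by have := (Real.hasDerivAt_log hρ0.ne').comp t (hL i t); exact this
      have h2 := ((h1.sub_const (Real.log (Q i))).add_const 1).const_mul (Δ i)
      convert! h2 using 1
      field_simp
  have hdF : ∀ t ∈ Set.Ioo (0:ℝ) 1, HasDerivAt F (F1 t) t := by
    intro t ht
    apply HasDerivAt.fun_sum
    intro i _
    by_cases hΔi : Δ i = 0
    · simp only [hΔi, mul_zero, add_zero, zero_mul]
      exact hasDerivAt_const _ _
    · have hu0 := hu i hΔi t ht.1.le ht.2
      have h1 : HasDerivAt (fun s : ℝ => (lam * (Q i + s * Δ i) + c)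
          * Real.log (lam * (Q i + s * Δ i) + c))
          ((Real.log (lam * (Q i + t * Δ i) + c) + 1) * (lam * Δ i)) t :=
        by have := (Real.hasDerivAt_mul_log hu0.ne').comp t (hU i t); exact this
      have h2 : HasDerivAt (fun s : ℝ => (lam * (Q i + s * Δ i) + c)
          * Real.log (lam * Q i + c))
          (lam * Δ i * Real.log (lam * Q i + c)) t := (hU i t).mul_const _
      convert! h1.sub h2 using 1
      ring
  have hdF1 : ∀ t ∈ Set.Ioo (0:ℝ) 1, HasDerivAt F1 (F2 t) t := by
    intro t ht
    apply HasDerivAt.fun_sum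
    intro i _
    by_cases hΔi : Δ i = 0
    · simp only [hΔi, mul_zero, zero_mul, ne_eq, OfNat.ofNat_ne_zero, not_false_eq_true,
        zero_pow, mul_zero, zero_div]
      exact hasDerivAt_const _ _
    · have hu0 := hu i hΔi t ht.1.le ht.2
      have h1 : HasDerivAt (fun s : ℝ => Real.log (lam * (Q i + s * Δ i) + c))
          ((lam * (Q i + t * Δ i) + c)⁻¹ * (lam * Δ i)) t :=
        by have := (Real.hasDerivAt_log hu0.ne').comp t (hU i t); exact this
      have h2 := ((h1.sub_const (Real.log (lam * Q i + c))).add_const 1).const_mul (lam * Δ i)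
      convert! h2 using 1
      field_simp
  -- continuity
  have hGc : Continuous G := by
    apply continuous_finset_sum
    intro i _
    have hA : Continuous (fun t : ℝ => Q i + t * Δ i) :=
      continuous_const.add (continuous_id.mul continuous_const)
    exact (Real.continuous_mul_log.comp hA).sub (hA.mul continuous_const)
  have hFc : Continuous F := by
    apply continuous_finset_sum
    intro i _
    have hA : Continuous (fun t : ℝ => lam * (Q i + t * Δ i) + c) :=
      (continuous_const.mul (continuous_const.add (continuous_id.mul continuous_const))).add
        continuous_const
    exact (Real.continuous_mul_log.comp hA).sub (hA.mul continuous_const)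
  have hG1c : ContinuousOn G1 (Set.Ico 0 1) := by
    apply continuousOn_finset_sum
    intro i _
    by_cases hΔi : Δ i = 0
    · exact (continuousOn_const (c := (0:ℝ))).congr (fun t _ => by simp [hΔi])
    · apply continuousOn_const.mul
      apply ContinuousOn.add
      apply ContinuousOn.sub
      · exact ((continuous_const.add (continuous_id.mul continuous_const)).continuousOn).log
          (fun t ht => (hρ i hΔi t ht.1 ht.2).1.ne')
      · exact continuousOn_const
      · exact continuousOn_const
  have hF1c : ContinuousOn F1 (Set.Ico 0 1) := by
    apply continuousOn_finset_sum
    intro i _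
    by_cases hΔi : Δ i = 0
    · exact (continuousOn_const (c := (0:ℝ))).congr (fun t _ => by simp [hΔi])
    · apply continuousOn_const.mul
      apply ContinuousOn.add
      apply ContinuousOn.sub
      · exact (((continuous_const.mul (continuous_const.add
          (continuous_id.mul continuous_const))).add continuous_const).continuousOn).log
          (fun t ht => (hu i hΔi t ht.1 ht.2).ne')
      · exact continuousOn_const
      · exact continuousOn_const
  -- values at the endpoints
  have hG0 : G 0 = 0 := by
    rw [hG_def]
    apply Finset.sum_eq_zero
    intro i _
    norm_num
  have hF0 : F 0 = 0 := by
    rw [hF_def]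
    apply Finset.sum_eq_zero
    intro i _
    norm_num
  have hG10 : G1 0 = 0 := by
    simp only [hG1_def]
    have h : ∀ i ∈ Finset.univ, Δ i * (Real.log (Q i + 0 * Δ i) - Real.log (Q i) + 1)
        = Δ i := by intro i _; norm_num
    rw [Finset.sum_congr rfl h, hΔsum]
  have hF10 : F1 0 = 0 := by
    simp only [hF1_def]
    have h : ∀ i ∈ Finset.univ, lam * Δ i * (Real.log (lam * (Q i + 0 * Δ i) + c)
        - Real.log (lam * Q i + c) + 1) = lam * Δ i := by intro i _; norm_num
    rw [Finset.sum_congr rfl h, ← Finset.mul_sum, hΔsum, mul_zero]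
  have hGval : G 1 = klDiv' k P Q := by
    rw [hG_def, klDiv']
    apply Finset.sum_congr rfl
    intro i _
    have hPi : Q i + 1 * Δ i = P i := by rw [hΔ_def]; ring
    rw [hPi]
    by_cases hp : P i = 0
    · rw [hp]; simp
    · have hq : Q i ≠ 0 := fun h => hp (hac i h)
      rw [Real.log_div hp hq]; ring
  have hFval : F 1 = klDiv' k (pottsChannel k lam P) (pottsChannel k lam Q) := by
    rw [hF_def, klDiv']
    simp only [pottsChannel, ← hc_def]
    apply Finset.sum_congr rfl
    intro i _
    have hPi : Q i + 1 * Δ i = P i := by rw [hΔ_def]; ring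
    rw [hPi]
    by_cases hp : lam * P i + c = 0
    · rw [hp]; simp
    · rw [Real.log_div hp (hn i).ne']; ring
  -- sums along the path
  have hρsum : ∀ t : ℝ, ∑ i, (Q i + t * Δ i) = 1 := by
    intro t
    rw [Finset.sum_add_distrib, hQ1, ← Finset.mul_sum, hΔsum, mul_zero, add_zero]
  have hG2nn : ∀ t ∈ Set.Ioo (0:ℝ) 1, 0 ≤ G2 t := by
    intro t ht
    rw [hG2_def]
    apply Finset.sum_nonneg
    intro i _
    exact div_nonneg (sq_nonneg _) (hρnn i t ht.1.le ht.2.le)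
  -- first conclusion
  have hKL0 : 0 ≤ klDiv' k P Q := by
    rw [← hGval]
    exact nonneg_of_deriv2 hGc.continuousOn hG1c hdG hdG1 hG0 hG10 hG2nn
  refine ⟨hKL0, ?_⟩
  -- second conclusion via the key quadratic inequality
  have hH2 : ∀ t ∈ Set.Ioo (0:ℝ) 1, 0 ≤ lam ^ 2 / (lam + 2 * c) * G2 t - F2 t := by
    intro t ht
    rw [sub_nonneg, hG2_def, hF2_def]
    exact key_quadratic hc hτ ha rfl (fun i => Q i + t * Δ i) Δ
      (fun i => hρnn i t ht.1.le ht.2.le) (hρsum t) hΔsum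
      (fun i hi => hρ i hi t ht.1.le ht.2)
  have hmain : 0 ≤ lam ^ 2 / (lam + 2 * c) * G 1 - F 1 := by
    apply nonneg_of_deriv2 (A := fun t => lam ^ 2 / (lam + 2 * c) * G t - F t)
      (A1 := fun t => lam ^ 2 / (lam + 2 * c) * G1 t - F1 t)
      (A2 := fun t => lam ^ 2 / (lam + 2 * c) * G2 t - F2 t)
    · exact ((continuous_const.mul hGc).sub hFc).continuousOn
    · exact (continuousOn_const.mul hG1c).sub hF1c
    · intro t ht
      exact ((hdG t ht).const_mul _).sub (hdF t ht)
    · intro t ht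
      exact ((hdG1 t ht).const_mul _).sub (hdF1 t ht)
    · rw [hG0, hF0]; ring
    · rw [hG10, hF10]; ring
    · exact hH2
  rw [hηeq, ← hGval, ← hFval]
  linarith [hmain]


open Filter in
lemma lhop {lam m : ℝ} (hm : 0 < m) :
    Filter.Tendsto (fun t : ℝ =>
      (((m + lam * t) * Real.log (m + lam * t) - (m + lam * t) * Real.log m)
        + ((m - lam * t) * Real.log (m - lam * t) - (m - lam * t) * Real.log m))
      / (((1/2 + t) * Real.log (1/2 + t) - (1/2 + t) * Real.log (1/2))
        + ((1/2 - t) * Real.log (1/2 - t) - (1/2 - t) * Real.log (1/2))))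
      (nhdsWithin 0 (Set.Ioi 0)) (nhds (lam ^ 2 / (2 * m))) := by
  set δ : ℝ := min (1/4) (m / (2 * (|lam| + 1))) with hδ_def
  have hδpos : 0 < δ := lt_min (by norm_num) (div_pos hm (by positivity))
  have hmem : Set.Ioo (0:ℝ) δ ∈ nhdsWithin (0:ℝ) (Set.Ioi 0) :=
    Ioo_mem_nhdsGT_of_mem ⟨le_refl 0, hδpos⟩
  have hbound : ∀ t ∈ Set.Ioo (0:ℝ) δ, 0 < m + lam * t ∧ 0 < m - lam * t ∧
      (0:ℝ) < 1/2 + t ∧ (0:ℝ) < 1/2 - t := by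
    intro t ht
    obtain ⟨ht0, htδ⟩ := ht
    have h1 : t < m / (2*(|lam|+1)) := lt_of_lt_of_le htδ (min_le_right _ _)
    have h2 : t < 1/4 := lt_of_lt_of_le htδ (min_le_left _ _)
    have hstrict : (|lam|+1) * t < m / 2 := by
      calc (|lam|+1)*t < (|lam|+1) * (m/(2*(|lam|+1))) :=
            mul_lt_mul_of_pos_left h1 (by positivity)
        _ = m/2 := by field_simp
    have h5 : |lam * t| < m/2 := by
      rw [abs_mul, abs_of_nonneg ht0.le]
      nlinarith [abs_nonneg lam]
    have h6 := abs_lt.1 h5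
    exact ⟨by linarith [h6.1], by linarith [h6.2], by linarith, by linarith⟩
  -- affine derivative helpers
  have hp : ∀ t : ℝ, HasDerivAt (fun s : ℝ => m + lam * s) lam t := by
    intro t; simpa using ((hasDerivAt_id t).const_mul lam).const_add m
  have hq : ∀ t : ℝ, HasDerivAt (fun s : ℝ => m - lam * s) (-lam) t := by
    intro t; simpa using ((hasDerivAt_id t).const_mul lam).const_sub m
  have hp' : ∀ t : ℝ, HasDerivAt (fun s : ℝ => 1/2 + s) 1 t := by
    intro t; simpa using (hasDerivAt_id t).const_add (1/2:ℝ)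
  have hq' : ∀ t : ℝ, HasDerivAt (fun s : ℝ => 1/2 - s) (-1) t := by
    intro t; simpa using (hasDerivAt_id t).const_sub (1/2:ℝ)
  have hg1pos : ∀ t ∈ Set.Ioo (0:ℝ) δ,
      0 < Real.log (1/2 + t) - Real.log (1/2 - t) := by
    intro t ht
    obtain ⟨_, _, h3, h4⟩ := hbound t ht
    have := Real.log_lt_log h4 (by linarith [ht.1] : (1:ℝ)/2 - t < 1/2 + t)
    linarith
  apply HasDerivAt.lhopital_zero_nhdsGT
    (f' := fun t => lam * (Real.log (m + lam * t) - Real.log (m - lam * t)))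
    (g' := fun t => Real.log (1/2 + t) - Real.log (1/2 - t))
  · filter_upwards [hmem] with t ht
    obtain ⟨h1, h2, _, _⟩ := hbound t ht
    have d1 := (Real.hasDerivAt_mul_log h1.ne').comp t (hp t)
    have d2 := (hp t).mul_const (Real.log m)
    have d3 := (Real.hasDerivAt_mul_log h2.ne').comp t (hq t)
    have d4 := (hq t).mul_const (Real.log m)
    convert! (d1.sub d2).add (d3.sub d4) using 1
    ring
  · filter_upwards [hmem] with t ht
    obtain ⟨_, _, h3, h4⟩ := hbound t ht
    have d1 := (Real.hasDerivAt_mul_log h3.ne').comp t (hp' t)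
    have d2 := (hp' t).mul_const (Real.log (1/2))
    have d3 := (Real.hasDerivAt_mul_log h4.ne').comp t (hq' t)
    have d4 := (hq' t).mul_const (Real.log (1/2))
    convert! (d1.sub d2).add (d3.sub d4) using 1
    ring
  · filter_upwards [hmem] with t ht
    exact (hg1pos t ht).ne'
  · have hFc : Continuous (fun t : ℝ =>
        ((m + lam * t) * Real.log (m + lam * t) - (m + lam * t) * Real.log m)
        + ((m - lam * t) * Real.log (m - lam * t) - (m - lam * t) * Real.log m)) := by
      have a1 : Continuous (fun t : ℝ => m + lam * t) :=
        continuous_const.add (continuous_const.mul continuous_id)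
      have a2 : Continuous (fun t : ℝ => m - lam * t) :=
        continuous_const.sub (continuous_const.mul continuous_id)
      exact ((Real.continuous_mul_log.comp a1).sub (a1.mul continuous_const)).add
        ((Real.continuous_mul_log.comp a2).sub (a2.mul continuous_const))
    have h := hFc.tendsto 0
    have hval : ((m + lam * 0) * Real.log (m + lam * 0) - (m + lam * 0) * Real.log m)
        + ((m - lam * 0) * Real.log (m - lam * 0) - (m - lam * 0) * Real.log m) = 0 := by
      norm_num
    rw [hval] at h
    exact h.mono_left nhdsWithin_le_nhds
  · have hGc : Continuous (fun t : ℝ =>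
        ((1/2 + t) * Real.log (1/2 + t) - (1/2 + t) * Real.log (1/2))
        + ((1/2 - t) * Real.log (1/2 - t) - (1/2 - t) * Real.log (1/2))) := by
      have a1 : Continuous (fun t : ℝ => 1/2 + t) := continuous_const.add continuous_id
      have a2 : Continuous (fun t : ℝ => 1/2 - t) := continuous_const.sub continuous_id
      exact ((Real.continuous_mul_log.comp a1).sub (a1.mul continuous_const)).add
        ((Real.continuous_mul_log.comp a2).sub (a2.mul continuous_const))
    have h := hGc.tendsto 0
    have hval : ((1/2 + 0) * Real.log (1/2 + 0) - (1/2 + 0) * Real.log (1/2:ℝ))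
        + ((1/2 - 0) * Real.log (1/2 - 0) - (1/2 - 0) * Real.log (1/2:ℝ)) = 0 := by
      norm_num
    rw [hval] at h
    exact h.mono_left nhdsWithin_le_nhds
  -- second L'Hopital
  apply HasDerivAt.lhopital_zero_nhdsGT
    (f' := fun t => lam ^ 2 * ((m + lam * t)⁻¹ + (m - lam * t)⁻¹))
    (g' := fun t => (1/2 + t)⁻¹ + (1/2 - t)⁻¹)
  · filter_upwards [hmem] with t ht
    obtain ⟨h1, h2, _, _⟩ := hbound t ht
    have d1 := (Real.hasDerivAt_log h1.ne').comp t (hp t)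
    have d2 := (Real.hasDerivAt_log h2.ne').comp t (hq t)
    convert! (d1.sub d2).const_mul lam using 1
    ring
  · filter_upwards [hmem] with t ht
    obtain ⟨_, _, h3, h4⟩ := hbound t ht
    have d1 := (Real.hasDerivAt_log h3.ne').comp t (hp' t)
    have d2 := (Real.hasDerivAt_log h4.ne').comp t (hq' t)
    convert! d1.sub d2 using 1
    ring
  · filter_upwards [hmem] with t ht
    obtain ⟨_, _, h3, h4⟩ := hbound t ht
    have : 0 < (1/2 + t)⁻¹ + (1/2 - t)⁻¹ := by positivity
    exact this.ne'
  · have hca : ContinuousAt (fun t : ℝ =>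
        lam * (Real.log (m + lam * t) - Real.log (m - lam * t))) 0 := by
      have a1 : ContinuousAt (fun t : ℝ => m + lam * t) 0 :=
        (continuous_const.add (continuous_const.mul continuous_id)).continuousAt
      have a2 : ContinuousAt (fun t : ℝ => m - lam * t) 0 :=
        (continuous_const.sub (continuous_const.mul continuous_id)).continuousAt
      have l1 : ContinuousAt (fun t : ℝ => Real.log (m + lam * t)) 0 :=
        (Real.continuousAt_log (by simpa using hm.ne')).comp a1
      have l2 : ContinuousAt (fun t : ℝ => Real.log (m - lam * t)) 0 :=
        (Real.continuousAt_log (by simpa using hm.ne')).comp a2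
      exact continuousAt_const.mul (l1.sub l2)
    have h := hca.tendsto
    have hval : lam * (Real.log (m + lam * 0) - Real.log (m - lam * 0)) = 0 := by
      norm_num
    rw [hval] at h
    exact h.mono_left nhdsWithin_le_nhds
  · have hca : ContinuousAt (fun t : ℝ =>
        Real.log (1/2 + t) - Real.log (1/2 - t)) 0 := by
      have l1 : ContinuousAt (fun t : ℝ => Real.log (1/2 + t)) 0 :=
        (Real.continuousAt_log (by norm_num)).comp
          ((continuous_const.add continuous_id).continuousAt)
      have l2 : ContinuousAt (fun t : ℝ => Real.log (1/2 - t)) 0 :=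
        (Real.continuousAt_log (by norm_num)).comp
          ((continuous_const.sub continuous_id).continuousAt)
      exact l1.sub l2
    have h := hca.tendsto
    have hval : Real.log (1/2 + 0) - Real.log ((1:ℝ)/2 - 0) = 0 := by norm_num
    rw [hval] at h
    exact h.mono_left nhdsWithin_le_nhds
  · -- continuity of the ratio of second derivatives
    have hca : ContinuousAt (fun t : ℝ =>
        (lam ^ 2 * ((m + lam * t)⁻¹ + (m - lam * t)⁻¹)) / ((1/2 + t)⁻¹ + (1/2 - t)⁻¹)) 0 := by
      have a1 : ContinuousAt (fun t : ℝ => m + lam * t) 0 :=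
        (continuous_const.add (continuous_const.mul continuous_id)).continuousAt
      have a2 : ContinuousAt (fun t : ℝ => m - lam * t) 0 :=
        (continuous_const.sub (continuous_const.mul continuous_id)).continuousAt
      have i1 : ContinuousAt (fun t : ℝ => (m + lam * t)⁻¹) 0 :=
        a1.inv₀ (by simpa using hm.ne')
      have i2 : ContinuousAt (fun t : ℝ => (m - lam * t)⁻¹) 0 :=
        a2.inv₀ (by simpa using hm.ne')
      have i3 : ContinuousAt (fun t : ℝ => ((1:ℝ)/2 + t)⁻¹) 0 :=
        ((continuous_const.add continuous_id).continuousAt).inv₀ (by norm_num)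
      have i4 : ContinuousAt (fun t : ℝ => ((1:ℝ)/2 - t)⁻¹) 0 :=
        ((continuous_const.sub continuous_id).continuousAt).inv₀ (by norm_num)
      exact (continuousAt_const.mul (i1.add i2)).div (i3.add i4) (by norm_num)
    have h := hca.tendsto
    have hval : (lam ^ 2 * ((m + lam * 0)⁻¹ + (m - lam * 0)⁻¹))
        / (((1:ℝ)/2 + 0)⁻¹ + ((1:ℝ)/2 - 0)⁻¹) = lam ^ 2 / (2 * m) := by
      rw [mul_zero, add_zero, sub_zero, add_zero, sub_zero]
      rw [show ((1:ℝ)/2)⁻¹ = 2 by norm_num]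
      field_simp
    rw [hval] at h
    exact h.mono_left nhdsWithin_le_nhds

end PottsEta

open PottsEta in
set_option maxHeartbeats 1600000 in
/-- Input-unrestricted KL contraction coefficient of the Potts channel:
`η_KL(PC_λ) = kλ²/((k−2)λ+2)`. -/
theorem potts_eta_KL_unrestricted (k : ℕ) (hk : 2 ≤ k)
    (lam : ℝ) (hlam : lam ∈ Set.Icc (-(1 / ((k : ℝ) - 1))) 1) :
    sSup {r : ℝ | ∃ P Q : Fin k → ℝ,
        (∀ i, 0 ≤ P i) ∧ (∑ i, P i = 1) ∧
        (∀ i, 0 ≤ Q i) ∧ (∑ i, Q i = 1) ∧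
        (∀ i, Q i = 0 → P i = 0) ∧ P ≠ Q ∧
        r = klDiv' k (pottsChannel k lam P) (pottsChannel k lam Q) / klDiv' k P Q}
      = (k : ℝ) * lam ^ 2 / (((k : ℝ) - 2) * lam + 2) := by
  obtain ⟨k', rfl⟩ : ∃ k', k = k' + 2 := ⟨k - 2, by omega⟩
  set k := k' + 2
  obtain ⟨hlam1, hlam2⟩ := hlam
  have hkR : (2:ℝ) ≤ (k:ℝ) := by exact_mod_cast hk
  have hk0 : (0:ℝ) < k := by linarith
  have hk1 : (0:ℝ) < (k:ℝ) - 1 := by linarith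
  have hklam : -1 ≤ ((k:ℝ) - 1) * lam := by
    have h := mul_le_mul_of_nonneg_left hlam1 hk1.le
    rw [mul_neg, mul_one_div, div_self hk1.ne'] at h
    linarith
  have hden : (0:ℝ) < ((k:ℝ) - 2) * lam + 2 := by nlinarith
  have h01 : (0 : Fin k) ≠ 1 := by
    intro h
    have := congrArg Fin.val h
    simp [Fin.val_zero, Fin.val_one] at this
    omega
  -- the two-point family
  set QQ : Fin k → ℝ := fun i => if i = 0 then 1/2 else if i = 1 then 1/2 else 0
    with hQQ_def
  set PP : ℝ → Fin k → ℝ :=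
    fun t i => if i = 0 then 1/2 + t else if i = 1 then 1/2 - t else 0 with hPP_def
  have hsum2 : ∀ a b : ℝ,
      ∑ i : Fin k, (if i = 0 then a else if i = 1 then b else (0:ℝ)) = a + b := by
    intro a b
    rw [← Finset.sum_subset (Finset.subset_univ ({0, 1} : Finset (Fin k)))]
    · rw [Finset.sum_insert (by simp [h01]), Finset.sum_singleton]
      simp [Ne.symm h01]
    · intro x _ hx
      simp only [Finset.mem_insert, Finset.mem_singleton] at hx
      push_neg at hx
      simp only [if_neg hx.1, if_neg hx.2]
  have hQQsum : ∑ i, QQ i = 1 := by simp only [hQQ_def, hsum2]; norm_num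
  have hQQ0 : ∀ i, 0 ≤ QQ i := by
    intro i
    simp only [hQQ_def]
    by_cases h0 : i = 0
    · simp only [if_pos h0]; norm_num
    · by_cases h1 : i = 1
      · simp only [if_neg h0, if_pos h1]; norm_num
      · simp only [if_neg h0, if_neg h1]; norm_num
  have hPPmem : ∀ t : ℝ, 0 < t → t < 1/4 →
      (∀ i, 0 ≤ PP t i) ∧ (∑ i, PP t i = 1) ∧ (∀ i, QQ i = 0 → PP t i = 0)
        ∧ PP t ≠ QQ := by
    intro t ht0 ht1
    refine ⟨?_, ?_, ?_, ?_⟩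
    · intro i
      simp only [hPP_def]
      by_cases h0 : i = 0
      · simp only [if_pos h0]; linarith
      · by_cases h1 : i = 1
        · simp only [if_neg h0, if_pos h1]; linarith
        · simp only [if_neg h0, if_neg h1]; norm_num
    · simp only [hPP_def, hsum2]; ring
    · intro i h
      simp only [hQQ_def] at h
      simp only [hPP_def]
      by_cases h0 : i = 0
      · simp only [if_pos h0] at h; norm_num at h
      · by_cases h1 : i = 1
        · simp only [if_neg h0, if_pos h1] at h; norm_num at h
        · simp only [if_neg h0, if_neg h1]
    · intro h
      have h2 := congrFun h 0
      simp only [hPP_def, hQQ_def, if_pos rfl] at h2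
      linarith
  rcases eq_or_lt_of_le hlam2 with hlam1' | hlam2'
  · -- case lam = 1
    subst hlam1'
    have hch : ∀ X : Fin k → ℝ, pottsChannel k 1 X = X := by
      intro X; funext y; simp [pottsChannel]
    have hRHS : (k : ℝ) * (1:ℝ) ^ 2 / (((k : ℝ) - 2) * 1 + 2) = 1 := by
      rw [one_pow, mul_one, mul_one]
      have : (k:ℝ) - 2 + 2 = k := by ring
      rw [this, div_self hk0.ne']
    rw [hRHS]
    -- the witness pair
    set P1 : Fin k → ℝ := fun i => if i = 0 then 1 else if i = 1 then 0 else 0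
      with hP1_def
    have hP1sum : ∑ i, P1 i = 1 := by simp only [hP1_def, hsum2]; norm_num
    have hkl : klDiv' k P1 QQ = Real.log 2 := by
      rw [klDiv']
      have h : ∀ i : Fin k, P1 i * Real.log (P1 i / QQ i)
          = (if i = 0 then Real.log 2 else if i = 1 then 0 else (0:ℝ)) := by
        intro i
        simp only [hP1_def, hQQ_def]
        by_cases h0 : i = 0
        · simp only [if_pos h0]
          norm_num
        · by_cases h1 : i = 1
          · simp only [if_neg h0, if_pos h1]
            norm_num
          · simp only [if_neg h0, if_neg h1]
            norm_num
      rw [Finset.sum_congr rfl (fun i _ => h i), hsum2, add_zero]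
    have hlog2 : Real.log 2 ≠ 0 := ne_of_gt (Real.log_pos (by norm_num))
    have hmem1 : (1:ℝ) ∈ {r : ℝ | ∃ P Q : Fin k → ℝ,
        (∀ i, 0 ≤ P i) ∧ (∑ i, P i = 1) ∧
        (∀ i, 0 ≤ Q i) ∧ (∑ i, Q i = 1) ∧
        (∀ i, Q i = 0 → P i = 0) ∧ P ≠ Q ∧
        r = klDiv' k (pottsChannel k 1 P) (pottsChannel k 1 Q) / klDiv' k P Q} := by
      refine ⟨P1, QQ, ?_, hP1sum, hQQ0, hQQsum, ?_, ?_, ?_⟩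
      · intro i
        simp only [hP1_def]
        by_cases h0 : i = 0
        · simp only [if_pos h0]; norm_num
        · by_cases h1 : i = 1
          · simp only [if_neg h0, if_pos h1]; norm_num
          · simp only [if_neg h0, if_neg h1]; norm_num
      · intro i h
        simp only [hQQ_def] at h
        simp only [hP1_def]
        by_cases h0 : i = 0
        · simp only [if_pos h0] at h; norm_num at h
        · by_cases h1 : i = 1
          · simp only [if_neg h0, if_pos h1] at h; norm_num at h
          · simp only [if_neg h0, if_neg h1]
      · intro h
        have h2 := congrFun h 0
        simp only [hP1_def, hQQ_def, if_pos rfl] at h2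
        norm_num at h2
      · rw [hch, hch, hkl, div_self hlog2]
    apply csSup_eq_of_forall_le_of_forall_lt_exists_gt ⟨1, hmem1⟩
    · rintro a ⟨P, Q, _, _, _, _, _, _, ha⟩
      rw [hch, hch] at ha
      rcases eq_or_ne (klDiv' k P Q) 0 with h | h
      · rw [ha, h, div_zero]; norm_num
      · rw [ha, div_self h]
    · intro w hw
      exact ⟨1, hmem1, hw⟩
  · -- case lam < 1
    obtain ⟨c, hc_def⟩ : ∃ c : ℝ, c = (1 - lam) / k := ⟨_, rfl⟩
    have hc : 0 < c := by rw [hc_def]; exact div_pos (by linarith) hk0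
    obtain ⟨m, hm_def⟩ : ∃ m : ℝ, m = lam / 2 + c := ⟨_, rfl⟩
    have hm : 0 < m := by
      have h : m = (((k:ℝ) - 2) * lam + 2) / (2 * k) := by
        rw [hm_def, hc_def]; field_simp; ring
      rw [h]
      exact div_pos hden (by positivity)
    have hηval : lam ^ 2 / (2 * m) = (k : ℝ) * lam ^ 2 / (((k : ℝ) - 2) * lam + 2) := by
      have h : 2 * m = (((k:ℝ) - 2) * lam + 2) / k := by
        rw [hm_def, hc_def]; field_simp; ring
      rw [h, div_div_eq_mul_div]; ring
    -- value of the elements of the family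
    have hklG : ∀ t : ℝ, 0 < t → t < 1/4 → klDiv' k (PP t) QQ
        = ((1/2 + t) * Real.log (1/2 + t) - (1/2 + t) * Real.log (1/2))
          + ((1/2 - t) * Real.log (1/2 - t) - (1/2 - t) * Real.log (1/2)) := by
      intro t ht0 ht1
      rw [klDiv']
      have h : ∀ i : Fin k, PP t i * Real.log (PP t i / QQ i)
          = (if i = 0 then (1/2 + t) * Real.log (1/2 + t) - (1/2 + t) * Real.log (1/2)
             else if i = 1 then
              (1/2 - t) * Real.log (1/2 - t) - (1/2 - t) * Real.log (1/2)
             else (0:ℝ)) := by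
        intro i
        simp only [hPP_def, hQQ_def]
        by_cases h0 : i = 0
        · simp only [if_pos h0]
          rw [Real.log_div (by linarith) (by norm_num)]
          ring
        · by_cases h1 : i = 1
          · simp only [if_neg h0, if_pos h1]
            rw [Real.log_div (by linarith) (by norm_num)]
            ring
          · simp only [if_neg h0, if_neg h1]
            norm_num
      rw [Finset.sum_congr rfl (fun i _ => h i), hsum2]
    have hklF : ∀ t : ℝ, 0 < t → t < 1/4 → 0 < m + lam * t → 0 < m - lam * t →
        klDiv' k (pottsChannel k lam (PP t)) (pottsChannel k lam QQ)
        = ((m + lam * t) * Real.log (m + lam * t) - (m + lam * t) * Real.log m)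
          + ((m - lam * t) * Real.log (m - lam * t) - (m - lam * t) * Real.log m) := by
      intro t ht0 ht1 hmp hmq
      rw [klDiv']
      have h : ∀ i : Fin k, pottsChannel k lam (PP t) i
          * Real.log (pottsChannel k lam (PP t) i / pottsChannel k lam QQ i)
          = (if i = 0 then (m + lam * t) * Real.log (m + lam * t) - (m + lam * t) * Real.log m
             else if i = 1 then
              (m - lam * t) * Real.log (m - lam * t) - (m - lam * t) * Real.log m
             else (0:ℝ)) := by
        intro i
        simp only [pottsChannel, hPP_def, hQQ_def, ← hc_def]
        by_cases h0 : i = 0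
        · simp only [if_pos h0]
          rw [show lam * (1/2 + t) + c = m + lam * t by rw [hm_def]; ring,
            show lam * (1/2) + c = m by rw [hm_def]; ring]
          rw [Real.log_div hmp.ne' hm.ne']
          ring
        · by_cases h1 : i = 1
          · simp only [if_neg h0, if_pos h1]
            rw [show lam * (1/2 - t) + c = m - lam * t by rw [hm_def]; ring,
              show lam * (1/2) + c = m by rw [hm_def]; ring]
            rw [Real.log_div hmq.ne' hm.ne']
            ring
          · simp only [if_neg h0, if_neg h1]
            rw [mul_zero, zero_add, div_self hc.ne', Real.log_one, mul_zero]
      rw [Finset.sum_congr rfl (fun i _ => h i), hsum2]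
    -- a first element to show the set is nonempty
    have hPP8 := hPPmem (1/8) (by norm_num) (by norm_num)
    have hmem0 : (klDiv' k (pottsChannel k lam (PP (1/8))) (pottsChannel k lam QQ)
        / klDiv' k (PP (1/8)) QQ) ∈ {r : ℝ | ∃ P Q : Fin k → ℝ,
        (∀ i, 0 ≤ P i) ∧ (∑ i, P i = 1) ∧
        (∀ i, 0 ≤ Q i) ∧ (∑ i, Q i = 1) ∧
        (∀ i, Q i = 0 → P i = 0) ∧ P ≠ Q ∧
        r = klDiv' k (pottsChannel k lam P) (pottsChannel k lam Q) / klDiv' k P Q} :=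
      ⟨PP (1/8), QQ, hPP8.1, hPP8.2.1, hQQ0, hQQsum, hPP8.2.2.1, hPP8.2.2.2, rfl⟩
    apply csSup_eq_of_forall_le_of_forall_lt_exists_gt ⟨_, hmem0⟩
    · -- upper bound, from the SDPI
      rintro a ⟨P, Q, hP0, hP1, hQ0, hQ1, hac, hne, ha⟩
      obtain ⟨hD, hN⟩ := sdpi hk hlam1 hlam2' hP0 hP1 hQ0 hQ1 hac hne
      rcases eq_or_lt_of_le hD with h | h
      · rw [ha, ← h, div_zero]
        positivity
      · rw [ha, div_le_iff₀ h]
        linarith [hN]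
    · -- lower bound via the limit
      intro w hw
      have hR := lhop (lam := lam) hm
      rw [hηval] at hR
      have h1 : ∀ᶠ t in nhdsWithin (0:ℝ) (Set.Ioi 0), w <
          (((m + lam * t) * Real.log (m + lam * t) - (m + lam * t) * Real.log m)
          + ((m - lam * t) * Real.log (m - lam * t) - (m - lam * t) * Real.log m))
          / (((1/2 + t) * Real.log (1/2 + t) - (1/2 + t) * Real.log (1/2))
          + ((1/2 - t) * Real.log (1/2 - t) - (1/2 - t) * Real.log (1/2))) :=
        (tendsto_order.1 hR).1 w hw
      set tb : ℝ := min (1/4) (m / (2 * (|lam| + 1))) with htb_def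
      have htbpos : 0 < tb := lt_min (by norm_num) (div_pos hm (by positivity))
      have h2 : Set.Ioo (0:ℝ) tb ∈ nhdsWithin (0:ℝ) (Set.Ioi 0) :=
        Ioo_mem_nhdsGT_of_mem ⟨le_refl 0, htbpos⟩
      obtain ⟨t, hth, htI⟩ := (h1.and (Filter.eventually_of_mem h2 (fun x hx => hx))).exists
      obtain ⟨ht0, httb⟩ := htI
      have ht1 : t < 1/4 := lt_of_lt_of_le httb (min_le_left _ _)
      have hmlt : |lam * t| < m/2 := by
        have hb : t < m / (2*(|lam|+1)) := lt_of_lt_of_le httb (min_le_right _ _)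
        rw [abs_mul, abs_of_nonneg ht0.le]
        have h3 : (|lam|+1) * t < (|lam|+1) * (m/(2*(|lam|+1))) :=
          mul_lt_mul_of_pos_left hb (by positivity)
        have h4 : (|lam|+1) * (m/(2*(|lam|+1))) = m/2 := by field_simp
        nlinarith [abs_nonneg lam]
      have h6 := abs_lt.1 hmlt
      have hmp : 0 < m + lam * t := by nlinarith [h6.1, h6.2, hm]
      have hmq : 0 < m - lam * t := by nlinarith [h6.1, h6.2, hm]
      have hmemt := hPPmem t ht0 ht1
      refine ⟨klDiv' k (pottsChannel k lam (PP t)) (pottsChannel k lam QQ)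
        / klDiv' k (PP t) QQ,
        ⟨PP t, QQ, hmemt.1, hmemt.2.1, hQQ0, hQQsum, hmemt.2.2.1, hmemt.2.2.2, rfl⟩, ?_⟩
      rw [hklG t ht0 ht1, hklF t ht0 ht1 hmp hmq]
      exact hth
end

section
/- Let k ≥ 2 be an integer. For every probability distribution P = (p_1,…,p_k) on [k] and every function f : [k] → ℝ satisfying Σ_{i=1}^k f_i·p_i = 0 and Σ_{i=1}^k f_i²·p_i = 1, one has Σ_{i=1}^k f_i² − (1/(k−1))·(Σ_{i=1}^k f_i)² ≥ 2. -/
open scoped BigOperators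

/-- For any distribution `P` on `[k]` and any `f` with `∑ fᵢpᵢ = 0` and `∑ fᵢ²pᵢ = 1`,
one has `∑ fᵢ² − (1/(k−1))·(∑ fᵢ)² ≥ 2`. -/
theorem claim_ineq (k : ℕ) (hk : 2 ≤ k)
    (P : Fin k → ℝ) (hP0 : ∀ i, 0 ≤ P i) (hP1 : ∑ i, P i = 1)
    (f : Fin k → ℝ) (hf1 : ∑ i, f i * P i = 0) (hf2 : ∑ i, f i ^ 2 * P i = 1) :
    2 ≤ (∑ i, f i ^ 2) - (1 / ((k : ℝ) - 1)) * (∑ i, f i) ^ 2 := by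
  have hkpos : 0 < k := by omega
  haveI : Nonempty (Fin k) := ⟨⟨0, hkpos⟩⟩
  obtain ⟨a, ha⟩ := Finite.exists_max f
  obtain ⟨b, hb⟩ := Finite.exists_min f
  -- key: f a * f b ≤ -1
  have hnn : 0 ≤ ∑ i, (f a - f i) * (f i - f b) * P i := by
    apply Finset.sum_nonneg
    intro i _
    have h1 : 0 ≤ f a - f i := by linarith [ha i]
    have h2 : 0 ≤ f i - f b := by linarith [hb i]
    exact mul_nonneg (mul_nonneg h1 h2) (hP0 i)
  have hexp : ∑ i, (f a - f i) * (f i - f b) * P i =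
      f a * (∑ i, f i * P i) - f a * f b * (∑ i, P i)
        - (∑ i, f i ^ 2 * P i) + f b * (∑ i, f i * P i) := by
    simp only [Finset.mul_sum, ← Finset.sum_add_distrib, ← Finset.sum_sub_distrib]
    apply Finset.sum_congr rfl
    intro i _
    ring
  rw [hexp, hf1, hf2, hP1] at hnn
  have hkey : f a * f b ≤ -1 := by linarith
  have hab : a ≠ b := by
    intro h
    have : 0 ≤ f a * f b := h ▸ mul_self_nonneg (f a)
    linarith
  -- Cauchy-Schwarz on k-1 terms
  set g : Fin k → ℝ := Function.update f a (f a + f b) with hg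
  set t : Finset (Fin k) := Finset.univ.erase b with ht
  have hcard : (t.card : ℝ) = (k : ℝ) - 1 := by
    rw [ht, Finset.card_erase_of_mem (Finset.mem_univ b)]
    simp [Finset.card_univ]
    push_cast [Nat.cast_sub hkpos]
    ring
  have hat : a ∈ t := Finset.mem_erase.mpr ⟨hab, Finset.mem_univ a⟩
  have hsum : ∑ i ∈ t, g i = ∑ i, f i := by
    rw [ht, ← Finset.add_sum_erase _ g hat,
      ← Finset.add_sum_erase _ f (Finset.mem_univ b)]
    have hab' : a ∈ (Finset.univ.erase b) := hat
    rw [← Finset.add_sum_erase _ f hab']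
    have : ∑ i ∈ (Finset.univ.erase b).erase a, g i
        = ∑ i ∈ (Finset.univ.erase b).erase a, f i := by
      apply Finset.sum_congr rfl
      intro i hi
      have hia : i ≠ a := (Finset.mem_erase.mp hi).1
      simp [hg, Function.update_of_ne hia]
    rw [this]
    simp [hg, Function.update_self]
    ring
  have hsumsq : ∑ i ∈ t, g i ^ 2 = (∑ i, f i ^ 2) + 2 * (f a * f b) := by
    rw [ht, ← Finset.add_sum_erase _ (fun i => g i ^ 2) hat,
      ← Finset.add_sum_erase _ (fun i => f i ^ 2) (Finset.mem_univ b)]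
    have hab' : a ∈ (Finset.univ.erase b) := hat
    rw [← Finset.add_sum_erase _ (fun i => f i ^ 2) hab']
    have : ∑ i ∈ (Finset.univ.erase b).erase a, g i ^ 2
        = ∑ i ∈ (Finset.univ.erase b).erase a, f i ^ 2 := by
      apply Finset.sum_congr rfl
      intro i hi
      have hia : i ≠ a := (Finset.mem_erase.mp hi).1
      simp [hg, Function.update_of_ne hia]
    rw [this]
    simp [hg, Function.update_self]
    ring
  have hCS := sq_sum_le_card_mul_sum_sq (s := t) (f := g)
  rw [hsum, hsumsq, hcard] at hCS
  have hk1 : (0 : ℝ) < (k : ℝ) - 1 := by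
    have : (2 : ℝ) ≤ (k : ℝ) := by exact_mod_cast hk
    linarith
  have h2 : (∑ i, f i) ^ 2 ≤ ((k : ℝ) - 1) * ((∑ i, f i ^ 2) - 2) := by
    calc (∑ i, f i) ^ 2 ≤ ((k : ℝ) - 1) * ((∑ i, f i ^ 2) + 2 * (f a * f b)) := hCS
      _ ≤ ((k : ℝ) - 1) * ((∑ i, f i ^ 2) - 2) := by nlinarith
  have h3 : (∑ i, f i) ^ 2 / ((k : ℝ) - 1) ≤ (∑ i, f i ^ 2) - 2 :=
    (div_le_iff₀ hk1).mpr (by linarith)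
  rw [div_mul_eq_mul_div, one_mul]
  linarith
end

section
/- Let k ≥ 3 be an integer and λ ∈ [0, 1]. Then for every x ∈ (1/k, 1], ψ(λx + (1−λ)/k) ≤ ( λ² / ( (1−λ)·(2(k−1)·log(k−1))/(k(k−2)) + λ ) )·ψ(x). Consequently, the input-restricted KL contraction coefficient of the Potts channel at the uniform input satisfies η_KL(PC_λ, π) ≤ λ² / ( (1−λ)·(2(k−1)·log(k−1))/(k(k−2)) + λ ). -/
open scoped BigOperators

open Filter Topology

namespace PottsAux


noncomputable def Qf (K x : ℝ) : ℝ :=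
  Real.log K + x * Real.log x + (1 - x) * Real.log (1 - x) - (1 - x) * Real.log (K - 1)

noncomputable def Wf (K u : ℝ) : ℝ := Real.log u - Real.log (1 - u) + Real.log (K - 1)

lemma psi_eq_Qf {k : ℕ} (hk : 3 ≤ k) {x : ℝ} (hx : x ≤ 1) : psi k x = Qf (k : ℝ) x := by
  have hK1 : (k : ℝ) - 1 ≠ 0 := by
    have : (3 : ℝ) ≤ (k : ℝ) := by exact_mod_cast hk
    nlinarith
  rcases eq_or_lt_of_le hx with h1 | h1
  · subst h1; simp [psi, Qf]
  · have h1x : (1 : ℝ) - x ≠ 0 := by nlinarith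
    unfold psi Qf
    rw [Real.log_div h1x hK1]
    ring

lemma contQ (K : ℝ) : Continuous (Qf K) := by
  have h1 : Continuous fun x : ℝ => x * Real.log x := Real.continuous_mul_log
  have h2 : Continuous fun x : ℝ => (1 - x) * Real.log (1 - x) :=
    h1.comp (continuous_const.sub continuous_id)
  unfold Qf
  fun_prop

lemma hasDerivAt_Qf (K : ℝ) {u : ℝ} (h0 : 0 < u) (h1 : u < 1) :
    HasDerivAt (Qf K) (Wf K u) u := by
  have hu : u ≠ 0 := ne_of_gt h0
  have hu1 : (1 : ℝ) - u ≠ 0 := by nlinarith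
  have d1 : HasDerivAt (fun x : ℝ => x * Real.log x) (Real.log u + 1) u :=
    Real.hasDerivAt_mul_log hu
  have dinner : HasDerivAt (fun x : ℝ => 1 - x) (-1) u := by
    simpa using (hasDerivAt_id u).const_sub 1
  have d2 : HasDerivAt (fun x : ℝ => (1 - x) * Real.log (1 - x))
      ((Real.log (1 - u) + 1) * (-1)) u :=
    (Real.hasDerivAt_mul_log hu1).comp u dinner
  have d3 : HasDerivAt (fun x : ℝ => (1 - x) * Real.log (K - 1))
      ((-1) * Real.log (K - 1)) u := by
    simpa using (dinner.mul_const (Real.log (K - 1)))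
  have : HasDerivAt (Qf K)
      (0 + (Real.log u + 1) + (Real.log (1 - u) + 1) * (-1) - (-1) * Real.log (K - 1)) u := by
    exact (((hasDerivAt_const u (Real.log K)).add d1).add d2).sub d3
  convert this using 1
  unfold Wf; ring

lemma hasDerivAt_Wf (K : ℝ) {u : ℝ} (h0 : 0 < u) (h1 : u < 1) :
    HasDerivAt (Wf K) (1 / (u * (1 - u))) u := by
  have hu : u ≠ 0 := ne_of_gt h0
  have hu1 : (1 : ℝ) - u ≠ 0 := by nlinarith
  have dinner : HasDerivAt (fun x : ℝ => 1 - x) (-1) u := by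
    simpa using (hasDerivAt_id u).const_sub 1
  have d1 : HasDerivAt Real.log u⁻¹ u := Real.hasDerivAt_log hu
  have d2 : HasDerivAt (fun x : ℝ => Real.log (1 - x)) ((1 - u)⁻¹ * (-1)) u :=
    (Real.hasDerivAt_log hu1).comp u dinner
  have : HasDerivAt (Wf K) (u⁻¹ - (1 - u)⁻¹ * (-1) + 0) u :=
    ((d1.sub d2).add (hasDerivAt_const u (Real.log (K - 1))))
  convert this using 1
  field_simp
  ring

section Kfacts
variable {K : ℝ} (hK : 3 ≤ K)

include hK

lemma hK0 : (0 : ℝ) < K := by linarith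
lemma hK1' : (1 : ℝ) < K - 1 := by linarith
lemma hK1pos : (0 : ℝ) < K - 1 := by linarith
lemma hlogK1 : 0 < Real.log (K - 1) := Real.log_pos (hK1' hK)
lemma hc0 : (0 : ℝ) < K⁻¹ := by positivity
lemma hc3 : K⁻¹ ≤ 1/3 := by
  rw [inv_le_comm₀ (by linarith) (by norm_num)]
  linarith
lemma hc1 : K⁻¹ < 1 := by
  calc K⁻¹ ≤ 1/3 := hc3 hK
  _ < 1 := by norm_num

lemma log_one_sub_inv : Real.log (1 - K⁻¹) = Real.log (K - 1) - Real.log K := by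
  have h0 : K ≠ 0 := by linarith
  have : (1 : ℝ) - K⁻¹ = (K - 1) / K := by field_simp
  rw [this, Real.log_div (by linarith) h0]

lemma Qf_inv : Qf K K⁻¹ = 0 := by
  unfold Qf
  rw [Real.log_inv, log_one_sub_inv hK]
  ring

lemma Wf_inv : Wf K K⁻¹ = 0 := by
  unfold Wf
  rw [Real.log_inv, log_one_sub_inv hK]
  ring

omit hK in
lemma Qf_one : Qf K 1 = Real.log K := by unfold Qf; simp

lemma Qf_sub : Qf K (1 - K⁻¹) = (1 - 2 * K⁻¹) * Real.log (K - 1) := by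
  unfold Qf
  have : (1 : ℝ) - (1 - K⁻¹) = K⁻¹ := by ring
  rw [this, Real.log_inv, log_one_sub_inv hK]
  ring

lemma Wf_sub : Wf K (1 - K⁻¹) = 2 * Real.log (K - 1) := by
  unfold Wf
  have : (1 : ℝ) - (1 - K⁻¹) = K⁻¹ := by ring
  rw [this, Real.log_inv, log_one_sub_inv hK]
  ring

lemma Wf_pos {u : ℝ} (h : K⁻¹ < u) (h1 : u < 1) : 0 < Wf K u := by
  have hu0 : 0 < u := lt_trans (hc0 hK) h
  have h1u : 0 < 1 - u := by linarith
  have hK1p : (0:ℝ) < K - 1 := hK1pos hK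
  have : Wf K u = Real.log (u * (K - 1) / (1 - u)) := by
    unfold Wf
    rw [Real.log_div (by positivity) (ne_of_gt h1u), Real.log_mul (ne_of_gt hu0) (ne_of_gt hK1p)]
    ring
  rw [this]
  apply Real.log_pos
  rw [lt_div_iff₀ h1u]
  have hKu : 1 < K * u := by
    have := (inv_lt_iff_one_lt_mul₀' (hK0 hK)).1 h
    linarith [this]
  nlinarith

lemma Qf_pos {u : ℝ} (h : K⁻¹ < u) (h1 : u ≤ 1) : 0 < Qf K u := by
  have hmono : StrictMonoOn (Qf K) (Set.Icc K⁻¹ 1) := by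
    apply strictMonoOn_of_deriv_pos (convex_Icc _ _) ((contQ K).continuousOn)
    intro x hx
    rw [interior_Icc] at hx
    have hx0 : 0 < x := lt_trans (hc0 hK) hx.1
    rw [(hasDerivAt_Qf K hx0 hx.2).deriv]
    exact Wf_pos hK hx.1 hx.2
  have h0 := hmono (Set.left_mem_Icc.2 (le_of_lt (hc1 hK)))
      (Set.mem_Icc.2 ⟨le_of_lt h, h1⟩) h
  rwa [Qf_inv hK] at h0

end Kfacts

noncomputable def Theta (c τ γ v : ℝ) : ℝ :=
  (6 * (τ*(c^2 - c + 1/2) - (c-1)^2/2)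
    + 2 * (γ*(τ+c-1) - 3*τ*(c^2-c) - 5/2*τ + 3/2*c^2 - 5*c + 3)
    + (τ*γ^2 - 4*τ*γ + 3*τ - γ^2/2 - 4*c*γ + 4*γ + 6*c - 9/2))
      * (Real.log v - Real.log (1-v))
  + (γ^2/2 - 2*γ + 3/2) * (Real.log v + Real.log (1-v))
  - (3 * (τ*(c^2 - c + 1/2) - (c-1)^2/2)
      + (γ*(τ+c-1) - 3*τ*(c^2-c) - 5/2*τ + 3/2*c^2 - 5*c + 3)) * ((1-2*v)/(v*(1-v)))
  - (τ*(c^2 - c + 1/2) - (c-1)^2/2) / 2 * ((1-2*v)/(v*(1-v))^2)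
  - (τ*(c-1/2) + (c-1)^2/2) / 2 * (1/(v*(1-v))^2)
  - (2*c*τ*γ - γ*τ - 3*c*τ + 3/2*τ - γ*c + γ - 3/2*c^2 + 3*c - 2) * (1/(v*(1-v)))

lemma hasDerivAt_Theta (c τ γ : ℝ) {v : ℝ} (h0 : 0 < v) (h1 : v < 1) :
    HasDerivAt (Theta c τ γ)
      ((τ - v) * (γ^2/(v*(1-v)) + 2*γ*(v-c)*(2*v-1)/(v*(1-v))^2
        + (v-c)^2*(3*v^2-3*v+1)/(v*(1-v))^3)) v := by
  have hv : v ≠ 0 := ne_of_gt h0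
  have hv1 : (1:ℝ) - v ≠ 0 := by nlinarith
  have hm : v * (1-v) ≠ 0 := mul_ne_zero hv hv1
  have hm2 : (v * (1-v))^2 ≠ 0 := pow_ne_zero _ hm
  have dinner : HasDerivAt (fun x : ℝ => 1 - x) (-1) v := by
    simpa using (hasDerivAt_id v).const_sub 1
  have dlog1 : HasDerivAt Real.log v⁻¹ v := Real.hasDerivAt_log hv
  have dlog2 : HasDerivAt (fun x : ℝ => Real.log (1 - x)) ((1-v)⁻¹ * (-1)) v :=
    (Real.hasDerivAt_log hv1).comp v dinner
  have dm : HasDerivAt (fun x : ℝ => x * (1 - x)) (1 * (1-v) + v * (-1)) v :=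
    (hasDerivAt_id v).mul dinner
  have dm2 : HasDerivAt (fun x : ℝ => (x * (1 - x))^2)
      (2 * (v * (1-v))^1 * (1 * (1-v) + v * (-1))) v := dm.pow 2
  have dnum : HasDerivAt (fun x : ℝ => 1 - 2*x) (-(2:ℝ)) v := by
    simpa using ((hasDerivAt_id v).const_mul 2).const_sub 1
  have d3 : HasDerivAt (fun x : ℝ => (1-2*x)/(x*(1-x)))
      (((-(2:ℝ)) * (v*(1-v)) - (1-2*v) * (1 * (1-v) + v * (-1))) / (v*(1-v))^2) v :=
    dnum.div dm hm
  have d4 : HasDerivAt (fun x : ℝ => (1-2*x)/(x*(1-x))^2)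
      (((-(2:ℝ)) * ((v*(1-v))^2) - (1-2*v) * (2 * (v * (1-v))^1 * (1 * (1-v) + v * (-1))))
        / ((v*(1-v))^2)^2) v :=
    dnum.div dm2 hm2
  have d5 : HasDerivAt (fun x : ℝ => 1/(x*(1-x))^2)
      ((0 * ((v*(1-v))^2) - 1 * (2 * (v * (1-v))^1 * (1 * (1-v) + v * (-1))))
        / ((v*(1-v))^2)^2) v :=
    (hasDerivAt_const v (1:ℝ)).div dm2 hm2
  have d6 : HasDerivAt (fun x : ℝ => 1/(x*(1-x)))
      ((0 * (v*(1-v)) - 1 * (1 * (1-v) + v * (-1))) / (v*(1-v))^2) v :=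
    (hasDerivAt_const v (1:ℝ)).div dm hm
  have big := ((((((dlog1.sub dlog2).const_mul
      (6 * (τ*(c^2 - c + 1/2) - (c-1)^2/2)
        + 2 * (γ*(τ+c-1) - 3*τ*(c^2-c) - 5/2*τ + 3/2*c^2 - 5*c + 3)
        + (τ*γ^2 - 4*τ*γ + 3*τ - γ^2/2 - 4*c*γ + 4*γ + 6*c - 9/2))).add
      ((dlog1.add dlog2).const_mul (γ^2/2 - 2*γ + 3/2))).sub
      (d3.const_mul (3 * (τ*(c^2 - c + 1/2) - (c-1)^2/2)
        + (γ*(τ+c-1) - 3*τ*(c^2-c) - 5/2*τ + 3/2*c^2 - 5*c + 3)))).sub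
      (d4.const_mul ((τ*(c^2 - c + 1/2) - (c-1)^2/2) / 2))).sub
      (d5.const_mul ((τ*(c-1/2) + (c-1)^2/2) / 2))).sub
      (d6.const_mul (2*c*τ*γ - γ*τ - 3*c*τ + 3/2*τ - γ*c + γ - 3/2*c^2 + 3*c - 2))
  refine big.congr_deriv ?_
  field_simp
  ring

set_option maxHeartbeats 4000000 in
lemma Theta_eval {K : ℝ} (hK : 3 ≤ K) (γ : ℝ) {τ : ℝ} (h0 : K⁻¹ < τ) (h1 : τ < 1) :
    Theta K⁻¹ τ γ τ - Theta K⁻¹ τ γ K⁻¹ =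
      γ^2 * Qf K τ + 2*γ*((τ-K⁻¹) * Wf K τ - 2 * Qf K τ)
        + ((τ-K⁻¹)^2/(τ*(1-τ)) - 4*(τ-K⁻¹) * Wf K τ + 6 * Qf K τ)/2 := by
  have hKpos : (0:ℝ) < K := by linarith
  have hK0 : K ≠ 0 := ne_of_gt hKpos
  have hK1 : K - 1 ≠ 0 := by nlinarith
  have hτ0 : τ ≠ 0 := by
    have : (0:ℝ) < K⁻¹ := by positivity
    nlinarith
  have hτ1 : (1:ℝ) - τ ≠ 0 := by nlinarith
  have hinv1 : (1:ℝ) - K⁻¹ ≠ 0 := by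
    have h3 : K⁻¹ ≤ 1/3 := by
      rw [inv_le_comm₀ hKpos (by norm_num)]; linarith
    nlinarith [inv_pos.2 hKpos]
  have e1 : Real.log (K⁻¹) = -Real.log K := Real.log_inv K
  have e2 : Real.log (1 - K⁻¹) = Real.log (K - 1) - Real.log K := by
    have h : (1:ℝ) - K⁻¹ = (K-1)/K := by field_simp
    rw [h, Real.log_div hK1 hK0]
  unfold Theta Qf Wf
  rw [e1, e2]
  field_simp
  ring

lemma bracket_nonneg (c γ : ℝ) {v : ℝ} (h0 : 0 < v) (h1 : v < 1) :
    0 ≤ γ^2/(v*(1-v)) + 2*γ*(v-c)*(2*v-1)/(v*(1-v))^2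
        + (v-c)^2*(3*v^2-3*v+1)/(v*(1-v))^3 := by
  have hm : (0:ℝ) < v * (1-v) := by nlinarith
  have hid : γ^2/(v*(1-v)) + 2*γ*(v-c)*(2*v-1)/(v*(1-v))^2
        + (v-c)^2*(3*v^2-3*v+1)/(v*(1-v))^3
      = ((γ*(v*(1-v)) - (v-c)*(1-2*v))^2 + (v-c)^2*(v*(1-v))) / (v*(1-v))^3 := by
    field_simp
    ring
  rw [hid]
  positivity

lemma Theta_mono {K : ℝ} (hK : 3 ≤ K) (γ : ℝ) {τ : ℝ} (h0 : K⁻¹ < τ) (h1 : τ < 1) :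
    Theta K⁻¹ τ γ K⁻¹ ≤ Theta K⁻¹ τ γ τ := by
  have hc : (0:ℝ) < K⁻¹ := hc0 hK
  have hsub : Set.Icc K⁻¹ τ ⊆ Set.Ioo (0:ℝ) 1 := by
    intro v hv
    exact ⟨lt_of_lt_of_le hc hv.1, lt_of_le_of_lt hv.2 h1⟩
  have hmono : MonotoneOn (Theta K⁻¹ τ γ) (Set.Icc K⁻¹ τ) := by
    apply monotoneOn_of_deriv_nonneg (convex_Icc _ _)
    · intro v hv
      obtain ⟨hv0, hv1⟩ := hsub hv
      exact (hasDerivAt_Theta K⁻¹ τ γ hv0 hv1).continuousAt.continuousWithinAt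
    · intro v hv
      obtain ⟨hv0, hv1⟩ := hsub (interior_subset hv)
      exact (hasDerivAt_Theta K⁻¹ τ γ hv0 hv1).differentiableAt.differentiableWithinAt
    · intro v hv
      rw [interior_Icc] at hv
      obtain ⟨hv0, hv1⟩ := hsub (Set.mem_Icc.2 ⟨le_of_lt hv.1, le_of_lt hv.2⟩)
      rw [(hasDerivAt_Theta K⁻¹ τ γ hv0 hv1).deriv]
      have hb := bracket_nonneg K⁻¹ γ hv0 hv1
      have : (0:ℝ) ≤ τ - v := by linarith [hv.2]
      positivity
  exact hmono (Set.mem_Icc.2 ⟨le_refl _, h0.le⟩) (Set.mem_Icc.2 ⟨h0.le, le_refl _⟩) h0.le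

lemma key_ineq {K : ℝ} (hK : 3 ≤ K) {τ : ℝ} (h0 : K⁻¹ < τ) (h1 : τ < 1) :
    2*((τ-K⁻¹) * Wf K τ - Qf K τ)^2 ≤ (τ-K⁻¹)^2 * Qf K τ / (τ*(1-τ)) := by
  set t := τ - K⁻¹ with htdef
  set P := Qf K τ with hPdef
  set W := Wf K τ with hWdef
  have hP : 0 < P := Qf_pos hK h0 (le_of_lt h1)
  set γ := -(t*W - 2*P)/P with hγdef
  have hmono := Theta_mono hK γ h0 h1
  have hev := Theta_eval hK γ h0 h1
  have h2 : 0 ≤ γ^2 * P + 2*γ*(t*W - 2*P) + (t^2/(τ*(1-τ)) - 4*t*W + 6*P)/2 := by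
    rw [← hev]; linarith
  have h3 : γ^2 * P + 2*γ*(t*W - 2*P) = -(t*W - 2*P)^2/P := by
    rw [hγdef]; field_simp; ring
  rw [h3, neg_div] at h2
  have h4 : (t*W - 2*P)^2/P ≤ (t^2/(τ*(1-τ)) - 4*t*W + 6*P)/2 := by linarith
  have h5 : (t*W - 2*P)^2 ≤ P * ((t^2/(τ*(1-τ)) - 4*t*W + 6*P)/2) := by
    rw [div_le_iff₀ hP] at h4
    linarith [h4]
  have h6 : P * ((t^2/(τ*(1-τ)) - 4*t*W + 6*P)/2) - (t*W - 2*P)^2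
      = (t^2 * P / (τ*(1-τ)))/2 - (t*W - P)^2 := by ring
  nlinarith [h5, h6]

noncomputable def hf (K t : ℝ) : ℝ := t^2 / Qf K (K⁻¹ + t)

noncomputable def h1f (K t : ℝ) : ℝ :=
  (2*t*Qf K (K⁻¹+t) - t^2 * Wf K (K⁻¹+t)) / (Qf K (K⁻¹+t))^2

noncomputable def h2f (K t : ℝ) : ℝ :=
  ((2*Qf K (K⁻¹+t) - t^2/((K⁻¹+t)*(1-K⁻¹-t)))*Qf K (K⁻¹+t)
    - 2*Wf K (K⁻¹+t)*(2*t*Qf K (K⁻¹+t) - t^2*Wf K (K⁻¹+t))) / (Qf K (K⁻¹+t))^3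

noncomputable def af (K : ℝ) : ℝ := 2*(K-1)*Real.log (K-1)/(K*(K-2))


lemma hasDerivAt_hf {K : ℝ} (hK : 3 ≤ K) {t : ℝ} (ht0 : 0 < t) (ht1 : t < 1 - K⁻¹) :
    HasDerivAt (hf K) (h1f K t) t := by
  have hu0 : K⁻¹ < K⁻¹ + t := by linarith
  have hu1 : K⁻¹ + t < 1 := by linarith
  have hu0' : (0:ℝ) < K⁻¹ + t := lt_trans (hc0 hK) hu0
  have hP : 0 < Qf K (K⁻¹ + t) := Qf_pos hK hu0 (le_of_lt hu1)
  have dden : HasDerivAt (fun x : ℝ => Qf K (K⁻¹ + x)) (Wf K (K⁻¹+t) * 1) t :=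
    (hasDerivAt_Qf K hu0' hu1).comp t ((hasDerivAt_id t).const_add K⁻¹)
  have dnum : HasDerivAt (fun x : ℝ => x^2) (2 * t ^ 1) t := hasDerivAt_pow 2 t
  have := dnum.div dden (ne_of_gt hP)
  refine this.congr_deriv ?_
  unfold h1f
  ring

lemma hasDerivAt_h1f {K : ℝ} (hK : 3 ≤ K) {t : ℝ} (ht0 : 0 < t) (ht1 : t < 1 - K⁻¹) :
    HasDerivAt (h1f K) (h2f K t) t := by
  have hu0 : K⁻¹ < K⁻¹ + t := by linarith
  have hu1 : K⁻¹ + t < 1 := by linarith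
  have hu0' : (0:ℝ) < K⁻¹ + t := lt_trans (hc0 hK) hu0
  have hP : 0 < Qf K (K⁻¹ + t) := Qf_pos hK hu0 (le_of_lt hu1)
  have hm : (K⁻¹+t) * (1 - (K⁻¹+t)) ≠ 0 := by
    have : (0:ℝ) < 1 - (K⁻¹+t) := by linarith
    positivity
  have dQ : HasDerivAt (fun x : ℝ => Qf K (K⁻¹ + x)) (Wf K (K⁻¹+t) * 1) t :=
    (hasDerivAt_Qf K hu0' hu1).comp t ((hasDerivAt_id t).const_add K⁻¹)
  have dW : HasDerivAt (fun x : ℝ => Wf K (K⁻¹ + x)) (1/((K⁻¹+t)*(1-(K⁻¹+t))) * 1) t :=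
    (hasDerivAt_Wf K hu0' hu1).comp t ((hasDerivAt_id t).const_add K⁻¹)
  have dnum : HasDerivAt (fun x : ℝ => 2*x*Qf K (K⁻¹+x) - x^2 * Wf K (K⁻¹+x))
      ((2*1) * Qf K (K⁻¹+t) + (2*t) * (Wf K (K⁻¹+t) * 1)
        - ((2*t^1) * Wf K (K⁻¹+t) + t^2 * (1/((K⁻¹+t)*(1-(K⁻¹+t))) * 1))) t := by
    have d1 : HasDerivAt (fun x : ℝ => 2*x) (2*1) t := (hasDerivAt_id t).const_mul 2
    have d2 : HasDerivAt (fun x : ℝ => x^2) (2*t^1) t := hasDerivAt_pow 2 t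
    exact ((d1.mul dQ)).sub (d2.mul dW)
  have dden : HasDerivAt (fun x : ℝ => (Qf K (K⁻¹+x))^2)
      (2 * (Qf K (K⁻¹+t))^1 * (Wf K (K⁻¹+t) * 1)) t := dQ.pow 2
  have := dnum.div dden (by positivity)
  refine this.congr_deriv ?_
  unfold h2f
  have h1t : (1:ℝ) - K⁻¹ - t = 1 - (K⁻¹ + t) := by ring
  rw [h1t]
  set P := Qf K (K⁻¹+t) with hPd
  set W := Wf K (K⁻¹+t) with hWd
  set M := (K⁻¹+t)*(1-(K⁻¹+t)) with hMd
  field_simp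
  ring

lemma h2f_nonpos {K : ℝ} (hK : 3 ≤ K) {t : ℝ} (ht0 : 0 < t) (ht1 : t < 1 - K⁻¹) :
    h2f K t ≤ 0 := by
  have hu0 : K⁻¹ < K⁻¹ + t := by linarith
  have hu1 : K⁻¹ + t < 1 := by linarith
  have hP : 0 < Qf K (K⁻¹ + t) := Qf_pos hK hu0 (le_of_lt hu1)
  have hkey := key_ineq hK hu0 hu1
  unfold h2f
  apply div_nonpos_of_nonpos_of_nonneg
  · have h1t : (1:ℝ) - K⁻¹ - t = 1 - (K⁻¹ + t) := by ring
    have hτc : K⁻¹ + t - K⁻¹ = t := by ring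
    rw [hτc] at hkey
    have hexp : (2*Qf K (K⁻¹+t) - t^2/((K⁻¹+t)*(1-K⁻¹-t)))*Qf K (K⁻¹+t)
        - 2*Wf K (K⁻¹+t)*(2*t*Qf K (K⁻¹+t) - t^2*Wf K (K⁻¹+t))
        = 2*(t * Wf K (K⁻¹+t) - Qf K (K⁻¹+t))^2
          - t^2 * Qf K (K⁻¹+t) / ((K⁻¹+t)*(1-(K⁻¹+t))) := by
      rw [h1t]; ring
    rw [hexp, h1t] at *
    linarith [hkey]
  · positivity


section Main5

section Main
variable {K : ℝ} (hK : 3 ≤ K)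
include hK

lemma contOn_hf : ContinuousOn (hf K) (Set.Ioc 0 (1 - K⁻¹)) := by
  apply ContinuousOn.div
  · fun_prop
  · exact ((contQ K).comp (continuous_const.add continuous_id)).continuousOn
  · intro t ht
    have : K⁻¹ < K⁻¹ + t := by linarith [ht.1]
    exact ne_of_gt (Qf_pos hK this (by linarith [ht.2]))

lemma deriv_hf_eq {t : ℝ} (ht0 : 0 < t) (ht1 : t < 1 - K⁻¹) : deriv (hf K) t = h1f K t :=
  (hasDerivAt_hf hK ht0 ht1).deriv

lemma concave_hf : ConcaveOn ℝ (Set.Ioc 0 (1 - K⁻¹)) (hf K) := by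
  apply concaveOn_of_deriv2_nonpos (convex_Ioc _ _) (contOn_hf hK)
  · rw [interior_Ioc]
    intro x hx
    exact (hasDerivAt_hf hK hx.1 hx.2).differentiableAt.differentiableWithinAt
  · rw [interior_Ioc]
    intro x hx
    have : DifferentiableOn ℝ (h1f K) (Set.Ioo 0 (1 - K⁻¹)) := fun y hy =>
      (hasDerivAt_h1f hK hy.1 hy.2).differentiableAt.differentiableWithinAt
    exact (this.congr (fun y hy => deriv_hf_eq hK hy.1 hy.2)) x hx
  · rw [interior_Ioc]
    intro x hx
    have e0 : deriv^[2] (hf K) x = deriv (deriv (hf K)) x := rfl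
    have heq : (deriv (hf K)) =ᶠ[nhds x] (h1f K) := by
      filter_upwards [IsOpen.mem_nhds isOpen_Ioo hx] with y hy
      exact deriv_hf_eq hK hy.1 hy.2
    rw [e0, heq.deriv_eq, (hasDerivAt_h1f hK hx.1 hx.2).deriv]
    exact h2f_nonpos hK hx.1 hx.2

lemma t2_pos : (0:ℝ) < 1 - 2*K⁻¹ := by linarith [hc3 hK]
lemma t2_lt : 1 - 2*K⁻¹ < 1 - K⁻¹ := by linarith [hc0 hK]

lemma h1f_t2 : h1f K (1 - 2*K⁻¹) = 0 := by
  unfold h1f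
  have harg : K⁻¹ + (1 - 2*K⁻¹) = 1 - K⁻¹ := by ring
  rw [harg, Qf_sub hK, Wf_sub hK]
  have : 2*(1-2*K⁻¹)*((1 - 2*K⁻¹) * Real.log (K-1))
      - (1-2*K⁻¹)^2*(2*Real.log (K-1)) = 0 := by ring
  rw [this, zero_div]

lemma h1f_anti : AntitoneOn (h1f K) (Set.Ioo 0 (1 - K⁻¹)) := by
  apply antitoneOn_of_deriv_nonpos (convex_Ioo _ _)
  · exact fun y hy => (hasDerivAt_h1f hK hy.1 hy.2).continuousAt.continuousWithinAt
  · rw [interior_Ioo]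
    exact fun y hy => (hasDerivAt_h1f hK hy.1 hy.2).differentiableAt.differentiableWithinAt
  · rw [interior_Ioo]
    intro y hy
    rw [(hasDerivAt_h1f hK hy.1 hy.2).deriv]
    exact h2f_nonpos hK hy.1 hy.2

lemma hf_le_max {t : ℝ} (ht : t ∈ Set.Ioc 0 (1 - K⁻¹)) : hf K t ≤ hf K (1 - 2*K⁻¹) := by
  have ht2m : (1 - 2*K⁻¹) ∈ Set.Ioo (0:ℝ) (1 - K⁻¹) := ⟨t2_pos hK, t2_lt hK⟩
  rcases le_or_gt t (1 - 2*K⁻¹) with hle | hgt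
  · have hmono : MonotoneOn (hf K) (Set.Ioc 0 (1 - 2*K⁻¹)) := by
      apply monotoneOn_of_deriv_nonneg (convex_Ioc _ _)
      · exact (contOn_hf hK).mono (Set.Ioc_subset_Ioc_right (le_of_lt (t2_lt hK)))
      · rw [interior_Ioc]
        intro y hy
        exact (hasDerivAt_hf hK hy.1 (lt_trans hy.2 (t2_lt hK))).differentiableAt.differentiableWithinAt
      · rw [interior_Ioc]
        intro y hy
        rw [deriv_hf_eq hK hy.1 (lt_trans hy.2 (t2_lt hK))]
        have := h1f_anti hK ⟨hy.1, lt_trans hy.2 (t2_lt hK)⟩ ht2m (le_of_lt hy.2)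
        rw [h1f_t2 hK] at this
        exact this
    exact hmono ⟨ht.1, hle⟩ ⟨t2_pos hK, le_refl _⟩ hle
  · have hanti : AntitoneOn (hf K) (Set.Icc (1 - 2*K⁻¹) (1 - K⁻¹)) := by
      apply antitoneOn_of_deriv_nonpos (convex_Icc _ _)
      · apply (contOn_hf hK).mono
        intro y hy
        exact ⟨lt_of_lt_of_le (t2_pos hK) hy.1, hy.2⟩
      · rw [interior_Icc]
        intro y hy
        exact (hasDerivAt_hf hK (lt_trans (t2_pos hK) hy.1) hy.2).differentiableAt.differentiableWithinAt
      · rw [interior_Icc]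
        intro y hy
        rw [deriv_hf_eq hK (lt_trans (t2_pos hK) hy.1) hy.2]
        have := h1f_anti hK ht2m ⟨lt_trans (t2_pos hK) hy.1, hy.2⟩ (le_of_lt hy.1)
        rw [h1f_t2 hK] at this
        exact this
    exact hanti ⟨le_refl _, le_of_lt (t2_lt hK)⟩ ⟨le_of_lt hgt, ht.2⟩ (le_of_lt hgt)

lemma Qf_upper {t : ℝ} (h0 : 0 ≤ t) (h2 : t ≤ 1 - 2*K⁻¹) :
    Qf K (K⁻¹ + t) ≤ t^2 / (2*K⁻¹*(1 - K⁻¹)) := by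
  have hc := hc0 hK
  have hc3' := hc3 hK
  have hmpos : (0:ℝ) < K⁻¹ * (1 - K⁻¹) := by nlinarith
  set c := K⁻¹ with hcdef
  -- auxiliary functions
  set δ₁ : ℝ → ℝ := fun s => s * (1/(c*(1-c))) - Wf K (c+s) with hδ₁
  have key1 : ∀ s ∈ Set.Icc (0:ℝ) (1-2*c), 0 ≤ δ₁ s := by
    have hmono : MonotoneOn δ₁ (Set.Icc 0 (1-2*c)) := by
      apply monotoneOn_of_deriv_nonneg (convex_Icc _ _)
      · apply ContinuousOn.sub (by fun_prop)
        intro s hs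
        have hu0 : (0:ℝ) < c + s := by linarith [hs.1]
        have hu1 : c + s < 1 := by linarith [hs.2]
        exact ((hasDerivAt_Wf K hu0 hu1).comp s
          ((hasDerivAt_id s).const_add c)).continuousAt.continuousWithinAt
      · rw [interior_Icc]
        intro s hs
        have hu0 : (0:ℝ) < c + s := by linarith [hs.1]
        have hu1 : c + s < 1 := by linarith [hs.2]
        have d : HasDerivAt δ₁ (1/(c*(1-c)) - 1/((c+s)*(1-(c+s))) * 1) s := by
          apply HasDerivAt.sub
          · simpa using (hasDerivAt_id s).mul_const (1/(c*(1-c)))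
          · exact (hasDerivAt_Wf K hu0 hu1).comp s ((hasDerivAt_id s).const_add c)
        exact d.differentiableAt.differentiableWithinAt
      · rw [interior_Icc]
        intro s hs
        have hu0 : (0:ℝ) < c + s := by linarith [hs.1]
        have hu1 : c + s < 1 := by linarith [hs.2]
        have d : HasDerivAt δ₁ (1/(c*(1-c)) - 1/((c+s)*(1-(c+s))) * 1) s := by
          apply HasDerivAt.sub
          · simpa using (hasDerivAt_id s).mul_const (1/(c*(1-c)))
          · exact (hasDerivAt_Wf K hu0 hu1).comp s ((hasDerivAt_id s).const_add c)
        rw [d.deriv]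
        have hm2 : (0:ℝ) < (c+s)*(1-(c+s)) := by nlinarith [hs.1, hs.2]
        have hle : c*(1-c) ≤ (c+s)*(1-(c+s)) := by nlinarith [hs.1, hs.2]
        have := one_div_le_one_div_of_le hmpos hle
        rw [mul_one]
        linarith
    intro s hs
    have h00 : (0:ℝ) ∈ Set.Icc (0:ℝ) (1-2*c) := ⟨le_refl _, by linarith⟩
    have := hmono h00 hs hs.1
    have hδ0 : δ₁ 0 = 0 := by
      simp only [hδ₁, zero_mul, zero_sub, add_zero]
      rw [Wf_inv hK]
      ring
    linarith [this, hδ0.symm.le]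
  -- second layer
  set δ : ℝ → ℝ := fun s => s^2 * (1/(2*c*(1-c))) - Qf K (c+s) with hδ
  have hmono2 : MonotoneOn δ (Set.Icc 0 (1-2*c)) := by
    apply monotoneOn_of_deriv_nonneg (convex_Icc _ _)
    · apply ContinuousOn.sub (by fun_prop)
      exact ((contQ K).comp (continuous_const.add continuous_id)).continuousOn
    · rw [interior_Icc]
      intro s hs
      have hu0 : (0:ℝ) < c + s := by linarith [hs.1]
      have hu1 : c + s < 1 := by linarith [hs.2]
      have d : HasDerivAt δ ((2*s^1) * (1/(2*c*(1-c))) - Wf K (c+s) * 1) s := by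
        apply HasDerivAt.sub
        · exact (hasDerivAt_pow 2 s).mul_const _
        · exact (hasDerivAt_Qf K hu0 hu1).comp s ((hasDerivAt_id s).const_add c)
      exact d.differentiableAt.differentiableWithinAt
    · rw [interior_Icc]
      intro s hs
      have hu0 : (0:ℝ) < c + s := by linarith [hs.1]
      have hu1 : c + s < 1 := by linarith [hs.2]
      have d : HasDerivAt δ ((2*s^1) * (1/(2*c*(1-c))) - Wf K (c+s) * 1) s := by
        apply HasDerivAt.sub
        · exact (hasDerivAt_pow 2 s).mul_const _
        · exact (hasDerivAt_Qf K hu0 hu1).comp s ((hasDerivAt_id s).const_add c)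
      rw [d.deriv]
      have := key1 s ⟨le_of_lt hs.1, le_of_lt hs.2⟩
      have h2m : (2:ℝ)*c*(1-c) ≠ 0 := by nlinarith
      have hm1 : c*(1-c) ≠ 0 := by nlinarith
      have heq : (2*s^1) * (1/(2*c*(1-c))) = s * (1/(c*(1-c))) := by
        rw [pow_one]
        field_simp
      rw [heq, mul_one]
      simpa [hδ₁] using this
  have h00 : (0:ℝ) ∈ Set.Icc (0:ℝ) (1-2*c) := ⟨le_refl _, by linarith⟩
  have := hmono2 h00 ⟨h0, h2⟩ h0
  have hδ0 : δ 0 = 0 := by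
    simp only [hδ, add_zero]
    rw [Qf_inv hK]
    ring
  have hfin : 0 ≤ δ t := by linarith [hδ0.symm.le, this]
  simp only [hδ] at hfin
  have heq : t^2 * (1/(2*c*(1-c))) = t^2/(2*c*(1-c)) := by ring
  linarith [hfin, heq.symm.le]

end Main
end Main5

section Main6

section Main
variable {K : ℝ} (hK : 3 ≤ K)
include hK

lemma Qf_lower {t : ℝ} (h0 : 0 < t) (h2 : t ≤ 1/2 - K⁻¹) :
    t^2 * (1/(2*((K⁻¹+t)*(1-(K⁻¹+t))))) ≤ Qf K (K⁻¹+t) := by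
  have hc := hc0 hK
  have hc3' := hc3 hK
  set c := K⁻¹ with hcdef
  have hMT : (0:ℝ) < (c+t)*(1-(c+t)) := by nlinarith
  set δ₃ : ℝ → ℝ := fun s => Wf K (c+s) - s * (1/((c+t)*(1-(c+t)))) with hδ₃
  have key1 : ∀ s ∈ Set.Icc (0:ℝ) t, 0 ≤ δ₃ s := by
    have hmono : MonotoneOn δ₃ (Set.Icc 0 t) := by
      apply monotoneOn_of_deriv_nonneg (convex_Icc _ _)
      · apply ContinuousOn.sub
        · intro s hs
          have hu0 : (0:ℝ) < c + s := by linarith [hs.1]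
          have hu1 : c + s < 1 := by nlinarith [hs.2]
          exact ((hasDerivAt_Wf K hu0 hu1).comp s
            ((hasDerivAt_id s).const_add c)).continuousAt.continuousWithinAt
        · fun_prop
      · rw [interior_Icc]
        intro s hs
        have hu0 : (0:ℝ) < c + s := by linarith [hs.1]
        have hu1 : c + s < 1 := by nlinarith [hs.2]
        have d : HasDerivAt δ₃ (1/((c+s)*(1-(c+s))) * 1 - 1/((c+t)*(1-(c+t)))) s := by
          apply HasDerivAt.sub
          · exact (hasDerivAt_Wf K hu0 hu1).comp s ((hasDerivAt_id s).const_add c)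
          · simpa using (hasDerivAt_id s).mul_const (1/((c+t)*(1-(c+t))))
        exact d.differentiableAt.differentiableWithinAt
      · rw [interior_Icc]
        intro s hs
        have hu0 : (0:ℝ) < c + s := by linarith [hs.1]
        have hu1 : c + s < 1 := by nlinarith [hs.2]
        have d : HasDerivAt δ₃ (1/((c+s)*(1-(c+s))) * 1 - 1/((c+t)*(1-(c+t)))) s := by
          apply HasDerivAt.sub
          · exact (hasDerivAt_Wf K hu0 hu1).comp s ((hasDerivAt_id s).const_add c)
          · simpa using (hasDerivAt_id s).mul_const (1/((c+t)*(1-(c+t))))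
        rw [d.deriv]
        have hms : (0:ℝ) < (c+s)*(1-(c+s)) := by nlinarith [hs.1, hs.2]
        have hle : (c+s)*(1-(c+s)) ≤ (c+t)*(1-(c+t)) := by nlinarith [hs.1, hs.2]
        have := one_div_le_one_div_of_le hms hle
        rw [mul_one]
        linarith
    intro s hs
    have h00 : (0:ℝ) ∈ Set.Icc (0:ℝ) t := ⟨le_refl _, le_of_lt h0⟩
    have := hmono h00 hs hs.1
    have hδ0 : δ₃ 0 = 0 := by
      simp only [hδ₃, zero_mul, add_zero, sub_zero]
      exact Wf_inv hK
    linarith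
  set δ₂ : ℝ → ℝ := fun s => Qf K (c+s) - s^2 * (1/(2*((c+t)*(1-(c+t))))) with hδ₂
  have hmono2 : MonotoneOn δ₂ (Set.Icc 0 t) := by
    apply monotoneOn_of_deriv_nonneg (convex_Icc _ _)
    · apply ContinuousOn.sub
      · exact ((contQ K).comp (continuous_const.add continuous_id)).continuousOn
      · fun_prop
    · rw [interior_Icc]
      intro s hs
      have hu0 : (0:ℝ) < c + s := by linarith [hs.1]
      have hu1 : c + s < 1 := by nlinarith [hs.2]
      have d : HasDerivAt δ₂ (Wf K (c+s) * 1 - (2*s^1) * (1/(2*((c+t)*(1-(c+t)))))) s := by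
        apply HasDerivAt.sub
        · exact (hasDerivAt_Qf K hu0 hu1).comp s ((hasDerivAt_id s).const_add c)
        · exact (hasDerivAt_pow 2 s).mul_const _
      exact d.differentiableAt.differentiableWithinAt
    · rw [interior_Icc]
      intro s hs
      have hu0 : (0:ℝ) < c + s := by linarith [hs.1]
      have hu1 : c + s < 1 := by nlinarith [hs.2]
      have d : HasDerivAt δ₂ (Wf K (c+s) * 1 - (2*s^1) * (1/(2*((c+t)*(1-(c+t)))))) s := by
        apply HasDerivAt.sub
        · exact (hasDerivAt_Qf K hu0 hu1).comp s ((hasDerivAt_id s).const_add c)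
        · exact (hasDerivAt_pow 2 s).mul_const _
      rw [d.deriv]
      have := key1 s ⟨le_of_lt hs.1, le_of_lt hs.2⟩
      have heq : (2*s^1) * (1/(2*((c+t)*(1-(c+t))))) = s * (1/((c+t)*(1-(c+t)))) := by
        rw [pow_one]
        field_simp
      rw [heq, mul_one]
      simpa [hδ₃] using this
  have h00 : (0:ℝ) ∈ Set.Icc (0:ℝ) t := ⟨le_refl _, le_of_lt h0⟩
  have := hmono2 h00 ⟨le_of_lt h0, le_refl t⟩ (le_of_lt h0)
  have hδ0 : δ₂ 0 = 0 := by
    simp only [hδ₂, add_zero]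
    rw [Qf_inv hK]
    ring
  have hfin : 0 ≤ δ₂ t := by linarith
  simp only [hδ₂] at hfin
  linarith

lemma tendsto_hf : Tendsto (hf K) (𝓝[>] (0:ℝ)) (𝓝 (2*K⁻¹*(1-K⁻¹))) := by
  have hc := hc0 hK
  have hc3' := hc3 hK
  have hhalf : (0:ℝ) < 1/2 - K⁻¹ := by linarith
  have hmem : Set.Ioo (0:ℝ) (1/2 - K⁻¹) ∈ 𝓝[>] (0:ℝ) :=
    Ioo_mem_nhdsGT_of_mem ⟨le_refl _, hhalf⟩
  have hbound : ∀ t ∈ Set.Ioo (0:ℝ) (1/2 - K⁻¹),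
      2*K⁻¹*(1-K⁻¹) ≤ hf K t ∧ hf K t ≤ 2*((K⁻¹+t)*(1-(K⁻¹+t))) := by
    intro t ht
    have ht0 := ht.1
    have hK0 : K ≠ 0 := by positivity
    have hKm1 : K - 1 ≠ 0 := by nlinarith
    have ht2 : t ≤ 1 - 2*K⁻¹ := by linarith [ht.2]
    have hQpos : 0 < Qf K (K⁻¹ + t) :=
      Qf_pos hK (by linarith) (by nlinarith [ht.2])
    have hD : (0:ℝ) < 2*K⁻¹*(1-K⁻¹) := by nlinarith
    have hMT : (0:ℝ) < (K⁻¹+t)*(1-(K⁻¹+t)) := by nlinarith [ht.2]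
    constructor
    · have hup := Qf_upper hK (le_of_lt ht0) ht2
      unfold hf
      rw [le_div_iff₀ hQpos]
      have hid : 2*K⁻¹*(1-K⁻¹) * (t^2/(2*K⁻¹*(1-K⁻¹))) = t^2 := by
        field_simp
      nlinarith [mul_le_mul_of_nonneg_left hup (le_of_lt hD)]
    · have hlo := Qf_lower hK ht0 (le_of_lt ht.2)
      unfold hf
      rw [div_le_iff₀ hQpos]
      set M := (K⁻¹+t)*(1-(K⁻¹+t)) with hMdef
      have hMne : M ≠ 0 := ne_of_gt hMT
      have hid : 2*M * (t^2 * (1/(2*M))) = t^2 := by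
        field_simp
      nlinarith [mul_le_mul_of_nonneg_left hlo (by positivity : (0:ℝ) ≤ 2*M)]
  apply tendsto_of_tendsto_of_tendsto_of_le_of_le'
    (tendsto_const_nhds : Tendsto (fun _ : ℝ => 2*K⁻¹*(1-K⁻¹)) _ _)
  · have hcont : Continuous (fun t : ℝ => 2*((K⁻¹+t)*(1-(K⁻¹+t)))) := by fun_prop
    have := (hcont.tendsto 0).mono_left (nhdsWithin_le_nhds (s := Set.Ioi (0:ℝ)))
    convert this using 2
    ring
  · filter_upwards [hmem] with t ht
    exact (hbound t ht).1
  · filter_upwards [hmem] with t ht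
    exact (hbound t ht).2

lemma chord {s t : ℝ} (hs : 0 < s) (hst : s < t) (ht : t ≤ 1 - K⁻¹) :
    s/t * hf K t + (1 - s/t) * (2*K⁻¹*(1-K⁻¹)) ≤ hf K s := by
  have htpos : 0 < t := lt_trans hs hst
  have hconc := concave_hf hK
  set φ : ℝ → ℝ := fun ε => (t-s)/(t-ε) * hf K ε + (s-ε)/(t-ε) * hf K t with hφ
  have hev : ∀ᶠ ε in 𝓝[>] (0:ℝ), φ ε ≤ hf K s := by
    have hmem : Set.Ioo (0:ℝ) s ∈ 𝓝[>] (0:ℝ) := Ioo_mem_nhdsGT_of_mem ⟨le_refl _, hs⟩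
    filter_upwards [hmem] with ε hε
    have hεt : ε < t := lt_trans hε.2 hst
    have htε : (0:ℝ) < t - ε := by linarith
    have ha : (0:ℝ) ≤ (t-s)/(t-ε) := div_nonneg (by linarith) (le_of_lt htε)
    have hb : (0:ℝ) ≤ (s-ε)/(t-ε) := by
      apply div_nonneg _ (le_of_lt htε)
      linarith [hε.2]
    have hab : (t-s)/(t-ε) + (s-ε)/(t-ε) = 1 := by
      field_simp
      ring
    have hmemε : ε ∈ Set.Ioc (0:ℝ) (1 - K⁻¹) := ⟨hε.1, by linarith⟩
    have hmemt : t ∈ Set.Ioc (0:ℝ) (1 - K⁻¹) := ⟨htpos, ht⟩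
    have := hconc.2 hmemε hmemt ha hb hab
    have harg : ((t-s)/(t-ε)) • ε + ((s-ε)/(t-ε)) • t = s := by
      simp only [smul_eq_mul]
      field_simp
      ring
    rw [harg] at this
    simpa only [hφ, smul_eq_mul] using this
  have hlim : Tendsto φ (𝓝[>] (0:ℝ)) (𝓝 ((t-s)/t * (2*K⁻¹*(1-K⁻¹)) + s/t * hf K t)) := by
    have h1 : Tendsto (fun ε : ℝ => (t-s)/(t-ε)) (𝓝[>] (0:ℝ)) (𝓝 ((t-s)/t)) := by
      have hco : ContinuousAt (fun ε : ℝ => (t-s)/(t-ε)) 0 := by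
        apply ContinuousAt.div continuousAt_const (by fun_prop)
        simpa using ne_of_gt htpos
      have := hco.tendsto.mono_left (nhdsWithin_le_nhds (s := Set.Ioi (0:ℝ)))
      simpa using this
    have h2 : Tendsto (fun ε : ℝ => (s-ε)/(t-ε) * hf K t) (𝓝[>] (0:ℝ)) (𝓝 (s/t * hf K t)) := by
      have hco : ContinuousAt (fun ε : ℝ => (s-ε)/(t-ε) * hf K t) 0 := by
        apply ContinuousAt.mul _ continuousAt_const
        apply ContinuousAt.div (by fun_prop) (by fun_prop)
        simpa using ne_of_gt htpos
      have := hco.tendsto.mono_left (nhdsWithin_le_nhds (s := Set.Ioi (0:ℝ)))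
      simpa using this
    exact (h1.mul (tendsto_hf hK)).add h2
  have := le_of_tendsto hlim hev
  have hrw : (t-s)/t = 1 - s/t := by field_simp
  rw [hrw] at this
  linarith

end Main
end Main6

section Main7

section Main
variable {K : ℝ} (hK : 3 ≤ K)
include hK

lemma af_pos : 0 < af K := by
  have hL : 0 < Real.log (K - 1) := Real.log_pos (by linarith)
  have h1 : (0:ℝ) < K - 1 := by linarith
  have h2 : (0:ℝ) < K * (K - 2) := by nlinarith
  unfold af
  positivity

lemma hf_t2_eq : hf K (1 - 2*K⁻¹) = (1 - 2*K⁻¹) / Real.log (K - 1) := by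
  have hL : 0 < Real.log (K - 1) := Real.log_pos (by linarith)
  have ht2 : (0:ℝ) < 1 - 2*K⁻¹ := by linarith [hc3 hK]
  unfold hf
  have harg : K⁻¹ + (1 - 2*K⁻¹) = 1 - K⁻¹ := by ring
  rw [harg, Qf_sub hK]
  rw [pow_two]
  rw [mul_div_mul_left _ _ (ne_of_gt ht2)]

lemma af_id : af K * hf K (1 - 2*K⁻¹) = 2*K⁻¹*(1-K⁻¹) := by
  have hL : 0 < Real.log (K - 1) := Real.log_pos (by linarith)
  have hK0 : K ≠ 0 := by positivity
  have hK2 : K - 2 ≠ 0 := by linarith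
  rw [hf_t2_eq hK]
  unfold af
  field_simp

lemma chord_cons {s t : ℝ} (hs : 0 < s) (hst : s < t) (ht : t ≤ 1 - K⁻¹) :
    (s/t + (1 - s/t) * af K) * hf K t ≤ hf K s := by
  have h1 := chord hK hs hst ht
  have htpos : 0 < t := lt_trans hs hst
  have hmax := hf_le_max hK ⟨htpos, ht⟩
  have haf := af_pos hK
  have h2 : af K * hf K t ≤ 2*K⁻¹*(1-K⁻¹) := by
    rw [← af_id hK]
    exact mul_le_mul_of_nonneg_left hmax (le_of_lt haf)
  have hc1 : s/t ≤ 1 := by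
    rw [div_le_one htpos]; linarith
  have hcoef : (0:ℝ) ≤ 1 - s/t := by linarith
  have h3 : (1 - s/t)*(af K * hf K t) ≤ (1 - s/t)*(2*K⁻¹*(1-K⁻¹)) :=
    mul_le_mul_of_nonneg_left h2 hcoef
  nlinarith [h3, h1]

lemma main_ineq {x lam : ℝ} (hx1 : K⁻¹ < x) (hx2 : x ≤ 1) (hl0 : 0 ≤ lam) (hl1 : lam ≤ 1) :
    Qf K (lam*x + (1-lam)*K⁻¹) ≤ lam^2/((1-lam)*af K + lam) * Qf K x := by
  have haf := af_pos hK
  rcases eq_or_lt_of_le hl0 with h0 | hlpos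
  · have harg : lam*x + (1-lam)*K⁻¹ = K⁻¹ := by rw [← h0]; ring
    rw [harg, Qf_inv hK, ← h0]
    norm_num
  rcases eq_or_lt_of_le hl1 with h1 | hllt
  · subst h1
    have harg : (1:ℝ)*x + (1-1)*K⁻¹ = x := by ring
    rw [harg]
    norm_num
  · set t := x - K⁻¹ with htd
    set s := lam * t with hsd
    have ht0 : 0 < t := by simp only [htd]; linarith
    have ht1 : t ≤ 1 - K⁻¹ := by simp only [htd]; linarith
    have hs0 : 0 < s := mul_pos hlpos ht0
    have hstlt : s < t := by
      simp only [hsd]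
      nlinarith
    have hcc := chord_cons hK hs0 hstlt ht1
    have hst' : s/t = lam := by
      simp only [hsd]
      field_simp
    rw [hst'] at hcc
    have hxarg : K⁻¹ + t = x := by simp only [htd]; ring
    have hvarg : K⁻¹ + s = lam*x + (1-lam)*K⁻¹ := by simp only [hsd, htd]; ring
    unfold hf at hcc
    rw [hxarg, hvarg] at hcc
    set Qx := Qf K x with hQxd
    set Qv := Qf K (lam*x + (1-lam)*K⁻¹) with hQvd
    have hQx : 0 < Qx := Qf_pos hK hx1 hx2
    have hQv : 0 < Qv := by
      apply Qf_pos hK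
      · rw [← hvarg]; linarith
      · rw [← hvarg]
        have h7 : s < 1 - K⁻¹ := lt_of_lt_of_le hstlt ht1
        linarith
    set D := (1-lam) * af K + lam with hDd
    have hDc : lam + (1-lam) * af K = D := by rw [hDd]; ring
    rw [hDc] at hcc
    have hD : 0 < D := by
      have : 0 ≤ (1-lam) * af K := mul_nonneg (by linarith) (le_of_lt haf)
      simp only [hDd]; linarith
    have hcc2 : (D * t^2) / Qx ≤ s^2 / Qv := by
      have : D * (t^2/Qx) = (D*t^2)/Qx := by ring
      rw [← this]
      exact hcc
    rw [div_le_div_iff₀ hQx hQv] at hcc2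
    have hs2 : s^2 = lam^2 * t^2 := by simp only [hsd]; ring
    rw [div_mul_eq_mul_div, le_div_iff₀ hD]
    have h6 : (Qv * D) * t^2 ≤ (lam^2 * Qx) * t^2 := by nlinarith [hcc2]
    exact le_of_mul_le_mul_right h6 (by positivity)

end Main
end Main7

end PottsAux

open PottsAux in
/-- Upper bound on the input-restricted KL contraction coefficient of ferromagnetic
Potts channels: for `λ ∈ [0,1]` and `x ∈ (1/k,1]`,
`ψ(λx+(1−λ)/k) ≤ (λ²/((1−λ)·2(k−1)log(k−1)/(k(k−2)) + λ))·ψ(x)`, and hence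
`η_KL(PC_λ, π) ≤ λ²/((1−λ)·2(k−1)log(k−1)/(k(k−2)) + λ)`. -/
theorem potts_eta_upper_ferro (k : ℕ) (hk : 3 ≤ k)
    (lam : ℝ) (hlam : lam ∈ Set.Icc (0 : ℝ) 1) :
    (∀ x ∈ Set.Ioc (1 / (k : ℝ)) 1,
      psi k (lam * x + (1 - lam) / (k : ℝ))
        ≤ lam ^ 2 / ((1 - lam) * (2 * ((k : ℝ) - 1) * Real.log ((k : ℝ) - 1)
            / ((k : ℝ) * ((k : ℝ) - 2))) + lam) * psi k x) ∧
    sSup {r : ℝ | ∃ x ∈ Set.Ioc (1 / (k : ℝ)) 1,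
        r = psi k (lam * x + (1 - lam) / (k : ℝ)) / psi k x}
      ≤ lam ^ 2 / ((1 - lam) * (2 * ((k : ℝ) - 1) * Real.log ((k : ℝ) - 1)
          / ((k : ℝ) * ((k : ℝ) - 2))) + lam) := by
  have hK : (3:ℝ) ≤ (k:ℝ) := by exact_mod_cast hk
  obtain ⟨hl0, hl1⟩ := hlam
  have hcoefeq : lam ^ 2 / ((1 - lam) * (2 * ((k : ℝ) - 1) * Real.log ((k : ℝ) - 1)
      / ((k : ℝ) * ((k : ℝ) - 2))) + lam) = lam^2 / ((1-lam) * af (k:ℝ) + lam) := rfl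
  have hmain : ∀ x ∈ Set.Ioc (1 / (k : ℝ)) 1,
      psi k (lam * x + (1 - lam) / (k : ℝ))
        ≤ lam ^ 2 / ((1 - lam) * (2 * ((k : ℝ) - 1) * Real.log ((k : ℝ) - 1)
            / ((k : ℝ) * ((k : ℝ) - 2))) + lam) * psi k x := by
    intro x hx
    have hx1 : ((k:ℝ))⁻¹ < x := by
      have := hx.1; rwa [one_div] at this
    have hx2 : x ≤ 1 := hx.2
    have hdiv : (1 - lam) / (k:ℝ) = (1-lam) * ((k:ℝ))⁻¹ := by rw [div_eq_mul_inv]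
    have hv1 : lam * x + (1 - lam) * ((k:ℝ))⁻¹ ≤ 1 := by
      have h1 : lam * x ≤ lam := by nlinarith
      have h2 : (1-lam) * ((k:ℝ))⁻¹ ≤ (1-lam) := by
        have := hc3 hK
        nlinarith
      linarith
    rw [hdiv, psi_eq_Qf hk hv1, psi_eq_Qf hk hx2, hcoefeq]
    exact main_ineq hK hx1 hx2 hl0 hl1
  constructor
  · exact hmain
  · apply Real.sSup_le
    · rintro r ⟨x, hx, rfl⟩
      have hx1 : ((k:ℝ))⁻¹ < x := by
        have := hx.1; rwa [one_div] at this
      have hQx : 0 < psi k x := by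
        rw [psi_eq_Qf hk hx.2]
        exact Qf_pos hK hx1 hx.2
      rw [div_le_iff₀ hQx]
      exact hmain x hx
    · rw [hcoefeq]
      apply div_nonneg (sq_nonneg _)
      have := af_pos hK
      nlinarith
end

section
/- Let k ≥ 2 be an integer. Define g : [0,1] → ℝ by g(x) = (kx−1)²/ψ(x) for x ≠ 1/k, and g(1/k) = 2(k−1) (the limiting value, making g continuous). Then g is concave on [0,1]. -/
open scoped BigOperators
open MeasureTheory intervalIntegral Set

noncomputable def Lfn (k : ℕ) (x t : ℝ) : ℝ := (1 - t) / (k : ℝ) + t * x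

noncomputable def itg (k : ℕ) (x t : ℝ) : ℝ :=
  (1 - t) * ((Lfn k x t)⁻¹ + (1 - Lfn k x t)⁻¹)

noncomputable def Phi (k : ℕ) (x : ℝ) : ℝ := ∫ t in (0:ℝ)..1, itg k x t

section basic
variable {k : ℕ} {x t : ℝ}

lemma k_pos (hk : 2 ≤ k) : (0:ℝ) < k := by
  have : (2:ℝ) ≤ k := by exact_mod_cast hk
  linarith

lemma k_sub_one_pos (hk : 2 ≤ k) : (0:ℝ) < (k:ℝ) - 1 := by
  have : (2:ℝ) ≤ k := by exact_mod_cast hk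
  linarith

lemma L_lower (hk : 2 ≤ k) (hx : x ∈ Icc (0:ℝ) 1) (ht : t ∈ Icc (0:ℝ) 1) :
    (1 - t) / (k:ℝ) ≤ Lfn k x t := by
  have := hx.1; have := ht.1
  have : 0 ≤ t * x := mul_nonneg ht.1 hx.1
  unfold Lfn; linarith

lemma L_upper (hk : 2 ≤ k) (hx : x ∈ Icc (0:ℝ) 1) (ht : t ∈ Icc (0:ℝ) 1) :
    (1 - t) * (1 - 1/(k:ℝ)) ≤ 1 - Lfn k x t := by
  have h1 : t * x ≤ t * 1 := mul_le_mul_of_nonneg_left hx.2 ht.1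
  unfold Lfn
  have : (1 - t) / (k:ℝ) = (1-t) * (1/(k:ℝ)) := by ring
  nlinarith

lemma L_pos (hk : 2 ≤ k) (hx : x ∈ Icc (0:ℝ) 1) (ht : t ∈ Icc (0:ℝ) 1) (ht1 : t ≠ 1) :
    0 < Lfn k x t := by
  have h := L_lower hk hx ht
  have hkp := k_pos hk
  have h1 : 0 < 1 - t := lt_of_le_of_ne (by linarith [ht.2]) (by intro h; exact ht1 (by linarith))
  calc (0:ℝ) < (1 - t)/(k:ℝ) := by positivity
    _ ≤ _ := h

lemma L_lt_one (hk : 2 ≤ k) (hx : x ∈ Icc (0:ℝ) 1) (ht : t ∈ Icc (0:ℝ) 1) (ht1 : t ≠ 1) :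
    Lfn k x t < 1 := by
  have h := L_upper hk hx ht
  have hkp := k_pos hk
  have hk1 : (1:ℝ) ≤ (k:ℝ) - 1 := by
    have : (2:ℝ) ≤ k := by exact_mod_cast hk
    linarith
  have h1 : 0 < 1 - t := lt_of_le_of_ne (by linarith [ht.2]) (by intro h; exact ht1 (by linarith))
  have h2 : 0 < 1 - 1/(k:ℝ) := by
    rw [sub_pos, div_lt_one hkp]; linarith
  nlinarith

lemma L_nonneg (hk : 2 ≤ k) (hx : x ∈ Icc (0:ℝ) 1) (ht : t ∈ Icc (0:ℝ) 1) :
    0 ≤ Lfn k x t := by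
  have := L_lower hk hx ht
  have hkp := k_pos hk
  have h1 : 0 ≤ 1 - t := by linarith [ht.2]
  calc (0:ℝ) ≤ (1 - t)/(k:ℝ) := by positivity
    _ ≤ _ := this

lemma L_le_one (hk : 2 ≤ k) (hx : x ∈ Icc (0:ℝ) 1) (ht : t ∈ Icc (0:ℝ) 1) :
    Lfn k x t ≤ 1 := by
  have h := L_upper hk hx ht
  have hkp := k_pos hk
  have h1 : 0 ≤ 1 - t := by linarith [ht.2]
  have h2 : 0 ≤ 1 - 1/(k:ℝ) := by
    rw [sub_nonneg, div_le_one hkp]; linarith [k_sub_one_pos hk]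
  nlinarith

lemma itg_nonneg (hk : 2 ≤ k) (hx : x ∈ Icc (0:ℝ) 1) (ht : t ∈ Icc (0:ℝ) 1) :
    0 ≤ itg k x t := by
  have h1 : 0 ≤ 1 - t := by linarith [ht.2]
  have h2 := L_nonneg hk hx ht
  have h3 := L_le_one hk hx ht
  have : 0 ≤ 1 - Lfn k x t := by linarith
  unfold itg; positivity

lemma itg_le (hk : 2 ≤ k) (hx : x ∈ Icc (0:ℝ) 1) (ht : t ∈ Icc (0:ℝ) 1) :
    itg k x t ≤ (k:ℝ) + 2 := by
  have hkp := k_pos hk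
  by_cases ht1 : t = 1
  · subst ht1; unfold itg; simp; linarith
  · have hL := L_pos hk hx ht ht1
    have hL1 : 0 < 1 - Lfn k x t := by linarith [L_lt_one hk hx ht ht1]
    have h1 : 0 < 1 - t := lt_of_le_of_ne (by linarith [ht.2]) (by intro h; exact ht1 (by linarith))
    have e1 : (1 - t) * (Lfn k x t)⁻¹ ≤ (k:ℝ) := by
      rw [mul_inv_le_iff₀' hL]
      have := L_lower hk hx ht
      calc (1:ℝ) - t = (k:ℝ) * ((1-t)/(k:ℝ)) := by field_simp
        _ ≤ (k:ℝ) * Lfn k x t := by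
            apply mul_le_mul_of_nonneg_left this (le_of_lt hkp)
        _ = Lfn k x t * (k:ℝ) := by ring
    have e2 : (1 - t) * (1 - Lfn k x t)⁻¹ ≤ 2 := by
      rw [mul_inv_le_iff₀' hL1]
      have h2 := L_upper hk hx ht
      have h3 : (1:ℝ)/2 ≤ 1 - 1/(k:ℝ) := by
        rw [le_sub_iff_add_le]
        have : 1/(k:ℝ) ≤ 1/2 := by
          apply div_le_div_of_nonneg_left (by norm_num) (by norm_num)
          exact_mod_cast hk
        linarith
      nlinarith
    calc itg k x t = (1 - t) * (Lfn k x t)⁻¹ + (1 - t) * (1 - Lfn k x t)⁻¹ := by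
          unfold itg; ring
      _ ≤ (k:ℝ) + 2 := by linarith

end basic

section integ
variable {k : ℕ} {x : ℝ}

lemma itg_measurable : Measurable (itg k x) := by
  unfold itg Lfn
  fun_prop

lemma itg_intervalIntegrable (hk : 2 ≤ k) (hx : x ∈ Icc (0:ℝ) 1) :
    IntervalIntegrable (itg k x) MeasureTheory.volume 0 1 := by
  rw [intervalIntegrable_iff_integrableOn_Ioc_of_le (by norm_num)]
  apply Measure.integrableOn_of_bounded (M := (k:ℝ) + 2)
  · rw [Real.volume_Ioc]; exact ENNReal.ofReal_ne_top
  · exact itg_measurable.aestronglyMeasurable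
  · rw [ae_restrict_iff' measurableSet_Ioc]
    filter_upwards with t ht
    have ht' : t ∈ Icc (0:ℝ) 1 := Ioc_subset_Icc_self ht
    rw [Real.norm_eq_abs, abs_le]
    constructor
    · linarith [itg_nonneg hk hx ht', k_pos hk]
    · exact itg_le hk hx ht'

lemma Phi_pos (hk : 2 ≤ k) (hx : x ∈ Icc (0:ℝ) 1) : 0 < Phi k x := by
  apply intervalIntegral_pos_of_pos_on (itg_intervalIntegrable hk hx) _ (by norm_num)
  intro t ht
  have ht' : t ∈ Icc (0:ℝ) 1 := Ioo_subset_Icc_self ht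
  have ht1 : t ≠ 1 := ne_of_lt ht.2
  have hL := L_pos hk hx ht' ht1
  have hL1 : 0 < 1 - Lfn k x t := by linarith [L_lt_one hk hx ht' ht1]
  have h1 : 0 < 1 - t := by linarith [ht.2]
  unfold itg
  positivity

end integ

section ftc
variable {k : ℕ} {x : ℝ}

lemma bdd_intervalIntegrable {f : ℝ → ℝ} (hm : Measurable f) (M : ℝ)
    (hb : ∀ t ∈ Ioc (0:ℝ) 1, ‖f t‖ ≤ M) : IntervalIntegrable f MeasureTheory.volume 0 1 := by
  rw [intervalIntegrable_iff_integrableOn_Ioc_of_le (by norm_num)]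
  apply Measure.integrableOn_of_bounded (M := M)
  · rw [Real.volume_Ioc]; exact ENNReal.ofReal_ne_top
  · exact hm.aestronglyMeasurable
  · rw [ae_restrict_iff' measurableSet_Ioc]
    filter_upwards with t ht
    exact hb t ht

lemma f1_intervalIntegrable (hk : 2 ≤ k) (hx : x ∈ Icc (0:ℝ) 1) :
    IntervalIntegrable (fun t => (1-t) * (Lfn k x t)⁻¹) MeasureTheory.volume 0 1 := by
  apply bdd_intervalIntegrable (by unfold Lfn; fun_prop) ((k:ℝ) + 2)
  intro t ht
  have ht' : t ∈ Icc (0:ℝ) 1 := Ioc_subset_Icc_self ht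
  have h0 := L_nonneg hk hx ht'
  have h1 : 0 ≤ 1 - t := by linarith [ht'.2]
  have hle := itg_le hk hx ht'
  have h2 : 0 ≤ 1 - Lfn k x t := by linarith [L_le_one hk hx ht']
  have hnn : 0 ≤ (1-t) * (Lfn k x t)⁻¹ := by positivity
  have hnn2 : 0 ≤ (1-t) * (1 - Lfn k x t)⁻¹ := by positivity
  rw [Real.norm_eq_abs, abs_of_nonneg hnn]
  have : itg k x t = (1-t) * (Lfn k x t)⁻¹ + (1-t) * (1 - Lfn k x t)⁻¹ := by unfold itg; ring
  linarith

lemma f2_intervalIntegrable (hk : 2 ≤ k) (hx : x ∈ Icc (0:ℝ) 1) :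
    IntervalIntegrable (fun t => (1-t) * (1 - Lfn k x t)⁻¹) MeasureTheory.volume 0 1 := by
  apply bdd_intervalIntegrable (by unfold Lfn; fun_prop) ((k:ℝ) + 2)
  intro t ht
  have ht' : t ∈ Icc (0:ℝ) 1 := Ioc_subset_Icc_self ht
  have h0 := L_nonneg hk hx ht'
  have h1 : 0 ≤ 1 - t := by linarith [ht'.2]
  have hle := itg_le hk hx ht'
  have h2 : 0 ≤ 1 - Lfn k x t := by linarith [L_le_one hk hx ht']
  have hnn : 0 ≤ (1-t) * (Lfn k x t)⁻¹ := by positivity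
  have hnn2 : 0 ≤ (1-t) * (1 - Lfn k x t)⁻¹ := by positivity
  rw [Real.norm_eq_abs, abs_of_nonneg hnn2]
  have : itg k x t = (1-t) * (Lfn k x t)⁻¹ + (1-t) * (1 - Lfn k x t)⁻¹ := by unfold itg; ring
  linarith

lemma I1_eq (hk : 2 ≤ k) (hx : x ∈ Icc (0:ℝ) 1) (hq : x ≠ 1/(k:ℝ)) :
    ∫ t in (0:ℝ)..1, (1-t) * (Lfn k x t)⁻¹
      = (x * Real.log x + x * Real.log k) / (x - 1/(k:ℝ))^2 - 1/(x - 1/(k:ℝ)) := by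
  have hkp := k_pos hk
  have hs : x - 1/(k:ℝ) ≠ 0 := sub_ne_zero.mpr hq
  by_cases hx0 : x = 0
  · subst hx0
    have hcong : ∫ t in (0:ℝ)..1, (1-t) * (Lfn k 0 t)⁻¹ = ∫ t in (0:ℝ)..1, (k:ℝ) := by
      apply intervalIntegral.integral_congr_ae
      rw [MeasureTheory.ae_iff]
      refine measure_mono_null ?_ (MeasureTheory.measure_singleton (1:ℝ))
      intro t ht
      simp only [Set.mem_setOf_eq, not_forall] at ht
      simp only [Set.mem_singleton_iff]
      by_contra hne
      obtain ⟨hmem, hval⟩ := ht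
      apply hval
      have : (1:ℝ) - t ≠ 0 := by
        intro h; exact hne (by linarith)
      unfold Lfn
      rw [mul_zero, add_zero]
      rw [div_eq_mul_inv, mul_inv, inv_inv]
      rw [← mul_assoc, mul_inv_cancel₀ this, one_mul]
    rw [hcong]
    simp
  · have hx0' : 0 < x := lt_of_le_of_ne hx.1 (Ne.symm hx0)
    set s := x - 1/(k:ℝ) with hs_def
    have hLpos : ∀ t ∈ Set.uIcc (0:ℝ) 1, 0 < Lfn k x t := by
      intro t ht
      rw [Set.uIcc_of_le (by norm_num : (0:ℝ) ≤ 1)] at ht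
      by_cases ht1 : t = 1
      · subst ht1; unfold Lfn; simpa using hx0'
      · exact L_pos hk hx ht ht1
    have hderiv : ∀ t ∈ Set.uIcc (0:ℝ) 1,
        HasDerivAt (fun t => (x/s^2) * Real.log (Lfn k x t) - t/s)
          ((1-t) * (Lfn k x t)⁻¹) t := by
      intro t ht
      have hL := hLpos t ht
      have hL' : HasDerivAt (fun t => Lfn k x t) s t := by
        unfold Lfn
        have h1 : HasDerivAt (fun t : ℝ => (1 - t)/(k:ℝ)) (-1/(k:ℝ)) t := by
          simpa using (((hasDerivAt_id t).const_sub 1).div_const (k:ℝ))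
        have h2 : HasDerivAt (fun t : ℝ => t * x) x t := by
          simpa using (hasDerivAt_id t).mul_const x
        have := h1.add h2
        exact this.congr_deriv (by rw [hs_def]; ring)
      have hlog := (hL'.log (ne_of_gt hL)).const_mul (x/s^2)
      have hid : HasDerivAt (fun t : ℝ => t/s) (1/s) t := by
        simpa using (hasDerivAt_id t).div_const s
      have := hlog.sub hid
      refine this.congr_deriv ?_
      have hLne := ne_of_gt hL
      field_simp
      unfold Lfn
      ring
    have := intervalIntegral.integral_eq_sub_of_hasDerivAt hderiv (f1_intervalIntegrable hk hx)
    rw [this]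
    have hL1 : Lfn k x 1 = x := by unfold Lfn; simp
    have hL0 : Lfn k x 0 = 1/(k:ℝ) := by unfold Lfn; simp
    rw [hL1, hL0]
    have hlogq : Real.log (1/(k:ℝ)) = -Real.log k := by rw [one_div, Real.log_inv]
    rw [hlogq]
    field_simp
    ring

end ftc

section ftc2
variable {k : ℕ} {x : ℝ}

lemma I2_eq (hk : 2 ≤ k) (hx : x ∈ Icc (0:ℝ) 1) (hq : x ≠ 1/(k:ℝ)) :
    ∫ t in (0:ℝ)..1, (1-t) * (1 - Lfn k x t)⁻¹
      = ((1-x) * Real.log (1-x) - (1-x) * Real.log (1 - 1/(k:ℝ))) / (x - 1/(k:ℝ))^2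
        + 1/(x - 1/(k:ℝ)) := by
  have hkp := k_pos hk
  have hk1 := k_sub_one_pos hk
  have hs : x - 1/(k:ℝ) ≠ 0 := sub_ne_zero.mpr hq
  have hqlt : (1:ℝ) - 1/(k:ℝ) > 0 := by
    rw [gt_iff_lt, sub_pos, div_lt_one hkp]; linarith
  by_cases hx1 : x = 1
  · subst hx1
    have hcong : ∫ t in (0:ℝ)..1, (1-t) * (1 - Lfn k 1 t)⁻¹
        = ∫ t in (0:ℝ)..1, (1 - 1/(k:ℝ))⁻¹ := by
      apply intervalIntegral.integral_congr_ae
      rw [MeasureTheory.ae_iff]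
      refine measure_mono_null ?_ (MeasureTheory.measure_singleton (1:ℝ))
      intro t ht
      simp only [Set.mem_setOf_eq, not_forall] at ht
      simp only [Set.mem_singleton_iff]
      by_contra hne
      obtain ⟨hmem, hval⟩ := ht
      apply hval
      have h1t : (1:ℝ) - t ≠ 0 := by
        intro h; exact hne (by linarith)
      have hLeq : 1 - Lfn k 1 t = (1-t) * (1 - 1/(k:ℝ)) := by
        unfold Lfn; ring
      rw [hLeq, mul_inv, ← mul_assoc, mul_inv_cancel₀ h1t, one_mul]
    rw [hcong]
    simp
  · have hx1' : x < 1 := lt_of_le_of_ne hx.2 hx1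
    set s := x - 1/(k:ℝ) with hs_def
    have hLpos : ∀ t ∈ Set.uIcc (0:ℝ) 1, 0 < 1 - Lfn k x t := by
      intro t ht
      rw [Set.uIcc_of_le (by norm_num : (0:ℝ) ≤ 1)] at ht
      by_cases ht1 : t = 1
      · subst ht1
        have : Lfn k x 1 = x := by unfold Lfn; simp
        rw [this]; linarith
      · linarith [L_lt_one hk hx ht ht1]
    have hderiv : ∀ t ∈ Set.uIcc (0:ℝ) 1,
        HasDerivAt (fun t => ((1-x)/s^2) * Real.log (1 - Lfn k x t) + t/s)
          ((1-t) * (1 - Lfn k x t)⁻¹) t := by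
      intro t ht
      have hL := hLpos t ht
      have hL' : HasDerivAt (fun t => 1 - Lfn k x t) (-s) t := by
        unfold Lfn
        have h1 : HasDerivAt (fun t : ℝ => (1 - t)/(k:ℝ)) (-1/(k:ℝ)) t := by
          simpa using (((hasDerivAt_id t).const_sub 1).div_const (k:ℝ))
        have h2 : HasDerivAt (fun t : ℝ => t * x) x t := by
          simpa using (hasDerivAt_id t).mul_const x
        have := (h1.add h2).const_sub 1
        exact this.congr_deriv (by rw [hs_def]; ring)
      have hlog := (hL'.log (ne_of_gt hL)).const_mul ((1-x)/s^2)
      have hid : HasDerivAt (fun t : ℝ => t/s) (1/s) t := by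
        simpa using (hasDerivAt_id t).div_const s
      have := hlog.add hid
      refine this.congr_deriv ?_
      have hLne := ne_of_gt hL
      field_simp
      unfold Lfn
      ring
    have := intervalIntegral.integral_eq_sub_of_hasDerivAt hderiv (f2_intervalIntegrable hk hx)
    rw [this]
    have hL1 : 1 - Lfn k x 1 = 1 - x := by unfold Lfn; simp
    have hL0 : 1 - Lfn k x 0 = 1 - 1/(k:ℝ) := by unfold Lfn; simp
    rw [hL1, hL0]
    field_simp
    ring

end ftc2

section closed
variable {k : ℕ} {x : ℝ}

lemma Phi_mul (hk : 2 ≤ k) (hx : x ∈ Icc (0:ℝ) 1) (hq : x ≠ 1/(k:ℝ)) :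
    Phi k x * (x - 1/(k:ℝ))^2 = psi k x := by
  have hkp := k_pos hk
  have hk1 := k_sub_one_pos hk
  have hk0 : (k:ℝ) ≠ 0 := ne_of_gt hkp
  have hk1' : (k:ℝ) - 1 ≠ 0 := ne_of_gt hk1
  have hs : x - 1/(k:ℝ) ≠ 0 := sub_ne_zero.mpr hq
  have hxk : x * (k:ℝ) - 1 ≠ 0 := by
    intro h
    apply hs
    field_simp
    linarith
  have hsplit : Phi k x = (∫ t in (0:ℝ)..1, (1-t) * (Lfn k x t)⁻¹)
      + ∫ t in (0:ℝ)..1, (1-t) * (1 - Lfn k x t)⁻¹ := by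
    unfold Phi
    rw [← intervalIntegral.integral_add (f1_intervalIntegrable hk hx) (f2_intervalIntegrable hk hx)]
    apply intervalIntegral.integral_congr
    intro t _
    unfold itg
    ring
  rw [hsplit, I1_eq hk hx hq, I2_eq hk hx hq]
  have hlog1 : Real.log (1 - 1/(k:ℝ)) = Real.log ((k:ℝ) - 1) - Real.log k := by
    have : (1:ℝ) - 1/(k:ℝ) = ((k:ℝ) - 1)/(k:ℝ) := by field_simp
    rw [this, Real.log_div (ne_of_gt hk1) (ne_of_gt hkp)]
  rw [hlog1]
  unfold psi
  by_cases hx1 : x = 1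
  · subst hx1
    simp
    field_simp
  · have hx1' : (1:ℝ) - x ≠ 0 := by
      intro h
      exact hx1 (by linarith)
    rw [Real.log_div hx1' (ne_of_gt hk1)]
    field_simp
    ring

lemma Phi_at_q (hk : 2 ≤ k) :
    Phi k (1/(k:ℝ)) = (k:ℝ)^2 / (2 * ((k:ℝ) - 1)) := by
  have hkp := k_pos hk
  have hk1 := k_sub_one_pos hk
  have hk0 : (k:ℝ) ≠ 0 := ne_of_gt hkp
  have hk1' : (k:ℝ) - 1 ≠ 0 := ne_of_gt hk1
  have hL : ∀ t : ℝ, Lfn k (1/(k:ℝ)) t = 1/(k:ℝ) := by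
    intro t; unfold Lfn; field_simp; ring
  have heq : Phi k (1/(k:ℝ))
      = ∫ t in (0:ℝ)..1, (1-t) * ((1/(k:ℝ))⁻¹ + (1 - 1/(k:ℝ))⁻¹) := by
    unfold Phi itg
    apply intervalIntegral.integral_congr
    intro t _
    simp only [hL]
  rw [heq]
  rw [intervalIntegral.integral_mul_const]
  have h1 : ∫ t in (0:ℝ)..1, (1 - t) = 1/2 := by
    rw [intervalIntegral.integral_sub intervalIntegrable_const intervalIntegral.intervalIntegrable_id]
    simp
    norm_num
  rw [h1]
  have h2 : (1:ℝ) - 1/(k:ℝ) = ((k:ℝ)-1)/(k:ℝ) := by field_simp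
  rw [h2]
  field_simp
  ring

end closed

section conc
variable {k : ℕ}

lemma scalar_ineq {p q τ : ℝ} (hp : 0 < p) (hq : 0 < q) :
    (p + q)⁻¹ ≤ τ^2 / p + (1-τ)^2 / q := by
  rw [div_add_div _ _ (ne_of_gt hp) (ne_of_gt hq)]
  rw [inv_le_iff_one_le_mul₀ (by positivity)]
  rw [div_mul_eq_mul_div, le_div_iff₀ (by positivity)]
  nlinarith [sq_nonneg (τ * q - (1-τ) * p)]

lemma inv_sum_eq {L : ℝ} (h0 : 0 < L) (h1 : L < 1) :
    L⁻¹ + (1 - L)⁻¹ = (L * (1-L))⁻¹ := by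
  have h1' : (0:ℝ) < 1 - L := by linarith
  field_simp
  ring

lemma alg1 {p q c d A B u : ℝ} (hA : A ≠ 0) (hB : B ≠ 0) (hc : c ≠ 0) (hd : d ≠ 0) :
    u * (p/(c*A) + q/(d*B)) = (p/c) * (u * A⁻¹) + (q/d) * (u * B⁻¹) := by
  field_simp

lemma itg_pointwise (hk : 2 ≤ k) {x y a b τ t : ℝ}
    (hx : x ∈ Icc (0:ℝ) 1) (hy : y ∈ Icc (0:ℝ) 1)
    (ha : 0 < a) (hb : 0 < b) (hab : a + b = 1) (ht : t ∈ Icc (0:ℝ) 1) :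
    itg k (a*x+b*y) t ≤ (τ^2/a) * itg k x t + ((1-τ)^2/b) * itg k y t := by
  have hz : a*x+b*y ∈ Icc (0:ℝ) 1 := by
    constructor
    · nlinarith [hx.1, hy.1]
    · nlinarith [hx.2, hy.2]
  by_cases ht1 : t = 1
  · subst ht1
    unfold itg
    norm_num
  · have h1t : 0 < 1 - t := lt_of_le_of_ne (by linarith [ht.2]) (by intro h; exact ht1 (by linarith))
    have hLx0 := L_pos hk hx ht ht1
    have hLx1 := L_lt_one hk hx ht ht1
    have hLy0 := L_pos hk hy ht ht1
    have hLy1 := L_lt_one hk hy ht ht1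
    have hLz0 := L_pos hk hz ht ht1
    have hLz1 := L_lt_one hk hz ht ht1
    have hb' : b = 1 - a := by linarith
    subst hb'
    have hLzc : Lfn k (a*x+(1-a)*y) t = a * Lfn k x t + (1-a) * Lfn k y t := by
      unfold Lfn
      ring
    set Lx := Lfn k x t
    set Ly := Lfn k y t
    set Lz := Lfn k (a*x+(1-a)*y) t
    have hux : 0 < Lx * (1 - Lx) := by nlinarith
    have huy : 0 < Ly * (1 - Ly) := by nlinarith
    have huz : 0 < Lz * (1 - Lz) := by nlinarith
    have hcomb : a * (Lx * (1-Lx)) + (1-a) * (Ly * (1-Ly)) ≤ Lz * (1 - Lz) := by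
      rw [hLzc]
      nlinarith [mul_nonneg (mul_pos ha hb).le (sq_nonneg (Lx - Ly))]
    have hpx : 0 < a * (Lx * (1-Lx)) := mul_pos ha hux
    have hpy : 0 < (1-a) * (Ly * (1-Ly)) := mul_pos hb huy
    have hstep1 : (Lz * (1-Lz))⁻¹ ≤ (a * (Lx * (1-Lx)) + (1-a) * (Ly * (1-Ly)))⁻¹ :=
      inv_anti₀ (by linarith) hcomb
    have hstep2 : (a * (Lx * (1-Lx)) + (1-a) * (Ly * (1-Ly)))⁻¹
        ≤ τ^2 / (a * (Lx * (1-Lx))) + (1-τ)^2 / ((1-a) * (Ly * (1-Ly))) :=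
      scalar_ineq hpx hpy
    have hchain := le_trans hstep1 hstep2
    have hmul := mul_le_mul_of_nonneg_left hchain (le_of_lt h1t)
    calc itg k (a*x+(1-a)*y) t = (1-t) * (Lz * (1-Lz))⁻¹ := by
          unfold itg
          rw [inv_sum_eq hLz0 hLz1]
      _ ≤ (1-t) * (τ^2 / (a * (Lx * (1-Lx))) + (1-τ)^2 / ((1-a) * (Ly * (1-Ly)))) := hmul
      _ = (τ^2/a) * ((1-t) * (Lx * (1-Lx))⁻¹) + ((1-τ)^2/(1-a)) * ((1-t) * (Ly * (1-Ly))⁻¹) :=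
          alg1 (ne_of_gt hux) (ne_of_gt huy) (ne_of_gt ha) (ne_of_gt hb)
      _ = (τ^2/a) * itg k x t + ((1-τ)^2/(1-a)) * itg k y t := by
          unfold itg
          rw [inv_sum_eq hLx0 hLx1, inv_sum_eq hLy0 hLy1]

lemma Phi_le (hk : 2 ≤ k) {x y a b τ : ℝ}
    (hx : x ∈ Icc (0:ℝ) 1) (hy : y ∈ Icc (0:ℝ) 1)
    (ha : 0 < a) (hb : 0 < b) (hab : a + b = 1) :
    Phi k (a*x+b*y) ≤ (τ^2/a) * Phi k x + ((1-τ)^2/b) * Phi k y := by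
  have hz : a*x+b*y ∈ Icc (0:ℝ) 1 := by
    constructor
    · nlinarith [hx.1, hy.1]
    · nlinarith [hx.2, hy.2]
  unfold Phi
  have hInt : IntervalIntegrable
      (fun t => (τ^2/a) * itg k x t + ((1-τ)^2/b) * itg k y t) MeasureTheory.volume 0 1 :=
    ((itg_intervalIntegrable hk hx).const_mul _).add ((itg_intervalIntegrable hk hy).const_mul _)
  have hmono := intervalIntegral.integral_mono_on (by norm_num : (0:ℝ) ≤ 1)
    (itg_intervalIntegrable hk hz) hInt
    (fun t ht => itg_pointwise hk hx hy ha hb hab ht)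
  rw [intervalIntegral.integral_add ((itg_intervalIntegrable hk hx).const_mul _)
    ((itg_intervalIntegrable hk hy).const_mul _),
    intervalIntegral.integral_const_mul, intervalIntegral.integral_const_mul] at hmono
  exact hmono

end conc

section main
variable {k : ℕ}

lemma key_ineq (hk : 2 ≤ k) {x y a b : ℝ}
    (hx : x ∈ Icc (0:ℝ) 1) (hy : y ∈ Icc (0:ℝ) 1)
    (ha : 0 ≤ a) (hb : 0 ≤ b) (hab : a + b = 1) :
    a * ((k:ℝ)^2 * (Phi k x)⁻¹) + b * ((k:ℝ)^2 * (Phi k y)⁻¹)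
      ≤ (k:ℝ)^2 * (Phi k (a*x+b*y))⁻¹ := by
  have hA := Phi_pos hk hx
  have hB := Phi_pos hk hy
  rcases eq_or_lt_of_le ha with ha0 | ha'
  · have hb1 : b = 1 := by linarith
    rw [← ha0, hb1]
    norm_num
  rcases eq_or_lt_of_le hb with hb0 | hb'
  · have ha1 : a = 1 := by linarith
    rw [← hb0, ha1]
    norm_num
  have hz : a*x+b*y ∈ Icc (0:ℝ) 1 := by
    constructor
    · nlinarith [hx.1, hy.1]
    · nlinarith [hx.2, hy.2]
  have hZ := Phi_pos hk hz
  set A := Phi k x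
  set B := Phi k y
  set Z := Phi k (a*x+b*y)
  have hden : 0 < a * B + b * A := by positivity
  set τ := a * B / (a * B + b * A) with hτ
  have h1τ : 1 - τ = b * A / (a * B + b * A) := by
    rw [hτ]
    field_simp
    ring
  have hle : Z ≤ (τ^2/a) * A + ((1-τ)^2/b) * B := Phi_le hk hx hy ha' hb' hab
  have hcalc : (τ^2/a) * A + ((1-τ)^2/b) * B = A * B / (a * B + b * A) := by
    rw [hτ, h1τ]
    field_simp
  rw [hcalc] at hle
  have hinv : (A * B / (a * B + b * A))⁻¹ ≤ Z⁻¹ := inv_anti₀ hZ hle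
  have hinv2 : (A * B / (a * B + b * A))⁻¹ = a * A⁻¹ + b * B⁻¹ := by
    field_simp
  rw [hinv2] at hinv
  have hk2 : (0:ℝ) ≤ (k:ℝ)^2 := by positivity
  calc a * ((k:ℝ)^2 * A⁻¹) + b * ((k:ℝ)^2 * B⁻¹) = (k:ℝ)^2 * (a * A⁻¹ + b * B⁻¹) := by ring
    _ ≤ (k:ℝ)^2 * Z⁻¹ := mul_le_mul_of_nonneg_left hinv hk2

lemma f_eq (hk : 2 ≤ k) {w : ℝ} (hw : w ∈ Icc (0:ℝ) 1) :
    (if w = 1 / (k : ℝ) then 2 * ((k : ℝ) - 1)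
      else ((k : ℝ) * w - 1) ^ 2 / psi k w) = (k:ℝ)^2 * (Phi k w)⁻¹ := by
  have hkp := k_pos hk
  have hk1 := k_sub_one_pos hk
  have hk0 : (k:ℝ) ≠ 0 := ne_of_gt hkp
  have hk1' : (k:ℝ) - 1 ≠ 0 := ne_of_gt hk1
  by_cases hq : w = 1/(k:ℝ)
  · rw [if_pos hq, hq, Phi_at_q hk]
    rw [div_eq_mul_inv, mul_inv, inv_inv]
    field_simp
  · rw [if_neg hq]
    have hs : w - 1/(k:ℝ) ≠ 0 := sub_ne_zero.mpr hq
    have hPhi := Phi_pos hk hw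
    have hpsi : psi k w = Phi k w * (w - 1/(k:ℝ))^2 := (Phi_mul hk hw hq).symm
    have hnum : ((k:ℝ) * w - 1)^2 = (k:ℝ)^2 * (w - 1/(k:ℝ))^2 := by
      field_simp
    have hs2 : (w - 1/(k:ℝ))^2 ≠ 0 := pow_ne_zero _ hs
    rw [hpsi, hnum, mul_div_mul_right _ _ hs2, div_eq_mul_inv]

end main

/-- The function `x ↦ (kx−1)²/ψ(x)` (with value `2(k−1)` at `x = 1/k`) is concave on `[0,1]`. -/
theorem kx_sub_one_sq_div_psi_concave (k : ℕ) (hk : 2 ≤ k) :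
    ConcaveOn ℝ (Set.Icc (0 : ℝ) 1)
      (fun x => if x = 1 / (k : ℝ) then 2 * ((k : ℝ) - 1)
        else ((k : ℝ) * x - 1) ^ 2 / psi k x) := by
  constructor
  · exact convex_Icc 0 1
  · intro x hx y hy a b ha hb hab
    have hz : a • x + b • y ∈ Icc (0:ℝ) 1 := (convex_Icc (0:ℝ) 1) hx hy ha hb hab
    simp only [smul_eq_mul] at hz ⊢
    rw [f_eq hk hx, f_eq hk hy, f_eq hk hz]
    exact key_ineq hk hx hy ha hb hab
end

section
/- Let k ≥ 3 be an integer and λ ∈ [−1/(k−1), 0) ∪ (0, 1). Define s_λ : [0, log k] → ℝ by s_λ(ψ(x)) = ψ(λx + (1−λ)/k) for x ∈ [1/k, 1] (this is well-defined since ψ restricted to [1/k,1] is a strictly increasing bijection onto [0, log k]). Then s_λ is not concave near 0: there exists δ ∈ (0, log k) such that s_λ is strictly convex on (0, δ); in particular, for every ε > 0 the restriction of s_λ to [0, min(ε, log k)] is not concave. -/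
open scoped BigOperators

noncomputable def q1 (k : ℕ) (x : ℝ) : ℝ :=
  Real.log x - Real.log (1 - x) + Real.log ((k : ℝ) - 1)
noncomputable def q2 (x : ℝ) : ℝ := x⁻¹ + (1 - x)⁻¹
noncomputable def q3 (x : ℝ) : ℝ := -(x ^ 2)⁻¹ + ((1 - x) ^ 2)⁻¹
noncomputable def q4 (x : ℝ) : ℝ := 2 * (x ^ 3)⁻¹ + 2 * ((1 - x) ^ 3)⁻¹

lemma psi_eq (k : ℕ) (hk : 3 ≤ k) (x : ℝ) :
    psi k x = Real.log (k : ℝ) + x * Real.log x + (1 - x) * Real.log (1 - x)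
      - (1 - x) * Real.log ((k : ℝ) - 1) := by
  have hK : (3 : ℝ) ≤ (k : ℝ) := by exact_mod_cast hk
  have hk1 : ((k : ℝ) - 1) ≠ 0 := by linarith
  by_cases h : (1 : ℝ) - x = 0
  · rw [psi, h]; simp
  · rw [psi, Real.log_div h hk1]; ring

lemma psi_continuous (k : ℕ) (hk : 3 ≤ k) : Continuous (psi k) := by
  have h : psi k = fun x => Real.log (k : ℝ) + x * Real.log x + (1 - x) * Real.log (1 - x)
      - (1 - x) * Real.log ((k : ℝ) - 1) := funext (psi_eq k hk)
  rw [h]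
  have h1 : Continuous fun x : ℝ => x * Real.log x := Real.continuous_mul_log
  have h2 : Continuous fun x : ℝ => (1 - x) * Real.log (1 - x) :=
    Real.continuous_mul_log.comp (continuous_const.sub continuous_id)
  fun_prop

lemma hasDerivAt_psi (k : ℕ) (hk : 3 ≤ k) {x : ℝ} (hx0 : 0 < x) (hx1 : x < 1) :
    HasDerivAt (psi k) (q1 k x) x := by
  have h : psi k = fun x => Real.log (k : ℝ) + x * Real.log x + (1 - x) * Real.log (1 - x)
      - (1 - x) * Real.log ((k : ℝ) - 1) := funext (psi_eq k hk)
  rw [h]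
  have h1 : HasDerivAt (fun x : ℝ => x * Real.log x) (Real.log x + 1) x :=
    Real.hasDerivAt_mul_log hx0.ne'
  have hin : HasDerivAt (fun x : ℝ => 1 - x) (-1) x := (hasDerivAt_id x).const_sub 1
  have h2 : HasDerivAt (fun x : ℝ => (1 - x) * Real.log (1 - x))
      ((Real.log (1 - x) + 1) * (-1)) x :=
    (Real.hasDerivAt_mul_log (by linarith : (1 : ℝ) - x ≠ 0)).comp x hin
  have h3 : HasDerivAt (fun x : ℝ => (1 - x) * Real.log ((k : ℝ) - 1))
      (-1 * Real.log ((k : ℝ) - 1)) x := hin.mul_const _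
  have := (((hasDerivAt_const x (Real.log (k : ℝ))).add h1).add h2).sub h3
  refine this.congr_deriv ?_
  rw [q1]; ring

lemma hasDerivAt_q1 (k : ℕ) {x : ℝ} (hx0 : 0 < x) (hx1 : x < 1) :
    HasDerivAt (q1 k) (q2 x) x := by
  have hin : HasDerivAt (fun x : ℝ => 1 - x) (-1) x := (hasDerivAt_id x).const_sub 1
  have h1 : HasDerivAt Real.log x⁻¹ x := Real.hasDerivAt_log hx0.ne'
  have h2 : HasDerivAt (fun x : ℝ => Real.log (1 - x)) ((1 - x)⁻¹ * (-1)) x :=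
    (Real.hasDerivAt_log (by linarith : (1 : ℝ) - x ≠ 0)).comp x hin
  have := (h1.sub h2).add_const (Real.log ((k : ℝ) - 1))
  refine this.congr_deriv ?_
  rw [q2]; ring

lemma hasDerivAt_q2 {x : ℝ} (hx0 : 0 < x) (hx1 : x < 1) :
    HasDerivAt q2 (q3 x) x := by
  have hin : HasDerivAt (fun x : ℝ => 1 - x) (-1) x := (hasDerivAt_id x).const_sub 1
  have h1 : HasDerivAt (fun y : ℝ => y⁻¹) (-(x ^ 2)⁻¹) x := hasDerivAt_inv hx0.ne'
  have h2 : HasDerivAt (fun x : ℝ => (1 - x)⁻¹) (-((1 - x) ^ 2)⁻¹ * (-1)) x :=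
    (hasDerivAt_inv (by linarith : (1 : ℝ) - x ≠ 0)).comp x hin
  have := h1.add h2
  refine this.congr_deriv ?_
  rw [q3]; ring

lemma hasDerivAt_q3 {x : ℝ} (hx0 : 0 < x) (hx1 : x < 1) :
    HasDerivAt q3 (q4 x) x := by
  have hx1' : (0:ℝ) < 1 - x := by linarith
  have hin : HasDerivAt (fun x : ℝ => 1 - x) (-1) x := (hasDerivAt_id x).const_sub 1
  have h1 : HasDerivAt (fun y : ℝ => (y ^ 2)⁻¹) (-(2 * x ^ 1) / (x ^ 2) ^ 2) x :=
    (hasDerivAt_pow 2 x).inv (pow_ne_zero 2 hx0.ne')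
  have h2i := (hasDerivAt_pow 2 ((1:ℝ) - x)).comp x hin
  have h2 := h2i.inv (pow_ne_zero 2 hx1'.ne')
  have := h1.neg.add h2
  refine this.congr_deriv ?_
  rw [q4]
  push_cast
  simp only [Function.comp_apply]
  field_simp

lemma continuousAt_q4 {x : ℝ} (hx0 : 0 < x) (hx1 : x < 1) : ContinuousAt q4 x := by
  have hx1' : (0:ℝ) < 1 - x := by linarith
  have h1 : ContinuousAt (fun x : ℝ => 2 * (x ^ 3)⁻¹) x :=
    ((continuousAt_id.pow 3).inv₀ (pow_ne_zero 3 hx0.ne')).const_mul 2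
  have h2 : ContinuousAt (fun x : ℝ => 2 * ((1 - x) ^ 3)⁻¹) x :=
    (((continuousAt_const.sub continuousAt_id).pow 3).inv₀ (pow_ne_zero 3 hx1'.ne')).const_mul 2
  exact h1.add h2

lemma q1_pos (k : ℕ) (hk : 3 ≤ k) {x : ℝ} (hx : 1 / (k : ℝ) < x) (hx1 : x < 1) :
    0 < q1 k x := by
  have hK : (3 : ℝ) ≤ (k : ℝ) := by exact_mod_cast hk
  have hx0 : 0 < x := lt_trans (by positivity) hx
  have hxK : 1 < x * (k : ℝ) := by
    rw [div_lt_iff₀ (by linarith : (0:ℝ) < (k:ℝ))] at hx; linarith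
  have key : 1 - x < x * ((k : ℝ) - 1) := by nlinarith
  have := Real.log_lt_log (by linarith : (0:ℝ) < 1 - x) key
  rw [Real.log_mul hx0.ne' (by linarith : ((k : ℝ) - 1) ≠ 0)] at this
  rw [q1]; linarith

lemma q1_c (k : ℕ) (hk : 3 ≤ k) : q1 k (1 / (k : ℝ)) = 0 := by
  have hK : (3 : ℝ) ≤ (k : ℝ) := by exact_mod_cast hk
  have h : (1 : ℝ) - 1 / (k : ℝ) = ((k : ℝ) - 1) / (k : ℝ) := by
    field_simp
  rw [q1, h, Real.log_div (one_ne_zero) (by linarith : (k:ℝ) ≠ 0),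
    Real.log_div (by linarith : ((k:ℝ) - 1) ≠ 0) (by linarith : (k:ℝ) ≠ 0), Real.log_one]
  ring

lemma q2_pos {x : ℝ} (hx0 : 0 < x) (hx1 : x < 1) : 0 < q2 x := by
  rw [q2]
  have := inv_pos.mpr hx0
  have := inv_pos.mpr (by linarith : (0:ℝ) < 1 - x)
  linarith

lemma q3_c_neg (k : ℕ) (hk : 3 ≤ k) : q3 (1 / (k : ℝ)) < 0 := by
  have hK : (3 : ℝ) ≤ (k : ℝ) := by exact_mod_cast hk
  have h0 : (0:ℝ) < 1 / (k : ℝ) := by positivity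
  have h3 : 1 / (k : ℝ) ≤ 1 / 3 := by
    apply one_div_le_one_div_of_le <;> linarith
  have h1 : (0:ℝ) < (1 / (k:ℝ)) ^ 2 := by positivity
  have h2 : (1 / (k:ℝ)) ^ 2 < (1 - 1 / (k:ℝ)) ^ 2 := by nlinarith
  have := inv_strictAnti₀ h1 h2
  rw [q3]; linarith

lemma psi_c (k : ℕ) (hk : 3 ≤ k) : psi k (1 / (k : ℝ)) = 0 := by
  have hK : (3 : ℝ) ≤ (k : ℝ) := by exact_mod_cast hk
  have h1 : ((1:ℝ) - 1 / (k : ℝ)) / ((k : ℝ) - 1) = 1 / (k : ℝ) := by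
    rw [div_eq_div_iff (by linarith) (by linarith)]
    field_simp
  have h0 : (1 : ℝ) / (k : ℝ) ≠ 0 := by positivity
  rw [psi, h1, one_div, Real.log_inv]
  ring

lemma psi_one (k : ℕ) : psi k 1 = Real.log (k : ℝ) := by
  simp [psi]

set_option maxHeartbeats 1600000 in
/-- For `k ≥ 3` and `λ ∈ [−1/(k−1),0) ∪ (0,1)`, the function `s_λ` defined on `[0, log k]`
by `s_λ(ψ(x)) = ψ(λx + (1−λ)/k)` is not concave near `0`: it is strictly convex on some
interval `(0,δ)`, and for every `ε > 0` its restriction to `[0, min(ε, log k)]` is not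
concave. -/
theorem s_lambda_not_concave_near_zero (k : ℕ) (hk : 3 ≤ k)
    (lam : ℝ) (hlam1 : -(1 / ((k : ℝ) - 1)) ≤ lam) (hlam2 : lam < 1) (hlam0 : lam ≠ 0)
    (s : ℝ → ℝ)
    (hs : ∀ x ∈ Set.Icc (1 / (k : ℝ)) 1, s (psi k x) = psi k (lam * x + (1 - lam) / (k : ℝ))) :
    ∃ δ ∈ Set.Ioo (0 : ℝ) (Real.log (k : ℝ)),
      StrictConvexOn ℝ (Set.Ioo (0 : ℝ) δ) s ∧
      ∀ ε : ℝ, 0 < ε →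
        ¬ ConcaveOn ℝ (Set.Icc (0 : ℝ) (min ε (Real.log (k : ℝ)))) s := by
  classical
  have hK : (3 : ℝ) ≤ (k : ℝ) := by exact_mod_cast hk
  have hKne : (k : ℝ) ≠ 0 := by linarith
  set c : ℝ := 1 / (k : ℝ) with hc
  have hc0 : 0 < c := by rw [hc]; positivity
  have hc3 : c ≤ 1 / 3 := by
    rw [hc]; apply one_div_le_one_div_of_le <;> linarith
  have hc1 : c < 1 := by linarith
  have hq1c : q1 k c = 0 := q1_c k hk
  set L : ℝ := Real.log (k : ℝ) with hL
  have hL0 : 0 < L := Real.log_pos (by linarith)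
  have hpsic : psi k c = 0 := psi_c k hk
  have hpsi1 : psi k 1 = L := psi_one k
  clear_value c L
  have hcont : Continuous (psi k) := psi_continuous k hk
  have hpsiMono : StrictMonoOn (psi k) (Set.Icc c 1) := by
    apply strictMonoOn_of_deriv_pos (convex_Icc c 1) hcont.continuousOn
    intro x hx
    rw [interior_Icc] at hx
    rw [(hasDerivAt_psi k hk (lt_trans hc0 hx.1) hx.2).deriv]
    exact q1_pos k hk (hc ▸ hx.1) hx.2
  have hlamlb : -(1 : ℝ) / 2 ≤ lam := by
    have h1 : 1 / ((k : ℝ) - 1) ≤ 1 / 2 :=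
      one_div_le_one_div_of_le (by linarith) (by linarith)
    linarith
  set Tl : ℝ → ℝ := fun x => lam * x + (1 - lam) / (k : ℝ) with hTl
  have hTlc : Tl c = c := by
    show lam * c + (1 - lam) / (k : ℝ) = c
    rw [hc]; field_simp; ring
  have hTlsub : ∀ x, Tl x - c = lam * (x - c) := by
    intro x
    show lam * x + (1 - lam) / (k : ℝ) - c = lam * (x - c)
    rw [hc]; field_simp; ring
  have hTlcont : Continuous Tl := by rw [hTl]; fun_prop
  have hTd : ∀ x : ℝ, HasDerivAt Tl lam x := by
    intro x
    have := ((hasDerivAt_id x).const_mul lam).add_const ((1 - lam) / (k : ℝ))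
    rw [hTl]
    simpa using this
  clear_value Tl
  set N2 : ℝ → ℝ := fun x => lam ^ 4 * q4 (Tl x) * q1 k x + lam ^ 3 * q3 (Tl x) * q2 x
      - lam ^ 2 * q2 (Tl x) * q3 x - lam * q1 k (Tl x) * q4 x with hN2
  set N1 : ℝ → ℝ := fun x => lam ^ 3 * q3 (Tl x) * q1 k x - lam * q1 k (Tl x) * q3 x with hN1
  set N0 : ℝ → ℝ := fun x => lam ^ 2 * q2 (Tl x) * q1 k x - lam * q1 k (Tl x) * q2 x with hN0
  clear_value N2 N1 N0
  have hl2 : 0 < lam ^ 2 := pow_two_pos_of_ne_zero hlam0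
  have hN2c : 0 < N2 c := by
    have h2 := q2_pos hc0 hc1
    have h3 : q3 c < 0 := by rw [hc]; exact q3_c_neg k hk
    rw [hN2]; simp only
    rw [hTlc, hq1c]
    nlinarith [mul_pos (mul_pos hl2 h2) (mul_pos (neg_pos.mpr h3) (by linarith : (0:ℝ) < 1 - lam))]
  have hN2contc : ContinuousAt N2 c := by
    have cq1 : ContinuousAt (q1 k) c := (hasDerivAt_q1 k hc0 hc1).continuousAt
    have cq2 : ContinuousAt q2 c := (hasDerivAt_q2 hc0 hc1).continuousAt
    have cq3 : ContinuousAt q3 c := (hasDerivAt_q3 hc0 hc1).continuousAt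
    have cq4 : ContinuousAt q4 c := continuousAt_q4 hc0 hc1
    have cT : ContinuousAt Tl c := hTlcont.continuousAt
    have cq1' : ContinuousAt (q1 k) (Tl c) := by rw [hTlc]; exact cq1
    have cq2' : ContinuousAt q2 (Tl c) := by rw [hTlc]; exact cq2
    have cq3' : ContinuousAt q3 (Tl c) := by rw [hTlc]; exact cq3
    have cq4' : ContinuousAt q4 (Tl c) := by rw [hTlc]; exact cq4
    have e1 : ContinuousAt (fun x => q1 k (Tl x)) c := cq1'.comp cT
    have e2 : ContinuousAt (fun x => q2 (Tl x)) c := cq2'.comp cT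
    have e3 : ContinuousAt (fun x => q3 (Tl x)) c := cq3'.comp cT
    have e4 : ContinuousAt (fun x => q4 (Tl x)) c := cq4'.comp cT
    rw [hN2]
    exact ((((e4.const_mul _).mul cq1).add ((e3.const_mul _).mul cq2)).sub
      ((e2.const_mul _).mul cq3)).sub ((e1.const_mul _).mul cq4)
  obtain ⟨r, hr0, hball⟩ := Metric.mem_nhds_iff.mp (hN2contc (Ioi_mem_nhds hN2c))
  set x₀ : ℝ := c + min (r / 2) (c / 2) with hx₀
  clear_value x₀
  have hmin0 : 0 < min (r / 2) (c / 2) := lt_min (by linarith) (by linarith)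
  have hcx₀ : c < x₀ := by rw [hx₀]; linarith
  have hx₀2c : x₀ ≤ c + c / 2 := by
    rw [hx₀]; linarith [min_le_right (r / 2) (c / 2)]
  have hx₀1 : x₀ < 1 := by linarith
  have hN2pos : ∀ x ∈ Set.Icc c x₀, 0 < N2 x := by
    intro x hx
    have h1 : x ∈ Metric.ball c r := by
      rw [Metric.mem_ball, Real.dist_eq, abs_of_nonneg (by linarith [hx.1])]
      have h2 := hx.2
      rw [hx₀] at h2
      linarith [min_le_left (r / 2) (c / 2)]
    exact hball h1
  have hmapT : ∀ x ∈ Set.Icc c x₀, 0 < Tl x ∧ Tl x < 1 := by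
    intro x hx
    have h1 := hTlsub x
    have h2 : 0 ≤ x - c := by linarith [hx.1]
    have h3 : x - c ≤ c / 2 := by linarith [hx.2]
    constructor <;> nlinarith
  have hderivs : ∀ x ∈ Set.Icc c x₀, (0 < x ∧ x < 1) ∧ (0 < Tl x ∧ Tl x < 1) := by
    intro x hx
    exact ⟨⟨by linarith [hx.1], by linarith [hx.2]⟩, hmapT x hx⟩
  have hN1d : ∀ x ∈ Set.Icc c x₀, HasDerivAt N1 (N2 x) x := by
    intro x hx
    obtain ⟨⟨hx0', hx1'⟩, hT0, hT1⟩ := hderivs x hx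
    have hq1T : HasDerivAt (fun y => q1 k (Tl y)) (q2 (Tl x) * lam) x :=
      (hasDerivAt_q1 k hT0 hT1).comp x (hTd x)
    have hq3T : HasDerivAt (fun y => q3 (Tl y)) (q4 (Tl x) * lam) x :=
      (hasDerivAt_q3 hT0 hT1).comp x (hTd x)
    have h1 := (hq3T.const_mul (lam ^ 3)).mul (hasDerivAt_q1 k hx0' hx1')
    have h2 := (hq1T.const_mul lam).mul (hasDerivAt_q3 hx0' hx1')
    have h3 := h1.sub h2
    rw [hN1, hN2]
    refine h3.congr_deriv ?_
    ring
  have hN0d : ∀ x ∈ Set.Icc c x₀, HasDerivAt N0 (N1 x) x := by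
    intro x hx
    obtain ⟨⟨hx0', hx1'⟩, hT0, hT1⟩ := hderivs x hx
    have hq1T : HasDerivAt (fun y => q1 k (Tl y)) (q2 (Tl x) * lam) x :=
      (hasDerivAt_q1 k hT0 hT1).comp x (hTd x)
    have hq2T : HasDerivAt (fun y => q2 (Tl y)) (q3 (Tl x) * lam) x :=
      (hasDerivAt_q2 hT0 hT1).comp x (hTd x)
    have h1 := (hq2T.const_mul (lam ^ 2)).mul (hasDerivAt_q1 k hx0' hx1')
    have h2 := (hq1T.const_mul lam).mul (hasDerivAt_q2 hx0' hx1')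
    have h3 := h1.sub h2
    rw [hN0, hN1]
    refine h3.congr_deriv ?_
    ring
  have hN1c : N1 c = 0 := by rw [hN1]; simp only; rw [hTlc, hq1c]; ring
  have hN0c : N0 c = 0 := by rw [hN0]; simp only; rw [hTlc, hq1c]; ring
  have hN1mono : StrictMonoOn N1 (Set.Icc c x₀) := by
    apply strictMonoOn_of_deriv_pos (convex_Icc _ _)
      (fun x hx => (hN1d x hx).continuousAt.continuousWithinAt)
    intro x hx
    rw [interior_Icc] at hx
    have hx' : x ∈ Set.Icc c x₀ := ⟨hx.1.le, hx.2.le⟩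
    rw [(hN1d x hx').deriv]
    exact hN2pos x hx'
  have hN1pos : ∀ x ∈ Set.Ioc c x₀, 0 < N1 x := by
    intro x hx
    have := hN1mono ⟨le_refl c, hcx₀.le⟩ ⟨hx.1.le, hx.2⟩ hx.1
    rw [hN1c] at this
    exact this
  have hN0mono : StrictMonoOn N0 (Set.Icc c x₀) := by
    apply strictMonoOn_of_deriv_pos (convex_Icc _ _)
      (fun x hx => (hN0d x hx).continuousAt.continuousWithinAt)
    intro x hx
    rw [interior_Icc] at hx
    have hx' : x ∈ Set.Icc c x₀ := ⟨hx.1.le, hx.2.le⟩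
    rw [(hN0d x hx').deriv]
    exact hN1pos x ⟨hx.1, hx.2.le⟩
  have hN0pos : ∀ x ∈ Set.Ioc c x₀, 0 < N0 x := by
    intro x hx
    have := hN0mono ⟨le_refl c, hcx₀.le⟩ ⟨hx.1.le, hx.2⟩ hx.1
    rw [hN0c] at this
    exact this
  set φ : ℝ → ℝ := fun x => lam * q1 k (Tl x) / q1 k x with hφ
  clear_value φ
  have hq1posIoc : ∀ x ∈ Set.Ioc c x₀, 0 < q1 k x := by
    intro x hx
    exact q1_pos k hk (hc ▸ hx.1) (lt_of_le_of_lt hx.2 hx₀1)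
  have hφd : ∀ x ∈ Set.Ioo c x₀, HasDerivAt φ (N0 x / (q1 k x) ^ 2) x := by
    intro x hx
    have hx' : x ∈ Set.Icc c x₀ := ⟨hx.1.le, hx.2.le⟩
    obtain ⟨⟨hx0', hx1'⟩, hT0, hT1⟩ := hderivs x hx'
    have hne : q1 k x ≠ 0 := (hq1posIoc x ⟨hx.1, hx.2.le⟩).ne'
    have hq1T : HasDerivAt (fun y => lam * q1 k (Tl y)) (lam * (q2 (Tl x) * lam)) x :=
      ((hasDerivAt_q1 k hT0 hT1).comp x (hTd x)).const_mul lam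
    have h1 := hq1T.div (hasDerivAt_q1 k hx0' hx1') hne
    rw [hφ, hN0]
    refine h1.congr_deriv ?_
    simp only
    ring
  have hφmono : StrictMonoOn φ (Set.Ioo c x₀) := by
    apply strictMonoOn_of_deriv_pos (convex_Ioo _ _)
      (fun x hx => (hφd x hx).continuousAt.continuousWithinAt)
    intro x hx
    rw [interior_Ioo] at hx
    rw [(hφd x hx).deriv]
    exact div_pos (hN0pos x ⟨hx.1, hx.2.le⟩) (pow_pos (hq1posIoc x ⟨hx.1, hx.2.le⟩) 2)
  set δ : ℝ := psi k x₀ with hδdef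
  clear_value δ
  have hx₀Icc : x₀ ∈ Set.Icc c 1 := ⟨hcx₀.le, hx₀1.le⟩
  have hcIcc : c ∈ Set.Icc c 1 := ⟨le_refl c, hc1.le⟩
  have h1Icc : (1 : ℝ) ∈ Set.Icc c 1 := ⟨hc1.le, le_refl 1⟩
  have hδ0 : 0 < δ := by
    have := hpsiMono hcIcc hx₀Icc hcx₀
    rw [hpsic] at this
    rw [hδdef]
    exact this
  have hδL : δ < L := by
    have := hpsiMono hx₀Icc h1Icc hx₀1
    rw [hpsi1] at this
    rw [hδdef]
    exact this
  have hsurj : ∀ u ∈ Set.Icc (0 : ℝ) L, ∃ x, x ∈ Set.Icc c 1 ∧ psi k x = u := by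
    intro u hu
    have h1 := intermediate_value_Icc hc1.le hcont.continuousOn
    rw [hpsic, hpsi1] at h1
    obtain ⟨x, hx, hxe⟩ := h1 hu
    exact ⟨x, hx, hxe⟩
  set g : ℝ → ℝ := fun u =>
    if h : ∃ x, x ∈ Set.Icc c 1 ∧ psi k x = u then h.choose else c with hgdef
  clear_value g
  have hg : ∀ u ∈ Set.Icc (0 : ℝ) L, g u ∈ Set.Icc c 1 ∧ psi k (g u) = u := by
    intro u hu
    have hex := hsurj u hu
    rw [hgdef]
    simp only [dif_pos hex]
    exact hex.choose_spec
  have hinj := hpsiMono.injOn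
  have hglt : ∀ u ∈ Set.Icc (0 : ℝ) L, ∀ v ∈ Set.Icc (0 : ℝ) L, u < v → g u < g v := by
    intro u hu v hv huv
    by_contra hle
    push_neg at hle
    have h1 := hg u hu
    have h2 := hg v hv
    have h3 : psi k (g v) ≤ psi k (g u) := by
      rcases eq_or_lt_of_le hle with he | hlt
      · rw [he]
      · exact (hpsiMono h2.1 h1.1 hlt).le
    rw [h1.2, h2.2] at h3
    linarith
  have hg0 : g 0 = c := by
    have h1 := hg 0 ⟨le_refl 0, hL0.le⟩
    exact hinj h1.1 hcIcc (by rw [h1.2, hpsic])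
  have hδIcc : δ ∈ Set.Icc (0 : ℝ) L := ⟨hδ0.le, hδL.le⟩
  have hgδ : g δ = x₀ := by
    have h1 := hg δ hδIcc
    exact hinj h1.1 hx₀Icc (by rw [h1.2, hδdef])
  have hIooL : Set.Ioo (0 : ℝ) δ ⊆ Set.Icc 0 L := fun u hu => ⟨hu.1.le, le_trans hu.2.le hδL.le⟩
  have hgmaps : ∀ u ∈ Set.Ioo (0 : ℝ) δ, g u ∈ Set.Ioo c x₀ := by
    intro u hu
    constructor
    · rw [← hg0]; exact hglt 0 ⟨le_refl 0, hL0.le⟩ u (hIooL hu) hu.1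
    · rw [← hgδ]; exact hglt u (hIooL hu) δ hδIcc hu.2
  have hgcont : ∀ u ∈ Set.Ioo (0 : ℝ) L, ContinuousAt g u := by
    intro u hu
    have huIcc : u ∈ Set.Icc (0 : ℝ) L := ⟨hu.1.le, hu.2.le⟩
    have hgu := hg u huIcc
    have hxc : c < g u := by
      rcases eq_or_lt_of_le hgu.1.1 with he | h
      · exfalso
        have h2 := hgu.2
        rw [← he, hpsic] at h2
        linarith [hu.1]
      · exact h
    have hx1 : g u < 1 := by
      rcases eq_or_lt_of_le hgu.1.2 with he | h
      · exfalso
        have h2 := hgu.2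
        rw [he, hpsi1] at h2
        linarith [hu.2]
      · exact h
    rw [Metric.continuousAt_iff]
    intro ε hε
    set ε' : ℝ := min ε (min (g u - c) (1 - g u)) / 2 with hε'
    have hε'0 : 0 < ε' := by
      rw [hε']
      apply div_pos (lt_min hε (lt_min (by linarith) (by linarith))) (by norm_num)
    have hε'ε : ε' < ε := by
      rw [hε']
      have := min_le_left ε (min (g u - c) (1 - g u))
      linarith
    have hεA : 2 * ε' ≤ g u - c := by
      rw [hε']
      have h1 := min_le_right ε (min (g u - c) (1 - g u))
      have h2 := min_le_left (g u - c) (1 - g u)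
      linarith
    have hεB : 2 * ε' ≤ 1 - g u := by
      rw [hε']
      have h1 := min_le_right ε (min (g u - c) (1 - g u))
      have h2 := min_le_right (g u - c) (1 - g u)
      linarith
    clear_value ε'
    have hale : c ≤ g u - ε' := by linarith
    have hble : g u + ε' ≤ 1 := by linarith
    have haI : g u - ε' ∈ Set.Icc c 1 := ⟨hale, by linarith⟩
    have hbI : g u + ε' ∈ Set.Icc c 1 := ⟨by linarith [hgu.1.1], hble⟩
    have hpa : psi k (g u - ε') < u := by
      have := hpsiMono haI hgu.1 (by linarith)
      rw [hgu.2] at this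
      exact this
    have hpb : u < psi k (g u + ε') := by
      have := hpsiMono hgu.1 hbI (by linarith)
      rw [hgu.2] at this
      exact this
    refine ⟨min (u - psi k (g u - ε')) (psi k (g u + ε') - u),
      lt_min (by linarith) (by linarith), ?_⟩
    intro v hv
    rw [Real.dist_eq] at hv ⊢
    rw [abs_lt] at hv
    have hm1 := min_le_left (u - psi k (g u - ε')) (psi k (g u + ε') - u)
    have hm2 := min_le_right (u - psi k (g u - ε')) (psi k (g u + ε') - u)
    have hv1 : psi k (g u - ε') < v := by linarith [hv.1]
    have hv2 : v < psi k (g u + ε') := by linarith [hv.2]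
    have hvIcc : v ∈ Set.Icc (0 : ℝ) L := by
      constructor
      · have h4 := hpsiMono.monotoneOn hcIcc haI hale
        rw [hpsic] at h4
        linarith
      · have h4 := hpsiMono.monotoneOn hbI h1Icc hble
        rw [hpsi1] at h4
        linarith
    have hgv := hg v hvIcc
    have hlow : g u - ε' < g v := by
      by_contra hle
      push_neg at hle
      have h4 := hpsiMono.monotoneOn hgv.1 haI hle
      rw [hgv.2] at h4
      linarith
    have hhigh : g v < g u + ε' := by
      by_contra hle
      push_neg at hle
      have h4 := hpsiMono.monotoneOn hbI hgv.1 hle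
      rw [hgv.2] at h4
      linarith
    rw [abs_lt]
    constructor <;> linarith
  have hIooOpen : IsOpen (Set.Ioo (0 : ℝ) L) := isOpen_Ioo
  have hginv : ∀ u ∈ Set.Ioo (0 : ℝ) L, psi k (g u) = u := fun u hu =>
    (hg u ⟨hu.1.le, hu.2.le⟩).2
  have hseq : ∀ u ∈ Set.Ioo (0 : ℝ) L, s u = psi k (Tl (g u)) := by
    intro u hu
    have h1 := hg u ⟨hu.1.le, hu.2.le⟩
    have h2 := hs (g u) h1.1
    rw [h1.2] at h2
    rw [h2, hTl]
  have hsd : ∀ u ∈ Set.Ioo (0 : ℝ) δ, HasDerivAt s (φ (g u)) u := by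
    intro u hu
    have huL : u ∈ Set.Ioo (0 : ℝ) L := ⟨hu.1, lt_trans hu.2 hδL⟩
    have hgu := hgmaps u hu
    have hguIcc : g u ∈ Set.Icc c x₀ := ⟨hgu.1.le, hgu.2.le⟩
    obtain ⟨⟨hx0', hx1'⟩, hT0, hT1⟩ := hderivs (g u) hguIcc
    have hq1ne : q1 k (g u) ≠ 0 := (hq1posIoc (g u) ⟨hgu.1, hgu.2.le⟩).ne'
    have hpsid : HasDerivAt (psi k) (q1 k (g u)) (g u) := hasDerivAt_psi k hk hx0' hx1'
    have hgd : HasDerivAt g (q1 k (g u))⁻¹ u := by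
      apply HasDerivAt.of_local_left_inverse (hgcont u huL) hpsid hq1ne
      filter_upwards [hIooOpen.mem_nhds huL] with y hy
      exact hginv y hy
    have hTgd : HasDerivAt (fun y => Tl (g y)) (lam * (q1 k (g u))⁻¹) u :=
      (hTd (g u)).comp u hgd
    have hcomp : HasDerivAt (fun y => psi k (Tl (g y)))
        (q1 k (Tl (g u)) * (lam * (q1 k (g u))⁻¹)) u :=
      by exact (hasDerivAt_psi k hk hT0 hT1).comp u hTgd
    have heq : s =ᶠ[nhds u] fun y => psi k (Tl (g y)) := by
      filter_upwards [hIooOpen.mem_nhds huL] with y hy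
      exact hseq y hy
    have h5 := hcomp.congr_of_eventuallyEq heq
    rw [hφ]
    refine h5.congr_deriv ?_
    simp only
    rw [div_eq_mul_inv]
    ring
  have hconv : StrictConvexOn ℝ (Set.Ioo (0 : ℝ) δ) s := by
    apply StrictMonoOn.strictConvexOn_of_deriv (convex_Ioo _ _)
      (fun u hu => (hsd u hu).continuousAt.continuousWithinAt)
    rw [interior_Ioo]
    intro u hu v hv huv
    rw [(hsd u hu).deriv, (hsd v hv).deriv]
    exact hφmono (hgmaps u hu) (hgmaps v hv)
      (hglt u (hIooL hu) v (hIooL hv) huv)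
  refine ⟨δ, ⟨hδ0, hδL⟩, hconv, ?_⟩
  intro ε hε hconc
  set m : ℝ := min ε L with hm
  have hm0 : 0 < m := by rw [hm]; exact lt_min hε hL0
  clear_value m
  set r' : ℝ := min m δ with hr'
  have hr'0 : 0 < r' := by rw [hr']; exact lt_min hm0 hδ0
  have hrδ : r' ≤ δ := by rw [hr']; exact min_le_right m δ
  have hrm : r' ≤ m := by rw [hr']; exact min_le_left m δ
  clear_value r'
  have ha : r' / 4 ∈ Set.Ioo (0 : ℝ) δ := ⟨by linarith, by linarith⟩
  have hb : 3 * r' / 4 ∈ Set.Ioo (0 : ℝ) δ := ⟨by linarith, by linarith⟩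
  have ha' : r' / 4 ∈ Set.Icc (0 : ℝ) m := ⟨by linarith, by linarith⟩
  have hb' : 3 * r' / 4 ∈ Set.Icc (0 : ℝ) m := ⟨by linarith, by linarith⟩
  have hne : r' / 4 ≠ 3 * r' / 4 := by intro h; nlinarith
  have h1 := hconv.2 ha hb hne (by norm_num : (0:ℝ) < 1/2) (by norm_num : (0:ℝ) < 1/2)
    (by norm_num)
  have h2 := hconc.2 ha' hb' (by norm_num : (0:ℝ) ≤ 1/2) (by norm_num : (0:ℝ) ≤ 1/2)
    (by norm_num)
  simp only [smul_eq_mul] at h1 h2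
  linarith
end
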